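/- arXiv:2509.15000 — 8 statements merged into one kernel-verified Lean document; each statement's English description precedes it below -/
import Mathlib

section
/- Let G be a locally finite simple graph. Then G is locally 3-edge-connected (i.e., for every edge {x,y} of G there exist three pairwise edge-disjoint paths from x to y in G) if and only if each of its connected components is 3-edge-connected (i.e., for all vertices u, v with v reachable from u in G and for every pair of edges e, f of G, the vertex v is still reachable from u in the graph obtained from G by deleting the edges e and f). -/
open SimpleGraph

namespace Stmt0Aux

variable {V : Type*}

open SimpleGraph.Walk

lemma end_not_mem_takeUntil [DecidableEq V] {H : SimpleGraph V} {u w v : V}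
    (P : H.Walk u w) (hP : P.IsPath) (hv : v ∈ P.support) (hvw : v ≠ w) :
    w ∉ (P.takeUntil v hv).support := by
  intro hw
  have hnodup := hP.support_nodup
  rw [← P.take_spec hv, Walk.support_append] at hnodup
  exact (List.disjoint_of_nodup_append hnodup) hw
    (Walk.end_mem_tail_support_of_ne hvw _)

lemma exists_prefix (H : SimpleGraph V) (S : Set V) :
    ∀ {a u : V} (R : H.Walk a u), u ∈ S →
      ∃ z : V, z ∈ S ∧ ∃ R₁ : H.Walk a z,
        (∀ g ∈ R₁.edges, g ∈ R.edges) ∧ ∀ x ∈ R₁.support, x ≠ z → x ∉ S := by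
  intro a u R
  induction R with
  | nil =>
    intro hu
    exact ⟨_, hu, Walk.nil, by simp, by simp +contextual⟩
  | @cons a b u h q ih =>
    intro hu
    by_cases ha : a ∈ S
    · exact ⟨a, ha, Walk.nil, by simp, by simp +contextual⟩
    · obtain ⟨z, hz, R₁, hRe, hRs⟩ := ih hu
      refine ⟨z, hz, Walk.cons h R₁, ?_, ?_⟩
      · intro g hg
        rw [Walk.edges_cons, List.mem_cons] at hg ⊢
        exact hg.imp id (fun h' => hRe g h')
      · intro x hx hxz
        rw [Walk.support_cons, List.mem_cons] at hx
        rcases hx with rfl | hx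
        · exact ha
        · exact hRs x hx hxz

lemma combine [DecidableEq V] {H : SimpleGraph V} {u w v z : V}
    (P₁ P₂ : H.Walk u w) (hd : List.Disjoint P₁.edges P₂.edges)
    (hadj : H.Adj w v) (hv1 : v ∉ P₁.support)
    (hz : z ∈ P₁.support) (R₁ : H.Walk v z)
    (hR : ∀ x ∈ R₁.support, x ≠ z → x ∉ P₁.support ∧ x ∉ P₂.support)
    (hRe : s(w, v) ∉ R₁.edges) :
    ∃ A B : H.Walk u v, List.Disjoint A.edges B.edges := by
  refine ⟨(P₁.takeUntil z hz).append R₁.reverse, P₂.concat hadj, ?_⟩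
  intro g hgA hgB
  rw [Walk.edges_append, List.mem_append] at hgA
  rw [Walk.edges_concat, List.concat_eq_append, List.mem_append,
    List.mem_singleton] at hgB
  rcases hgA with hgA | hgA
  · have hgP1 : g ∈ P₁.edges := P₁.edges_takeUntil_subset hz hgA
    rcases hgB with hgB | hgB
    · exact hd hgP1 hgB
    · subst hgB
      have hv' : v ∈ (P₁.takeUntil z hz).support :=
        Walk.snd_mem_support_of_mem_edges _ hgA
      exact hv1 (P₁.support_takeUntil_subset hz hv')
  · rw [Walk.edges_reverse, List.mem_reverse] at hgA
    rcases hgB with hgB | hgB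
    · revert hgA hgB
      induction g using Sym2.ind with
      | _ a b =>
        intro hgA hgB
        have ha' : a ∈ R₁.support := Walk.fst_mem_support_of_mem_edges _ hgA
        have hb' : b ∈ R₁.support := Walk.snd_mem_support_of_mem_edges _ hgA
        have haP : a ∈ P₂.support := Walk.fst_mem_support_of_mem_edges _ hgB
        have hbP : b ∈ P₂.support := Walk.snd_mem_support_of_mem_edges _ hgB
        have hab : a ≠ b := (R₁.adj_of_mem_edges hgA).ne
        have haz : a = z := by
          by_contra hne; exact (hR a ha' hne).2 haP
        have hbz : b = z := by
          by_contra hne; exact (hR b hb' hne).2 hbP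
        exact hab (haz.trans hbz.symm)
    · exact hRe (hgB ▸ hgA)

lemma case_mem [DecidableEq V] {H : SimpleGraph V} {u w v : V}
    (P₁ P₂ : H.Walk u w) (h1 : P₁.IsPath)
    (hd : List.Disjoint P₁.edges P₂.edges)
    (hadj : H.Adj w v) (hv1 : v ∈ P₁.support) :
    ∃ A B : H.Walk u v, List.Disjoint A.edges B.edges := by
  refine ⟨P₁.takeUntil v hv1, P₂.concat hadj, ?_⟩
  intro g hgA hgB
  have hgP1 : g ∈ P₁.edges := P₁.edges_takeUntil_subset hv1 hgA
  rw [Walk.edges_concat, List.concat_eq_append, List.mem_append,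
    List.mem_singleton] at hgB
  rcases hgB with hgB | hgB
  · exact hd hgP1 hgB
  · subst hgB
    have hw : w ∈ (P₁.takeUntil v hv1).support :=
      Walk.fst_mem_support_of_mem_edges _ hgA
    exact end_not_mem_takeUntil P₁ h1 hv1 hadj.ne' hw

lemma two_paths [DecidableEq V] {H : SimpleGraph V} :
    ∀ n {u v : V}, H.dist u v = n → H.Reachable u v →
      (∀ f ∈ H.edgeSet, (H.deleteEdges {f}).Reachable u v) →
      ∃ A B : H.Walk u v, A.IsPath ∧ B.IsPath ∧ List.Disjoint A.edges B.edges := by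
  intro n
  induction n using Nat.strong_induction_on with
  | _ n ih =>
  intro u v hdist hre hyp
  match n, hdist with
  | 0, hdist =>
    have huv : u = v := (hre.dist_eq_zero_iff).mp hdist
    subst huv
    exact ⟨Walk.nil, Walk.nil, Walk.IsPath.nil, Walk.IsPath.nil, by simp⟩
  | (n+1), hdist =>
    obtain ⟨p, hp, hplen⟩ := hre.exists_path_of_dist
    rw [hdist] at hplen
    have hprnil : ¬ p.reverse.Nil := by
      rw [Walk.not_nil_iff_lt_length, Walk.length_reverse, hplen]
      exact Nat.succ_pos n
    obtain ⟨w, hvw, q, hq⟩ := Walk.not_nil_iff.mp hprnil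
    have hqpath : q.IsPath ∧ v ∉ q.support := by
      have := hp.reverse
      rw [hq, Walk.cons_isPath_iff] at this
      exact this
    have hqlen : q.length = n := by
      have : p.reverse.length = n + 1 := by rw [Walk.length_reverse, hplen]
      rw [hq] at this
      simpa using this
    set Q0 : H.Walk u w := q.reverse with hQ0
    have hadj : H.Adj w v := hvw.symm
    have hedge : s(w, v) ∉ Q0.edges := by
      intro hmem
      rw [hQ0, Walk.edges_reverse, List.mem_reverse] at hmem
      exact hqpath.2 (Walk.snd_mem_support_of_mem_edges _ hmem)
    have hdw : H.dist u w ≤ n := by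
      have := H.dist_le Q0
      rwa [hQ0, Walk.length_reverse, hqlen] at this
    have hyp' : ∀ f ∈ H.edgeSet, (H.deleteEdges {f}).Reachable u w := by
      intro f hf
      by_cases hfe : f = s(w, v)
      · subst hfe
        refine (Q0.transfer (H.deleteEdges {s(w, v)}) ?_).reachable
        intro e he
        rw [edgeSet_deleteEdges]
        exact ⟨Q0.edges_subset_edgeSet he, by
          simp only [Set.mem_singleton_iff]
          rintro rfl; exact hedge he⟩
      · refine (hyp f hf).trans (Adj.reachable ?_)
        rw [deleteEdges_adj]
        refine ⟨hvw, ?_⟩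
        simp only [Set.mem_singleton_iff]
        intro hc
        exact hfe (by rw [← hc, Sym2.eq_swap])
    obtain ⟨P₁, P₂, hP1, hP2, hdisj⟩ :=
      ih (H.dist u w) (Nat.lt_succ_of_le hdw) rfl Q0.reachable hyp'
    have step : ∃ A B : H.Walk u v, List.Disjoint A.edges B.edges := by
      by_cases hv1 : v ∈ P₁.support
      · exact case_mem P₁ P₂ hP1 hdisj hadj hv1
      by_cases hv2 : v ∈ P₂.support
      · obtain ⟨A, B, hAB⟩ := case_mem P₂ P₁ hP2 (List.Disjoint.symm hdisj) hadj hv2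
        exact ⟨B, A, List.Disjoint.symm hAB⟩
      · have hfse : s(w, v) ∈ H.edgeSet := (H.mem_edgeSet).mpr hadj
        obtain ⟨W⟩ := hyp s(w, v) hfse
        have hWsub : ∀ e ∈ W.edges, e ∈ H.edgeSet := by
          intro e he
          have := W.edges_subset_edgeSet he
          rw [edgeSet_deleteEdges] at this
          exact this.1
        set Q : H.Walk u v := W.transfer H hWsub with hQdef
        have hQe : s(w, v) ∉ Q.edges := by
          rw [hQdef, Walk.edges_transfer]
          intro hmem
          have := W.edges_subset_edgeSet hmem
          rw [edgeSet_deleteEdges] at this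
          exact this.2 rfl
        obtain ⟨z, hzS, R₁, hR1e, hR1s⟩ :=
          exists_prefix H {x | x ∈ P₁.support ∨ x ∈ P₂.support} Q.reverse
            (Or.inl P₁.start_mem_support)
        have hR1ne : s(w, v) ∉ R₁.edges := by
          intro hmem
          have := hR1e _ hmem
          rw [Walk.edges_reverse, List.mem_reverse] at this
          exact hQe this
        rcases hzS with hz | hz
        · exact combine P₁ P₂ hdisj hadj hv1 hz R₁
            (fun x hx hxz => by
              have := hR1s x hx hxz
              exact ⟨fun hc => this (Or.inl hc), fun hc => this (Or.inr hc)⟩) hR1ne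
        · obtain ⟨A, B, hAB⟩ := combine P₂ P₁ (List.Disjoint.symm hdisj) hadj hv2 hz R₁
            (fun x hx hxz => by
              have := hR1s x hx hxz
              exact ⟨fun hc => this (Or.inr hc), fun hc => this (Or.inl hc)⟩) hR1ne
          exact ⟨A, B, hAB⟩
    obtain ⟨A, B, hAB⟩ := step
    exact ⟨A.bypass, B.bypass, A.bypass_isPath, B.bypass_isPath,
      fun g hg1 hg2 => hAB (A.edges_bypass_subset hg1) (B.edges_bypass_subset hg2)⟩

end Stmt0Aux

/-- A locally finite simple graph is locally 3-edge-connected (every edge's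
endpoints are joined by three pairwise edge-disjoint paths) iff each of its connected
components is 3-edge-connected (reachability survives deletion of any two edges). -/
theorem stmt0 {V : Type*} (G : SimpleGraph V)
    (hlf : ∀ v : V, (G.neighborSet v).Finite) :
    (∀ x y : V, G.Adj x y →
      ∃ p₁ p₂ p₃ : G.Walk x y, p₁.IsPath ∧ p₂.IsPath ∧ p₃.IsPath ∧
        List.Disjoint p₁.edges p₂.edges ∧ List.Disjoint p₁.edges p₃.edges ∧
        List.Disjoint p₂.edges p₃.edges) ↔
    (∀ u v : V, G.Reachable u v → ∀ e ∈ G.edgeSet, ∀ f ∈ G.edgeSet,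
      (G.deleteEdges {e, f}).Reachable u v) := by
  classical
  constructor
  · intro h3 u v hre e _ f _
    obtain ⟨p⟩ := hre
    induction p with
    | nil => exact Reachable.refl _
    | @cons a b c h q ih =>
      refine Reachable.trans ?_ ih
      obtain ⟨p₁, p₂, p₃, _, _, _, d12, d13, d23⟩ := h3 _ _ h
      have key : ∃ P : G.Walk a b, e ∉ P.edges ∧ f ∉ P.edges := by
        by_cases h1 : e ∈ p₁.edges ∨ f ∈ p₁.edges
        · by_cases h2 : e ∈ p₂.edges ∨ f ∈ p₂.edges
          · refine ⟨p₃, ?_, ?_⟩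
            · intro he3
              rcases h1 with h1 | h1
              · exact d13 h1 he3
              · rcases h2 with h2 | h2
                · exact d23 h2 he3
                · exact d12 h1 h2
            · intro hf3
              rcases h1 with h1 | h1
              · rcases h2 with h2 | h2
                · exact d12 h1 h2
                · exact d23 h2 hf3
              · exact d13 h1 hf3
          · exact ⟨p₂, fun hc => h2 (Or.inl hc), fun hc => h2 (Or.inr hc)⟩
        · exact ⟨p₁, fun hc => h1 (Or.inl hc), fun hc => h1 (Or.inr hc)⟩
      obtain ⟨P, heP, hfP⟩ := key
      refine (P.transfer (G.deleteEdges {e, f}) ?_).reachable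
      intro g hg
      rw [edgeSet_deleteEdges]
      refine ⟨P.edges_subset_edgeSet hg, ?_⟩
      intro hc
      rcases hc with rfl | hc
      · exact heP hg
      · rw [Set.mem_singleton_iff] at hc
        subst hc
        exact hfP hg
  · intro h x y hxy
    set G' := G.deleteEdges {s(x, y)} with hG'
    have hre' : G'.Reachable x y := by
      have := h x y hxy.reachable s(x, y) ((G.mem_edgeSet).mpr hxy) s(x, y)
        ((G.mem_edgeSet).mpr hxy)
      rwa [Set.pair_eq_singleton] at this
    have hyp' : ∀ f ∈ G'.edgeSet, (G'.deleteEdges {f}).Reachable x y := by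
      intro f hf
      have hfG : f ∈ G.edgeSet := by
        rw [hG', edgeSet_deleteEdges] at hf
        exact hf.1
      have hmain := h x y hxy.reachable s(x, y) ((G.mem_edgeSet).mpr hxy) f hfG
      have heq : G'.deleteEdges {f} = G.deleteEdges {s(x, y), f} := by
        rw [hG', deleteEdges_deleteEdges, Set.insert_eq]
      rwa [heq]
    obtain ⟨A, B, hA, hB, hAB⟩ :=
      Stmt0Aux.two_paths (H := G') (G'.dist x y) rfl hre' hyp'
    have hsub : ∀ (W : G'.Walk x y), ∀ e ∈ W.edges, e ∈ G.edgeSet := by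
      intro W e he
      have := W.edges_subset_edgeSet he
      rw [hG', edgeSet_deleteEdges] at this
      exact this.1
    have hnotmem : ∀ (W : G'.Walk x y), s(x, y) ∉ W.edges := by
      intro W hmem
      have := W.edges_subset_edgeSet hmem
      rw [hG', edgeSet_deleteEdges] at this
      exact this.2 rfl
    refine ⟨Walk.cons hxy Walk.nil, A.transfer G (hsub A), B.transfer G (hsub B),
      ?_, hA.transfer _, hB.transfer _, ?_, ?_, ?_⟩
    · refine Walk.IsPath.nil.cons ?_
      simp [hxy.ne]
    · intro g hg1 hg2
      simp only [Walk.edges_cons, Walk.edges_nil, List.mem_singleton] at hg1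
      subst hg1
      rw [Walk.edges_transfer] at hg2
      exact hnotmem A hg2
    · intro g hg1 hg2
      simp only [Walk.edges_cons, Walk.edges_nil, List.mem_singleton] at hg1
      subst hg1
      rw [Walk.edges_transfer] at hg2
      exact hnotmem B hg2
    · intro g hg1 hg2
      rw [Walk.edges_transfer] at hg1 hg2
      exact hAB hg1 hg2
end

section
/- Let G be an infinite, connected, locally finite simple graph with exactly one end. Let ~ be an equivalence relation on the vertex set of G such that every equivalence class is finite and induces a connected subgraph of G. Let Q be a set of edges of G such that every edge in Q joins two ~-equivalent vertices, and such that every equivalence class still induces a connected subgraph of the graph G \ Q obtained from G by deleting the edges in Q. Then G \ Q is connected and has exactly one end. -/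
open SimpleGraph

/-- Deleting edges of a one-ended, infinite, connected, locally finite graph
that join equivalent vertices of a finite-class equivalence relation whose classes induce
connected subgraphs (and stay connected after the deletion) preserves connectivity and
one-endedness. -/
theorem stmt1 {V : Type*} [Infinite V] (G : SimpleGraph V)
    (hconn : G.Connected) (hlf : ∀ v : V, (G.neighborSet v).Finite)
    (hend : G.end.Nonempty ∧ G.end.Subsingleton)
    (s : Setoid V)
    (hfin : ∀ x : V, {y | s.r x y}.Finite)
    (hclass : ∀ x : V, (G.induce {y | s.r x y}).Connected)
    (Q : Set (Sym2 V)) (hQ : Q ⊆ G.edgeSet)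
    (hQrel : ∀ x y : V, s(x, y) ∈ Q → s.r x y)
    (hclass' : ∀ x : V, ((G.deleteEdges Q).induce {y | s.r x y}).Connected) :
    (G.deleteEdges Q).Connected ∧
      (G.deleteEdges Q).end.Nonempty ∧ (G.deleteEdges Q).end.Subsingleton := by
  classical
  have hle : G.deleteEdges Q ≤ G := G.deleteEdges_le Q
  -- equivalent vertices are reachable in the deleted graph
  have reach_class : ∀ a b : V, s.r a b → (G.deleteEdges Q).Reachable a b := by
    intro a b hab
    have h := (hclass' a).preconnected ⟨a, s.iseqv.refl a⟩ ⟨b, hab⟩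
    exact h.map ⟨Subtype.val, fun h => h⟩
  have step : ∀ ⦃a b : V⦄, G.Adj a b → (G.deleteEdges Q).Reachable a b := by
    intro a b hab
    by_cases hq : s(a, b) ∈ Q
    · exact reach_class a b (hQrel a b hq)
    · exact (deleteEdges_adj.mpr ⟨hab, hq⟩).reachable
  have hpc : (G.deleteEdges Q).Preconnected := by
    intro u v
    obtain ⟨w⟩ := hconn.preconnected u v
    induction w with
    | nil => exact Reachable.refl _
    | cons h p ih => exact (step h).trans ih
  haveI := hconn.nonempty
  have hconn' : (G.deleteEdges Q).Connected := ⟨hpc⟩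
  haveI : LocallyFinite (G.deleteEdges Q) :=
    fun v => ((hlf v).subset (fun w hw => hle hw)).fintype
  haveI : Fact (G.deleteEdges Q).Preconnected := ⟨hpc⟩
  haveI : ∀ K : (Finset V)ᵒᵖ, Finite ((G.deleteEdges Q).componentComplFunctor.obj K) :=
    fun K => (G.deleteEdges Q).componentCompl_finite K.unop
  haveI : ∀ K : (Finset V)ᵒᵖ, Nonempty ((G.deleteEdges Q).componentComplFunctor.obj K) :=
    fun K => (G.deleteEdges Q).componentCompl_nonempty_of_infinite K.unop
  have hne : (G.deleteEdges Q).end.Nonempty :=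
    nonempty_sections_of_finite_inverse_system (G.deleteEdges Q).componentComplFunctor
  refine ⟨hconn', hne, ?_⟩
  -- the map on components induced by the inclusion deleteEdges Q ≤ G
  let φ : ∀ K : Finset V,
      (G.deleteEdges Q).ComponentCompl (K : Set V) → G.ComponentCompl (K : Set V) :=
    fun K => ConnectedComponent.map
      (induceHom (Hom.ofLE hle) (fun x hx => hx))
  have φ_mk : ∀ (K : Finset V) (v : V) (h : v ∉ (K : Set V)),
      φ K ((G.deleteEdges Q).componentComplMk h) = G.componentComplMk h := fun _ _ _ => rfl
  -- saturation of a finite set by the equivalence classes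
  have hsat : ∀ K : Finset V, ∃ L : Finset V, K ⊆ L ∧
      ∀ ⦃a y : V⦄, a ∉ (L : Set V) → s.r a y → y ∉ (K : Set V) := by
    intro K
    have hfinL : {y | ∃ x ∈ K, s.r x y}.Finite := by
      have : {y | ∃ x ∈ K, s.r x y} ⊆ ⋃ x ∈ K, {y | s.r x y} := by
        rintro y ⟨x, hx, hxy⟩
        exact Set.mem_biUnion hx hxy
      exact (K.finite_toSet.biUnion fun x _ => hfin x).subset this
    refine ⟨hfinL.toFinset, ?_, ?_⟩
    · intro x hx
      simp only [Set.Finite.mem_toFinset, Set.mem_setOf_eq]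
      exact ⟨x, hx, s.iseqv.refl x⟩
    · intro a y ha hay hy
      apply ha
      simp only [Finset.coe_sort_coe, Set.Finite.coe_toFinset, Set.mem_setOf_eq]
      exact ⟨y, hy, s.iseqv.symm hay⟩
  -- key: components of G outside a saturated set refine components of the deleted graph
  have keyB : ∀ (K L : Finset V) (hKL : K ⊆ L),
      (∀ ⦃a y : V⦄, a ∉ (L : Set V) → s.r a y → y ∉ (K : Set V)) →
      ∀ (u v : V) (hu : u ∉ (L : Set V)) (hv : v ∉ (L : Set V)),
        G.componentComplMk hu = G.componentComplMk hv →
        (G.deleteEdges Q).componentComplMk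
            (Set.notMem_subset (Finset.coe_subset.mpr hKL) hu) =
          (G.deleteEdges Q).componentComplMk
            (Set.notMem_subset (Finset.coe_subset.mpr hKL) hv) := by
    intro K L hKL hLK u v hu hv h
    have hsub : ((L : Set V)ᶜ) ⊆ ((K : Set V)ᶜ) :=
      Set.compl_subset_compl.2 (by exact_mod_cast hKL)
    have hr : (G.induce ((L : Set V)ᶜ)).Reachable ⟨u, hu⟩ ⟨v, hv⟩ := ConnectedComponent.eq.mp h
    rw [ConnectedComponent.eq]
    obtain ⟨w⟩ := hr
    have main : ∀ (x y : {z // z ∈ ((L : Set V)ᶜ)}), (G.induce ((L : Set V)ᶜ)).Walk x y →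
        ((G.deleteEdges Q).induce ((K : Set V)ᶜ)).Reachable
          ⟨x.1, hsub x.2⟩ ⟨y.1, hsub y.2⟩ := by
      intro x y w
      induction w with
      | nil => exact Reachable.refl _
      | @cons a b c hadj p ih =>
        refine Reachable.trans ?_ ih
        have hGadj : G.Adj a.1 b.1 := hadj
        by_cases hq : s(a.1, b.1) ∈ Q
        · have hrel := hQrel _ _ hq
          have hcd : ∀ z ∈ {y | s.r a.1 y}, z ∈ ((K : Set V)ᶜ) :=
            fun z hz => hLK a.2 hz
          have hreach := (hclass' a.1).preconnected ⟨a.1, s.iseqv.refl _⟩ ⟨b.1, hrel⟩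
          exact hreach.map (induceHom Hom.id hcd)
        · exact Adj.reachable (by exact deleteEdges_adj.mpr ⟨hGadj, hq⟩)
    exact main _ _ w
  -- naturality of φ, giving a map of ends
  have Enat : ∀ (e : ((G.deleteEdges Q).componentComplFunctor).sections)
      ⦃K L : (Finset V)ᵒᵖ⦄ (f : K ⟶ L),
      G.componentComplFunctor.map f (φ K.unop (e.1 K)) = φ L.unop (e.1 L) := by
    intro e K L f
    obtain ⟨v, hv, hmk⟩ := (e.1 K).exists_eq_mk
    have h1 := (G.deleteEdges Q).end_hom_mk_of_mk e.2 f hv hmk.symm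
    rw [← hmk, h1, φ_mk, φ_mk]
    exact ComponentCompl.hom_mk _ (Finset.coe_subset.mpr (CategoryTheory.le_of_op_hom f))
  -- subsingleton
  intro e₁ he₁ e₂ he₂
  have hE₁ : (fun K : (Finset V)ᵒᵖ =>
      (φ K.unop (e₁ K) : G.componentComplFunctor.obj K)) ∈ G.end :=
    fun {K L} f => Enat ⟨e₁, he₁⟩ f
  have hE₂ : (fun K : (Finset V)ᵒᵖ =>
      (φ K.unop (e₂ K) : G.componentComplFunctor.obj K)) ∈ G.end :=
    fun {K L} f => Enat ⟨e₂, he₂⟩ f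
  have hEE := hend.2 hE₁ hE₂
  funext K
  obtain ⟨L, hKL, hLK⟩ := hsat K.unop
  have f : Opposite.op L ⟶ K := CategoryTheory.opHomOfLE hKL
  obtain ⟨u, hu, hmu⟩ := (e₁ (Opposite.op L)).exists_eq_mk
  obtain ⟨v, hv, hmv⟩ := (e₂ (Opposite.op L)).exists_eq_mk
  have h1 := (G.deleteEdges Q).end_hom_mk_of_mk he₁ f hu hmu.symm
  have h2 := (G.deleteEdges Q).end_hom_mk_of_mk he₂ f hv hmv.symm
  have hφ : φ L (e₁ (Opposite.op L)) = φ L (e₂ (Opposite.op L)) := congrFun hEE (Opposite.op L)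
  rw [← hmu, ← hmv, φ_mk, φ_mk] at hφ
  have hkey := keyB K.unop L hKL hLK u v hu hv hφ
  rw [h1, h2]
  exact hkey
end

section
/- Let G be an infinite, connected, locally finite simple graph with exactly one end and let T be a spanning tree of G. Define the core of T relative to G as the set of edges of T that lie in infinitely many fundamental cycles with respect to T. Then either the core is empty, or every connected component of the graph obtained from T by deleting all edges of the core is finite. -/
open SimpleGraph

/-- The core of a spanning tree `T` relative to `G`: the set of edges of `T` lying in
infinitely many fundamental cycles with respect to `T`. -/
def treeCore {V : Type*} (G T : SimpleGraph V) : Set (Sym2 V) :=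
  {e | e ∈ T.edgeSet ∧
    {f : Sym2 V | f ∈ G.edgeSet ∧ f ∉ T.edgeSet ∧
      ∃ x y : V, f = s(x, y) ∧ ∃ p : T.Walk x y, p.IsPath ∧ e ∈ p.edges}.Infinite}

namespace Stmt4Aux

open CategoryTheory

variable {V : Type*}

/-- The set of edges of `G` crossing the cut determined by deleting `s(x,y)` from `T`. -/
def cross (G T' : SimpleGraph V) (x y : V) : Set (Sym2 V) :=
  {f | f ∈ G.edgeSet ∧ ∃ p q : V, f = s(p, q) ∧ T'.Reachable p x ∧ T'.Reachable q y}

lemma bridge_of_acyclic {T : SimpleGraph V} (hTa : T.IsAcyclic) {x y : V} (hxy : T.Adj x y) :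
    ¬ (T.deleteEdges {s(x, y)}).Reachable x y := by
  have h := (isAcyclic_iff_forall_adj_isBridge.mp hTa) hxy
  rw [isBridge_iff] at h
  exact h

lemma cover {T : SimpleGraph V} (hTc : T.Connected) {x y : V} (_hxy : T.Adj x y) (z : V) :
    (T.deleteEdges {s(x, y)}).Reachable z x ∨ (T.deleteEdges {s(x, y)}).Reachable z y := by
  suffices H : ∀ (p q : V) (_w : T.Walk p q),
      ((T.deleteEdges {s(x, y)}).Reachable q x ∨ (T.deleteEdges {s(x, y)}).Reachable q y) →
      ((T.deleteEdges {s(x, y)}).Reachable p x ∨ (T.deleteEdges {s(x, y)}).Reachable p y) by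
    obtain ⟨w⟩ := hTc z x
    exact H z x w (Or.inl (Reachable.refl _))
  intro p q w
  induction w with
  | nil => exact id
  | @cons a b _ h _ ih =>
    intro hend
    by_cases he : s(a, b) = s(x, y)
    · rw [Sym2.eq_iff] at he
      rcases he with ⟨rfl, rfl⟩ | ⟨rfl, rfl⟩
      · exact Or.inl (Reachable.refl _)
      · exact Or.inr (Reachable.refl _)
    · have hadj : (T.deleteEdges {s(x, y)}).Adj a b := by
        rw [deleteEdges_adj]
        exact ⟨h, by simpa using he⟩
      rcases ih hend with hx | hy
      · exact Or.inl (hadj.reachable.trans hx)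
      · exact Or.inr (hadj.reachable.trans hy)

/-- If the endpoints of a `T`-walk lie on opposite sides of the cut of `s(x,y)`,
then the walk uses the edge `s(x,y)`. -/
lemma edge_mem_of_cross {T : SimpleGraph V} (hTa : T.IsAcyclic) {x y a b : V}
    (hxy : T.Adj x y)
    (ha : (T.deleteEdges {s(x, y)}).Reachable a x) (hb : (T.deleteEdges {s(x, y)}).Reachable b y)
    (p : T.Walk a b) : s(x, y) ∈ p.edges := by
  by_contra he
  have hr : (T.deleteEdges {s(x, y)}).Reachable a b :=
    ⟨p.toDeleteEdges {s(x, y)} (fun e hep hes => he (by rw [Set.mem_singleton_iff] at hes; rwa [hes] at hep))⟩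
  exact bridge_of_acyclic hTa hxy (ha.symm.trans (hr.trans hb))

/-- If the endpoints of a `T`-path lie on the same side of the cut of `s(x,y)`,
then the path avoids the edge `s(x,y)`. -/
lemma not_edge_mem_of_same_side {T : SimpleGraph V} (hTa : T.IsAcyclic) {x y a b w : V}
    (_hxy : T.Adj x y)
    (ha : (T.deleteEdges {s(x, y)}).Reachable a w) (hb : (T.deleteEdges {s(x, y)}).Reachable b w)
    {p : T.Walk a b} (hp : p.IsPath) : s(x, y) ∉ p.edges := by
  classical
  obtain ⟨q⟩ := ha.trans hb.symm
  have hqe : ∀ e ∈ (q.toPath : (T.deleteEdges {s(x, y)}).Walk a b).edges, e ∈ T.edgeSet := by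
    intro e hee
    have := Walk.edges_subset_edgeSet _ hee
    rw [edgeSet_deleteEdges] at this
    exact this.1
  set q2 : T.Walk a b := (q.toPath : (T.deleteEdges {s(x, y)}).Walk a b).transfer T hqe with hq2
  have hq2p : q2.IsPath := (q.toPath.2).transfer hqe
  have hpq : p = q2 := by
    have := hTa.path_unique ⟨p, hp⟩ ⟨q2, hq2p⟩
    exact congrArg Subtype.val this
  intro hmem
  rw [hpq, hq2, Walk.edges_transfer] at hmem
  have := Walk.edges_subset_edgeSet _ hmem
  rw [edgeSet_deleteEdges] at this
  exact this.2 rfl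

/-- An edge in a `T`-path between `a` and `b` forces `a` and `b` onto opposite
sides of the corresponding cut. -/
lemma cross_of_edge_mem {T : SimpleGraph V} (hTc : T.Connected) (hTa : T.IsAcyclic)
    {x y a b : V} (hxy : T.Adj x y) {p : T.Walk a b} (hp : p.IsPath)
    (he : s(x, y) ∈ p.edges) :
    ((T.deleteEdges {s(x, y)}).Reachable a x ∧ (T.deleteEdges {s(x, y)}).Reachable b y) ∨
      ((T.deleteEdges {s(x, y)}).Reachable a y ∧ (T.deleteEdges {s(x, y)}).Reachable b x) := by
  rcases cover hTc hxy a with hax | hay <;> rcases cover hTc hxy b with hbx | hby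
  · exact absurd he (not_edge_mem_of_same_side hTa hxy hax hbx hp)
  · exact Or.inl ⟨hax, hby⟩
  · exact Or.inr ⟨hay, hbx⟩
  · exact absurd he (not_edge_mem_of_same_side hTa hxy hay hby hp)

lemma incidence_finite {G : SimpleGraph V} (hlf : ∀ v : V, (G.neighborSet v).Finite) (q : V) :
    {f : Sym2 V | f ∈ G.edgeSet ∧ q ∈ f}.Finite := by
  apply ((hlf q).image (fun w => s(q, w))).subset
  rintro f ⟨hf, hq⟩
  refine ⟨Sym2.Mem.other hq, ?_, (Sym2.other_spec hq)⟩
  have : s(q, Sym2.Mem.other hq) ∈ G.edgeSet := by rw [Sym2.other_spec hq]; exact hf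
  exact G.mem_edgeSet.mp this

/-- If the cut of `s(x,y)` is crossed by infinitely many `G`-edges, then the `y`-side
is infinite. -/
lemma side_infinite {G T : SimpleGraph V} (hlf : ∀ v : V, (G.neighborSet v).Finite)
    {x y : V} (hcross : (cross G (T.deleteEdges {s(x, y)}) x y).Infinite) :
    {z | (T.deleteEdges {s(x, y)}).Reachable z y}.Infinite := by
  by_contra hfin
  rw [Set.not_infinite] at hfin
  apply hcross
  have hsub : cross G (T.deleteEdges {s(x, y)}) x y ⊆
      ⋃ q ∈ {z | (T.deleteEdges {s(x, y)}).Reachable z y},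
        {f : Sym2 V | f ∈ G.edgeSet ∧ q ∈ f} := by
    rintro f ⟨hfG, p, q, rfl, hp, hq⟩
    exact Set.mem_biUnion hq ⟨hfG, Sym2.mem_mk_right p q⟩
  exact (hfin.biUnion (fun q _ => incidence_finite hlf q)).subset hsub

/-- A core edge has an infinite crossing set. -/
lemma cross_infinite_of_core {G T : SimpleGraph V} (hTc : T.Connected) (hTa : T.IsAcyclic)
    {x y : V} (hxy : T.Adj x y) (hcore : s(x, y) ∈ treeCore G T) :
    (cross G (T.deleteEdges {s(x, y)}) x y).Infinite := by
  apply hcore.2.mono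
  rintro f ⟨hfG, _hfT, p, q, rfl, w, hw, he⟩
  rcases cross_of_edge_mem hTc hTa hxy hw he with ⟨h1, h2⟩ | ⟨h1, h2⟩
  · exact ⟨hfG, p, q, rfl, h1, h2⟩
  · exact ⟨hfG, q, p, Sym2.eq_swap, h2, h1⟩

/-- A non-core tree edge has a finite crossing set. -/
lemma cross_finite_of_not_core {G T : SimpleGraph V} (hTG : T ≤ G) (hTc : T.Connected)
    (hTa : T.IsAcyclic) {x y : V} (hxy : T.Adj x y) (hnc : s(x, y) ∉ treeCore G T) :
    (cross G (T.deleteEdges {s(x, y)}) x y).Finite := by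
  have hfun : {f : Sym2 V | f ∈ G.edgeSet ∧ f ∉ T.edgeSet ∧
      ∃ a b : V, f = s(a, b) ∧ ∃ p : T.Walk a b, p.IsPath ∧ s(x, y) ∈ p.edges}.Finite := by
    rw [← Set.not_infinite]
    exact fun h => hnc ⟨T.mem_edgeSet.mpr hxy, h⟩
  apply (hfun.union (Set.finite_singleton s(x, y))).subset
  rintro f ⟨hfG, p, q, rfl, hpx, hqy⟩
  by_cases hfT : s(p, q) ∈ T.edgeSet
  · by_cases hfe : s(p, q) = s(x, y)
    · exact Or.inr hfe
    · exfalso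
      have hadj : (T.deleteEdges {s(x, y)}).Adj p q := by
        rw [deleteEdges_adj]
        exact ⟨T.mem_edgeSet.mp hfT, by simpa using hfe⟩
      exact bridge_of_acyclic hTa hxy (hpx.symm.trans (hadj.reachable.trans hqy))
  · left
    classical
    obtain ⟨w⟩ := hTc p q
    exact ⟨hfG, hfT, p, q, rfl, w.toPath, w.toPath.2,
      edge_mem_of_cross hTa hxy hpx hqy w.toPath⟩

/-- Separation: if `S` contains all endpoints of crossing edges, vertices on opposite
sides of the cut lie in different components of `G` minus `S`. -/
lemma sep {G T : SimpleGraph V} (hTa : T.IsAcyclic) (hTc : T.Connected)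
    {x y : V} (hxy : T.Adj x y) {S : Set V}
    (hS : ∀ f ∈ cross G (T.deleteEdges {s(x, y)}) x y, ∀ z ∈ f, z ∈ S)
    {z1 z2 : V} (h1 : z1 ∉ S) (h2 : z2 ∉ S)
    (r1 : (T.deleteEdges {s(x, y)}).Reachable z1 x)
    (r2 : (T.deleteEdges {s(x, y)}).Reachable z2 y) :
    G.componentComplMk h1 ≠ G.componentComplMk h2 := by
  intro heq
  rw [ConnectedComponent.eq] at heq
  obtain ⟨w⟩ := heq
  suffices H : ∀ (u v : ↥(Sᶜ : Set V)) (_w : (G.induce (Sᶜ : Set V)).Walk u v),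
      (T.deleteEdges {s(x, y)}).Reachable u.1 x →
      (T.deleteEdges {s(x, y)}).Reachable v.1 y → False by
    exact H ⟨z1, h1⟩ ⟨z2, h2⟩ w r1 r2
  intro u v w
  induction w with
  | nil => exact fun hu hv => bridge_of_acyclic hTa hxy (hu.symm.trans hv)
  | @cons a b _ h _ ih =>
    intro hu hv
    rcases cover hTc hxy b.1 with hbx | hby
    · exact ih hbx hv
    · have hadj : G.Adj a.1 b.1 := h
      exact a.2 (hS s(a.1, b.1) ⟨G.mem_edgeSet.mpr hadj, a.1, b.1, rfl, hu, hby⟩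
        a.1 (Sym2.mem_mk_left _ _))

/-- Pigeonhole: an infinite set avoiding a finite `S` meets some infinite component
of the complement of `S`. -/
lemma exists_infinite_componentCompl (G : SimpleGraph V) (hconn : G.Connected)
    (hlf : ∀ v : V, (G.neighborSet v).Finite) (S : Finset V)
    {X : Set V} (hX : X.Infinite) (hXS : ∀ v ∈ X, v ∉ (S : Set V)) :
    ∃ v ∈ X, ∃ (h : v ∉ (S : Set V)), (G.componentComplMk h).supp.Infinite := by
  classical
  haveI : LocallyFinite G := fun v => (hlf v).fintype
  haveI : Fact G.Preconnected := ⟨hconn.preconnected⟩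
  haveI : Finite (G.ComponentCompl (S : Set V)) := G.componentCompl_finite S
  by_contra hno
  push_neg at hno
  have hsub : X ⊆ ⋃ (D : G.ComponentCompl (S : Set V)), (X ∩ D.supp) := by
    intro v hv
    exact Set.mem_iUnion.mpr ⟨G.componentComplMk (hXS v hv), hv, G.componentComplMk_mem _⟩
  apply hX
  apply (Set.finite_iUnion ?_).subset hsub
  intro D
  rcases (X ∩ D.supp).eq_empty_or_nonempty with h | ⟨v, hvX, hvD⟩
  · rw [h]; exact Set.finite_empty
  · obtain ⟨hv, hmk⟩ := hvD
    have : ¬ (G.componentComplMk hv).supp.Infinite := Set.not_infinite.mpr (hno v hvX hv)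
    rw [Set.not_infinite, hmk] at this
    exact this.inter_of_right X

/-- Every infinite component of the complement of a finite set extends to an end. -/
lemma exists_end_through (G : SimpleGraph V) [Infinite V] (hconn : G.Connected)
    (hlf : ∀ v : V, (G.neighborSet v).Finite) (K : Finset V)
    (C : G.ComponentCompl (K : Set V)) (hC : C.supp.Infinite) :
    ∃ s, s ∈ G.end ∧ s (Opposite.op K) = C := by
  classical
  haveI : LocallyFinite G := fun v => (hlf v).fintype
  haveI : Fact G.Preconnected := ⟨hconn.preconnected⟩
  haveI hne : ∀ j : (Finset V)ᵒᵖ, Nonempty (G.componentComplFunctor.obj j) :=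
    fun j => G.componentCompl_nonempty_of_infinite j.unop
  haveI hfin : ∀ j : (Finset V)ᵒᵖ, Finite (G.componentComplFunctor.obj j) :=
    fun j => G.componentCompl_finite j.unop
  have hML : G.componentComplFunctor.IsMittagLeffler :=
    Functor.isMittagLeffler_of_exists_finite_range _ (fun j => ⟨j, 𝟙 j, Set.toFinite _⟩)
  have hCe : C ∈ G.componentComplFunctor.eventualRange (Opposite.op K) :=
    (G.infinite_iff_in_eventualRange C).mp hC
  haveI : ∀ j, Nonempty (G.componentComplFunctor.toEventualRanges.obj j) :=
    fun j => Functor.toEventualRanges_nonempty _ hML j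
  obtain ⟨s', hs'⟩ := Functor.eval_section_surjective_of_surjective
    (F := G.componentComplFunctor.toEventualRanges)
    (Functor.surjective_toEventualRanges _ hML) (Opposite.op K) ⟨C, hCe⟩
  refine ⟨((G.componentComplFunctor.toEventualRangesSectionsEquiv) s').1,
    ((G.componentComplFunctor.toEventualRangesSectionsEquiv) s').2, ?_⟩
  have := congrArg Subtype.val hs'
  exact this

/-- With a unique end, there is at most one infinite component outside a finite set. -/
lemma infinite_componentCompl_unique (G : SimpleGraph V) [Infinite V] (hconn : G.Connected)
    (hlf : ∀ v : V, (G.neighborSet v).Finite) (hsub : G.end.Subsingleton) (K : Finset V)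
    (C D : G.ComponentCompl (K : Set V)) (hC : C.supp.Infinite) (hD : D.supp.Infinite) :
    C = D := by
  obtain ⟨s, hs, hsK⟩ := exists_end_through G hconn hlf K C hC
  obtain ⟨t, ht, htK⟩ := exists_end_through G hconn hlf K D hD
  rw [← hsK, ← htK, hsub hs ht]

/-- Branch decomposition: an infinite component of a locally finite graph has,
at each of its vertices, a neighbor whose branch is infinite. -/
lemma branch_step {T2 : SimpleGraph V} (hlf2 : ∀ v : V, (T2.neighborSet v).Finite)
    {c : T2.ConnectedComponent} (hc : c.supp.Infinite) {a : V} (ha : a ∈ c.supp) :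
    ∃ w, T2.Adj a w ∧ {z | (T2.deleteEdges {s(a, w)}).Reachable z w}.Infinite := by
  classical
  by_contra h
  push_neg at h
  apply hc
  have hsub : c.supp ⊆ {a} ∪ ⋃ w ∈ T2.neighborSet a,
      {z | (T2.deleteEdges {s(a, w)}).Reachable z w} := by
    intro z hz
    by_cases hza : z = a
    · exact Or.inl hza
    · right
      have hr : T2.Reachable z a := by
        rw [ConnectedComponent.mem_supp_iff] at hz ha
        exact ConnectedComponent.exact (hz.trans ha.symm)
      obtain ⟨p0⟩ := hr
      obtain ⟨p, hp⟩ := p0.toPath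
      have hpr : p.reverse.IsPath := hp.reverse
      obtain ⟨w, hadj, q, hq⟩ := Walk.exists_eq_cons_of_ne (Ne.symm hza) p.reverse
      rw [hq] at hpr
      rw [Walk.cons_isPath_iff] at hpr
      have hqe : s(a, w) ∉ q.edges := by
        intro hmem
        exact hpr.2 (q.fst_mem_support_of_mem_edges hmem)
      have : (T2.deleteEdges {s(a, w)}).Reachable z w :=
        ⟨(q.toDeleteEdges {s(a, w)}
          (fun e he hes => hqe (by rw [Set.mem_singleton_iff] at hes; rwa [hes] at he))).reverse⟩
      exact Set.mem_biUnion hadj this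
  have hfin : ∀ w ∈ T2.neighborSet a, {z | (T2.deleteEdges {s(a, w)}).Reachable z w}.Finite :=
    fun w hw => h w hw
  exact ((Set.finite_singleton a).union ((hlf2 a).biUnion hfin)).subset hsub

lemma sym2_mem_finite (f : Sym2 V) : {z : V | z ∈ f}.Finite := by
  induction f using Sym2.ind with
  | _ p q =>
    apply ((Set.finite_singleton q).insert p).subset
    intro z hz
    rw [Set.mem_setOf_eq, Sym2.mem_iff] at hz
    rcases hz with rfl | rfl
    · exact Set.mem_insert _ _
    · exact Set.mem_insert_of_mem _ rfl

end Stmt4Aux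

open Stmt4Aux

/-- For a spanning tree `T` of an infinite, connected, locally finite,
one-ended graph `G`, either the core of `T` relative to `G` is empty, or every connected
component of `T` minus the core is finite. -/
theorem stmt4 {V : Type*} [Infinite V] (G : SimpleGraph V)
    (hconn : G.Connected) (hlf : ∀ v : V, (G.neighborSet v).Finite)
    (hend : G.end.Nonempty ∧ G.end.Subsingleton)
    (T : SimpleGraph V) (hTG : T ≤ G) (hTconn : T.Connected) (hTacyc : T.IsAcyclic) :
    treeCore G T = ∅ ∨
      ∀ c : (T.deleteEdges (treeCore G T)).ConnectedComponent, c.supp.Finite := by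
  classical
  by_cases hCe : treeCore G T = ∅
  · exact Or.inl hCe
  right
  intro c
  by_contra hcfin
  have hcinf : c.supp.Infinite := hcfin
  have hCne : (treeCore G T).Nonempty := Set.nonempty_iff_ne_empty.mpr hCe
  obtain ⟨e0, he0⟩ := hCne
  have main : ∀ u v : V, s(u, v) ∈ treeCore G T → False := by
    intro u v he0
    have hTuv : T.Adj u v := T.mem_edgeSet.mp he0.1
    have hT2T : T.deleteEdges (treeCore G T) ≤ T := T.deleteEdges_le _
    have hT2G : T.deleteEdges (treeCore G T) ≤ G := le_trans hT2T hTG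
    -- find a core edge with an endpoint in `c`
    have key : ∀ (p q : V) (_w : T.Walk p q),
        (q ∈ c.supp → ∃ x y : V, T.Adj x y ∧ s(x, y) ∈ treeCore G T ∧ x ∈ c.supp) →
        (p ∈ c.supp → ∃ x y : V, T.Adj x y ∧ s(x, y) ∈ treeCore G T ∧ x ∈ c.supp) := by
      intro p q w
      induction w with
      | nil => exact id
      | @cons p r _ h q ih =>
        intro hq hz
        by_cases hc2 : s(p, r) ∈ treeCore G T
        · exact ⟨p, r, h, hc2, hz⟩
        · apply ih hq
          have hadj : (T.deleteEdges (treeCore G T)).Adj p r := by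
            rw [deleteEdges_adj]; exact ⟨h, hc2⟩
          rw [ConnectedComponent.mem_supp_iff] at hz ⊢
          rw [← hz]
          exact ConnectedComponent.sound hadj.symm.reachable
    obtain ⟨w0, hw0⟩ := hcinf.nonempty
    obtain ⟨q0⟩ := hTconn w0 u
    obtain ⟨a, b, hab, habC, haC⟩ :=
      key w0 u q0 (fun hu => ⟨u, v, hTuv, he0, hu⟩) hw0
    -- the `b`-side of the core edge `s(a,b)` is infinite
    have hSbinf : {z | (T.deleteEdges {s(a, b)}).Reachable z b}.Infinite :=
      side_infinite hlf (cross_infinite_of_core hTconn hTacyc hab habC)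
    -- branch step at `a` inside `c`
    have hlf2 : ∀ w : V, ((T.deleteEdges (treeCore G T)).neighborSet w).Finite :=
      fun w => (hlf w).subset (fun z hz => hT2G hz)
    obtain ⟨v1, hv1adj, hbranch⟩ := branch_step hlf2 hcinf haC
    have hav1T : T.Adj a v1 := hT2T hv1adj
    have hv1nc : s(a, v1) ∉ treeCore G T := ((deleteEdges_adj).mp hv1adj).2
    have hne : s(a, b) ≠ s(a, v1) := fun h => hv1nc (h ▸ habC)
    -- the edge `s(a, v1)` is not in the core, so its crossing set is finite
    have hcrossfin : (cross G (T.deleteEdges {s(a, v1)}) a v1).Finite :=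
      cross_finite_of_not_core hTG hTconn hTacyc hav1T hv1nc
    have hS0fin : (⋃ f ∈ cross G (T.deleteEdges {s(a, v1)}) a v1, {z : V | z ∈ f}).Finite :=
      hcrossfin.biUnion (fun f _ => sym2_mem_finite f)
    set S : Finset V := hS0fin.toFinset with hSdef
    have hScoe : (S : Set V) = ⋃ f ∈ cross G (T.deleteEdges {s(a, v1)}) a v1, {z : V | z ∈ f} :=
      hS0fin.coe_toFinset
    have hS : ∀ f ∈ cross G (T.deleteEdges {s(a, v1)}) a v1, ∀ z ∈ f, z ∈ (S : Set V) := by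
      intro f hf z hz
      rw [hScoe]
      exact Set.mem_biUnion hf hz
    -- monotonicity for branches
    have hmono : (T.deleteEdges (treeCore G T)).deleteEdges {s(a, v1)} ≤
        T.deleteEdges {s(a, v1)} := by
      intro p q h
      rw [deleteEdges_adj] at h ⊢
      exact ⟨hT2T h.1, h.2⟩
    -- the far side: an infinite component inside the branch of `v1`
    obtain ⟨vf, hvfX, hvf, hvfinf⟩ := exists_infinite_componentCompl G hconn hlf S
      (hbranch.diff S.finite_toSet) (fun w hw => hw.2)
    have hrf : (T.deleteEdges {s(a, v1)}).Reachable vf v1 := Reachable.mono hmono hvfX.1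
    -- the near side contains the `b`-side of the core edge
    have hnear : ∀ z, (T.deleteEdges {s(a, b)}).Reachable z b →
        (T.deleteEdges {s(a, v1)}).Reachable z a := by
      intro z hz
      obtain ⟨q⟩ := hz
      have hq1 : s(a, v1) ∉ q.edges := by
        intro hmem
        have hasupp : a ∈ q.support := q.fst_mem_support_of_mem_edges hmem
        exact bridge_of_acyclic hTacyc hab ⟨q.dropUntil a hasupp⟩
      have hqT : ∀ e ∈ q.edges, e ∈ T.edgeSet := by
        intro e he
        have h2 := Walk.edges_subset_edgeSet q he
        rw [edgeSet_deleteEdges] at h2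
        exact h2.1
      have hqt : s(a, v1) ∉ (q.transfer T hqT).edges := by rwa [Walk.edges_transfer]
      have hzb : (T.deleteEdges {s(a, v1)}).Reachable z b :=
        ⟨(q.transfer T hqT).toDeleteEdges {s(a, v1)}
          (fun e he hes => hqt (by rw [Set.mem_singleton_iff] at hes; rwa [hes] at he))⟩
      refine hzb.trans (Adj.reachable ?_)
      rw [deleteEdges_adj]
      refine ⟨hab.symm, ?_⟩
      rw [Set.mem_singleton_iff]
      intro h
      rw [Sym2.eq_swap] at h
      exact hne h
    -- the near side: an infinite component inside the `b`-side
    obtain ⟨vn, hvnX, hvn, hvninf⟩ := exists_infinite_componentCompl G hconn hlf S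
      (hSbinf.diff S.finite_toSet) (fun w hw => hw.2)
    have hrn : (T.deleteEdges {s(a, v1)}).Reachable vn a := hnear vn hvnX.1
    -- contradiction: two distinct infinite components outside `S`
    have hdiff : G.componentComplMk hvn ≠ G.componentComplMk hvf :=
      sep hTacyc hTconn hav1T hS hvn hvf hrn hrf
    exact hdiff (infinite_componentCompl_unique G hconn hlf hend.2 S
      (G.componentComplMk hvn) (G.componentComplMk hvf) hvninf hvfinf)
  exact Sym2.ind main e0 he0
end

section
/- Let G be an infinite, connected, locally finite simple graph with exactly one end and let T be a spanning tree of G. Assume that: (i) every vertex has degree at least 2 in T; (ii) every edge of T lies in infinitely many fundamental cycles with respect to T; and (iii) every vertex whose degree in T is exactly 2 is incident to some edge f of G not in T whose fundamental cycle with respect to T contains a vertex of T-degree at least 3. Then G is 3-edge-connected: for all vertices u, v and all edges e, f of G, the vertex v is reachable from u in the graph obtained from G by deleting e and f. -/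
open SimpleGraph


section Stmt5Aux

variable {V : Type*}

private lemma walk_split {T : SimpleGraph V} {x y : V} (p : T.Walk x y) {a b : V}
    (h : s(a, b) ∈ p.edges) :
    (∃ (q : T.Walk x a) (r : T.Walk b y), p.edges = q.edges ++ s(a, b) :: r.edges) ∨
    (∃ (q : T.Walk x b) (r : T.Walk a y), p.edges = q.edges ++ s(a, b) :: r.edges) := by
  induction p with
  | nil => simp at h
  | @cons u v w hadj p' ih =>
    rw [Walk.edges_cons, List.mem_cons] at h
    rcases h with h | h
    · rcases Sym2.eq_iff.mp h with ⟨rfl, rfl⟩ | ⟨rfl, rfl⟩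
      · exact Or.inl ⟨Walk.nil, p', by simp⟩
      · exact Or.inr ⟨Walk.nil, p', by simp [Sym2.eq_swap]⟩
    · rcases ih h with ⟨q, r, hqr⟩ | ⟨q, r, hqr⟩
      · exact Or.inl ⟨Walk.cons hadj q, r, by simp [hqr]⟩
      · exact Or.inr ⟨Walk.cons hadj q, r, by simp [hqr]⟩

private lemma reach_del {T : SimpleGraph V} {S : Set (Sym2 V)} {x y : V} (q : T.Walk x y)
    (hq : ∀ t ∈ q.edges, t ∉ S) : (T.deleteEdges S).Reachable x y :=
  ⟨q.toDeleteEdges S hq⟩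

private lemma reach_or {T : SimpleGraph V} (S : Set (Sym2 V)) {v w : V} (p : T.Walk v w) :
    (T.deleteEdges S).Reachable v w ∨
      ∃ x y : V, s(x, y) ∈ S ∧ (T.deleteEdges S).Reachable v x := by
  induction p with
  | nil => exact Or.inl (Reachable.refl _)
  | @cons u u' w hadj p' ih =>
    by_cases hm : s(u, u') ∈ S
    · exact Or.inr ⟨u, u', hm, Reachable.refl _⟩
    · have hadj' : (T.deleteEdges S).Adj u u' := by
        rw [deleteEdges_adj]; exact ⟨hadj, hm⟩
      rcases ih with h | ⟨x, y, hxy, hr⟩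
      · exact Or.inl (hadj'.reachable.trans h)
      · exact Or.inr ⟨x, y, hxy, hadj'.reachable.trans hr⟩

private lemma not_reach_del {T : SimpleGraph V} (hT : T.IsAcyclic) {S : Set (Sym2 V)} {a b : V}
    (hadj : T.Adj a b) (hS : s(a, b) ∈ S) : ¬ (T.deleteEdges S).Reachable a b := by
  classical
  rintro ⟨q⟩
  have hsub : ∀ t ∈ q.reverse.edges, t ∈ T.edgeSet := by
    intro t ht
    have := Walk.edges_subset_edgeSet _ ht
    rw [edgeSet_deleteEdges] at this
    exact this.1
  obtain ⟨P, hPpath, hPsub⟩ : ∃ P : T.Walk b a, P.IsPath ∧ P.edges ⊆ q.reverse.edges := by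
    refine ⟨((q.reverse).transfer T hsub).toPath, ((q.reverse).transfer T hsub).toPath.2, ?_⟩
    intro t ht
    have h2 := Walk.edges_toPath_subset _ ht
    rwa [Walk.edges_transfer] at h2
  have hPe : s(a, b) ∉ P.edges := by
    intro hmem
    have := Walk.edges_subset_edgeSet _ (hPsub hmem)
    rw [edgeSet_deleteEdges] at this
    exact this.2 hS
  have hc : (Walk.cons hadj P).IsCycle := by
    rw [Walk.cons_isCycle_iff]
    exact ⟨hPpath, hPe⟩
  exact hT _ hc

end Stmt5Aux
section A3
variable {V : Type*}

private lemma induce_reach' {T : SimpleGraph V} {W : Set V} :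
    ∀ {v w : V} (q : T.Walk v w), (∀ u ∈ q.support, u ∈ W) →
      ∀ (hv : v ∈ W) (hw : w ∈ W), (T.induce W).Reachable ⟨v, hv⟩ ⟨w, hw⟩ := by
  intro v w q
  induction q with
  | nil => intro _ hv hw; exact Reachable.refl _
  | @cons u u' w hadj p' ih =>
    intro hsupp hv hw
    have hu' : u' ∈ W := hsupp u' (by simp)
    have hstep : (T.induce W).Adj ⟨u, hv⟩ ⟨u', hu'⟩ := hadj
    exact hstep.reachable.trans (ih (fun z hz => hsupp z (by simp [hz])) hu' hw)

private lemma support_mapLe' {G G' : SimpleGraph V} (h : G ≤ G') {u v : V} (p : G.Walk u v) :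
    (p.mapLe h).support = p.support := by
  rw [Walk.mapLe, Walk.support_map]
  exact List.map_id' _

private lemma seal_infinite {G T : SimpleGraph V} (hTG : T ≤ G) (hTacyc : T.IsAcyclic)
    (hdeg : ∀ v : V, 2 ≤ (T.neighborSet v).ncard)
    (hdeg2 : ∀ v : V, (T.neighborSet v).ncard = 2 →
      ∃ y : V, G.Adj v y ∧ ¬ T.Adj v y ∧
        ∃ p : T.Walk v y, p.IsPath ∧ ∃ w ∈ p.support, 3 ≤ (T.neighborSet w).ncard)
    {e f : Sym2 V} {a' b' c' d' : V}
    (he : e = s(a', b')) (hf : f = s(c', d'))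
    (heT : e ∈ T.edgeSet) (hfT : f ∈ T.edgeSet)
    {W : Set V} (hW : W = {v | (T.deleteEdges {e, f}).Reachable v b'})
    (hc'W : c' ∈ W) (ha'W : a' ∉ W) (hd'W : d' ∉ W)
    (hseal : ∀ w z : V, G.Adj w z → w ∈ W → z ∉ W → s(w, z) = e ∨ s(w, z) = f) :
    W.Infinite := by
  classical
  by_contra hinf
  have hfin : W.Finite := Set.not_infinite.mp hinf
  have hb'W : b' ∈ W := by rw [hW]; exact Reachable.refl _
  -- W is closed under T-adjacency except at the two sealed edges
  have hclosed : ∀ v ∈ W, ∀ z : V, T.Adj v z → z ∉ W →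
      (v = b' ∧ z = a') ∨ (v = c' ∧ z = d') := by
    intro v hv z hadj hz
    rcases hseal v z (hTG hadj) hv hz with h | h
    · rw [he] at h
      rcases Sym2.eq_iff.mp h with ⟨rfl, rfl⟩ | ⟨rfl, rfl⟩
      · exact absurd hv ha'W
      · exact Or.inl ⟨rfl, rfl⟩
    · rw [hf] at h
      rcases Sym2.eq_iff.mp h with ⟨rfl, rfl⟩ | ⟨rfl, rfl⟩
      · exact Or.inr ⟨rfl, rfl⟩
      · exact absurd hv hd'W
  -- vertices of W reach b' within the deleted tree, with support inside W
  have hWreach : ∀ v ∈ W, ∃ q : T.Walk v b', (∀ u ∈ q.support, u ∈ W) := by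
    intro v hv
    rw [hW] at hv
    obtain ⟨q0⟩ := (hv : (T.deleteEdges {e, f}).Reachable v b')
    refine ⟨q0.mapLe (deleteEdges_le _), ?_⟩
    intro u hu
    rw [support_mapLe'] at hu
    rw [hW]
    exact ⟨q0.dropUntil u hu⟩
  haveI : Fintype ↥W := hfin.fintype
  haveI : DecidableEq ↥W := Classical.decEq _
  haveI : DecidableRel (T.induce W).Adj := Classical.decRel _
  set TW : SimpleGraph ↥W := T.induce W with hTW
  haveI : Nonempty ↥W := ⟨⟨b', hb'W⟩⟩
  have hconnW : TW.Connected := by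
    refine Connected.mk ?_
    rintro ⟨u, hu⟩ ⟨v, hv⟩
    obtain ⟨qu, hqu⟩ := hWreach u hu
    obtain ⟨qv, hqv⟩ := hWreach v hv
    exact (induce_reach' qu hqu hu hb'W).trans (induce_reach' qv hqv hv hb'W).symm
  have hacycW : TW.IsAcyclic := by
    intro v c hc
    exact hTacyc _ (hc.map (f := ((Embedding.induce W : T.induce W ↪g T)).toHom)
      (Embedding.induce W : T.induce W ↪g T).injective)
  have htree : TW.IsTree := ⟨hconnW, hacycW⟩
  have hcard := htree.card_edgeFinset
  have hhand := TW.sum_degrees_eq_twice_card_edges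
  -- indicator
  set ind : ↥W → ℕ := fun v => (if (v : V) = b' then 1 else 0) + (if (v : V) = c' then 1 else 0)
    with hind
  have hnb : ∀ v : ↥W, 2 ≤ TW.degree v + ind v ∧ (T.neighborSet ↑v).ncard ≤ TW.degree v + ind v := by
    intro v
    have hsub : T.neighborSet ↑v ⊆ (Subtype.val '' (TW.neighborSet v)) ∪
        ((if (v : V) = b' then {a'} else ∅) ∪ (if (v : V) = c' then {d'} else ∅)) := by
      intro z hz
      by_cases hzW : z ∈ W
      · left
        exact ⟨⟨z, hzW⟩, (hz : T.Adj ↑v z), rfl⟩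
      · right
        rcases hclosed ↑v v.2 z hz hzW with ⟨h1, h2⟩ | ⟨h1, h2⟩
        · exact Or.inl (by simp [h1, h2])
        · exact Or.inr (by simp [h1, h2])
    have hcard1 : (Subtype.val '' (TW.neighborSet v)).ncard = TW.degree v := by
      rw [Set.ncard_image_of_injective _ Subtype.val_injective, ← Nat.card_coe_set_eq,
        Nat.card_eq_fintype_card, card_neighborSet_eq_degree]
    have hb1 : ((if (v : V) = b' then ({a'} : Set V) else ∅)).ncard ≤ (if (v : V) = b' then 1 else 0) := by
      split <;> simp
    have hb2 : ((if (v : V) = c' then ({d'} : Set V) else ∅)).ncard ≤ (if (v : V) = c' then 1 else 0) := by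
      split <;> simp
    have hle : (T.neighborSet ↑v).ncard ≤ TW.degree v + ind v := by
      calc (T.neighborSet ↑v).ncard ≤ _ := Set.ncard_le_ncard hsub (by
            refine Set.Finite.union ?_ (Set.Finite.union ?_ ?_)
            · exact (Set.toFinite _)
            · split <;> simp
            · split <;> simp)
        _ ≤ (Subtype.val '' (TW.neighborSet v)).ncard +
            ((if (v : V) = b' then ({a'} : Set V) else ∅) ∪
              (if (v : V) = c' then ({d'} : Set V) else ∅)).ncard := Set.ncard_union_le _ _
        _ ≤ (Subtype.val '' (TW.neighborSet v)).ncard +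
            (((if (v : V) = b' then ({a'} : Set V) else ∅)).ncard +
             ((if (v : V) = c' then ({d'} : Set V) else ∅)).ncard) := by
              gcongr; exact Set.ncard_union_le _ _
        _ ≤ TW.degree v + ind v := by
              rw [hcard1]
              gcongr
              exact Nat.add_le_add hb1 hb2
    exact ⟨le_trans (hdeg ↑v) hle, hle⟩
  -- sum of indicator is 2
  have hindsum : ∑ v : ↥W, ind v = 2 := by
    have key : ∀ (x : V) (hx : x ∈ W),
        ∑ v : ↥W, (if (v : V) = x then 1 else 0) = 1 := by
      intro x hx
      have : ∀ v : ↥W, (if (v : V) = x then (1:ℕ) else 0) =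
          (if v = (⟨x, hx⟩ : ↥W) then 1 else 0) := by
        intro v
        congr 1
        simp [Subtype.ext_iff]
      rw [Finset.sum_congr rfl (fun v _ => this v), Finset.sum_ite_eq']
      simp
    rw [hind, Finset.sum_add_distrib, key b' hb'W, key c' hc'W]
  -- equality extraction
  have hsum2 : ∑ v : ↥W, (TW.degree v + ind v) = ∑ v : ↥W, 2 := by
    rw [Finset.sum_add_distrib, hhand, hindsum, Finset.sum_const, Finset.card_univ,
      smul_eq_mul]
    have : Finset.card TW.edgeFinset = Fintype.card ↥W - 1 := by omega
    rw [this]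
    have hpos : 1 ≤ Fintype.card ↥W := by
      have := Fintype.card_pos_iff.mpr (by infer_instance : Nonempty ↥W)
      omega
    omega
  have hpt : ∀ v : ↥W, TW.degree v + ind v = 2 := by
    intro v
    have := (Finset.sum_eq_sum_iff_of_le (s := Finset.univ)
      (f := fun _ : ↥W => (2:ℕ)) (g := fun v => TW.degree v + ind v)
      (fun i _ => (hnb i).1)).mp ?_ v (Finset.mem_univ v)
    · omega
    · rw [hsum2]
  have all2 : ∀ v ∈ W, (T.neighborSet v).ncard = 2 := by
    intro v hv
    have h1 := (hnb ⟨v, hv⟩).2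
    rw [hpt ⟨v, hv⟩] at h1
    exact le_antisymm h1 (hdeg v)
  -- endgame: apply hdeg2 at b'
  obtain ⟨y, hGy, hTy, p, hppath, w, hwsup, hw3⟩ := hdeg2 b' (all2 b' hb'W)
  by_cases hyW : y ∈ W
  · -- the path from b' to y stays in W; its high-degree vertex contradicts all2
    obtain ⟨q, hq⟩ := hWreach y hyW
    have hqsupp : ∀ u ∈ q.reverse.support, u ∈ W := by
      intro u hu
      rw [Walk.support_reverse, List.mem_reverse] at hu
      exact hq u hu
    have hPsup : ∀ u ∈ (q.reverse.toPath : T.Walk b' y).support, u ∈ W := by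
      intro u hu
      exact hqsupp u (Walk.support_toPath_subset _ hu)
    have huniq := isAcyclic_iff_path_unique.mp hTacyc ⟨p, hppath⟩ q.reverse.toPath
    have hwW : w ∈ W := by
      apply hPsup
      have : p = (q.reverse.toPath : T.Walk b' y) := by
        exact congrArg Subtype.val huniq
      rwa [← this]
    have := all2 w hwW
    omega
  · -- the non-tree edge leaves W : contradiction with sealedness
    rcases hseal b' y hGy hb'W hyW with h | h
    · rw [he] at h
      rcases Sym2.eq_iff.mp h with ⟨h1, h2⟩ | ⟨h1, h2⟩
      · rw [← h1] at ha'W; exact ha'W hb'W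
      · rw [he, mem_edgeSet] at heT
        rw [h2] at hTy
        exact hTy heT.symm
    · rw [hf] at h
      rcases Sym2.eq_iff.mp h with ⟨h1, h2⟩ | ⟨h1, h2⟩
      · rw [hf, mem_edgeSet] at hfT
        rw [h1, h2] at hTy
        exact hTy hfT
      · rw [← h1] at hd'W; exact hd'W hb'W

end A3
section A4
universe u
variable {V : Type u}

private lemma walk_in_sealed {G : SimpleGraph V} {K W : Set V}
    (hseal : ∀ w z : V, G.Adj w z → w ∈ W → z ∉ W → w ∈ K) :
    ∀ {x y : ↥(Kᶜ)} (_p : (G.induce Kᶜ).Walk x y), (x : V) ∈ W → (y : V) ∈ W := by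
  intro x y p
  induction p with
  | nil => exact id
  | @cons u u' w hadj p' ih =>
    intro hu
    apply ih
    by_contra h
    exact u.2 (hseal ↑u ↑u' hadj hu h)

private lemma supp_subset_of_sealed {G : SimpleGraph V} {K : Set V} {W : Set V}
    (hseal : ∀ w z : V, G.Adj w z → w ∈ W → z ∉ W → w ∈ K)
    (C : G.ComponentCompl K) {v : V} (hvC : v ∈ C.supp) (hvW : v ∈ W) :
    C.supp ⊆ W := by
  intro u huC
  obtain ⟨hunK, huC⟩ := ComponentCompl.mem_supp_iff.mp huC
  obtain ⟨hvnK, hvC⟩ := ComponentCompl.mem_supp_iff.mp hvC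
  rw [← huC] at hvC
  have hreach : (G.induce Kᶜ).Reachable ⟨v, hvnK⟩ ⟨u, hunK⟩ := (ConnectedComponent.eq).mp hvC
  obtain ⟨p⟩ := hreach
  exact walk_in_sealed hseal p hvW

private lemma exists_infinite_comp [Infinite V] {G : SimpleGraph V}
    (hconn : G.Connected) (hlf : ∀ v : V, (G.neighborSet v).Finite)
    (K : Finset V) {W : Set V} (hWinf : W.Infinite) :
    ∃ C : G.ComponentCompl (K : Set V), C.supp.Infinite ∧ (C.supp ∩ W).Nonempty := by
  classical
  haveI : G.LocallyFinite := fun v => (hlf v).fintype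
  haveI : Fact G.Preconnected := ⟨hconn.preconnected⟩
  haveI : Finite (G.ComponentCompl (K : Set V)) := G.componentCompl_finite K
  by_contra h
  push_neg at h
  apply hWinf
  have hcover : W ⊆ ↑K ∪ ⋃ (C : G.ComponentCompl (K : Set V)), (C.supp ∩ W) := by
    intro v hv
    by_cases hvK : v ∈ (K : Set V)
    · exact Or.inl hvK
    · exact Or.inr (Set.mem_iUnion.mpr ⟨G.componentComplMk hvK,
        G.componentComplMk_mem hvK, hv⟩)
  refine Set.Finite.subset (Set.Finite.union K.finite_toSet ?_) hcover
  refine Set.finite_iUnion (fun C => ?_)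
  by_cases hC : C.supp.Infinite
  · rw [h C hC]
    exact Set.finite_empty
  · exact (Set.not_infinite.mp hC).subset Set.inter_subset_left

private lemma edges_meeting_finite {G : SimpleGraph V}
    (hlf : ∀ v : V, (G.neighborSet v).Finite)
    {X : Set V} (hX : X.Finite) {E : Set (Sym2 V)}
    (hmeet : ∀ g ∈ E, g ∈ G.edgeSet ∧ ∃ x y : V, g = s(x, y) ∧ x ∈ X) : E.Finite := by
  have hsub : E ⊆ ⋃ v ∈ X, (fun u => s(v, u)) '' (G.neighborSet v) := by
    intro g hg
    obtain ⟨hgE, x, y, rfl, hx⟩ := hmeet g hg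
    exact Set.mem_biUnion hx ⟨y, (by rwa [mem_edgeSet] at hgE), rfl⟩
  exact ((hX.biUnion (fun v _ => (hlf v).image _)).subset hsub)

private lemma exists_end_through [Infinite V] {G : SimpleGraph V}
    (hconn : G.Connected) (hlf : ∀ v : V, (G.neighborSet v).Finite)
    (K : Finset V) (C : G.ComponentCompl (K : Set V)) (hC : C.supp.Infinite) :
    ∃ sec, sec ∈ G.end ∧ sec (Opposite.op K) = C := by
  classical
  haveI : G.LocallyFinite := fun v => (hlf v).fintype
  haveI : Fact G.Preconnected := ⟨hconn.preconnected⟩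
  haveI hobjfin : ∀ j : (Finset V)ᵒᵖ, Finite (G.componentComplFunctor.obj j) :=
    fun j => G.componentCompl_finite j.unop
  haveI hobjne : ∀ j : (Finset V)ᵒᵖ, Nonempty (G.componentComplFunctor.obj j) :=
    fun j => G.componentCompl_nonempty_of_infinite j.unop
  have hML : G.componentComplFunctor.IsMittagLeffler := by
    apply CategoryTheory.Functor.isMittagLeffler_of_exists_finite_range
    intro j
    exact ⟨j, CategoryTheory.CategoryStruct.id j, Set.toFinite _⟩
  haveI : ∀ j, Nonempty (G.componentComplFunctor.toEventualRanges.obj j) :=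
    fun j => G.componentComplFunctor.toEventualRanges_nonempty hML j
  have hsurj := G.componentComplFunctor.surjective_toEventualRanges hML
  have heval := CategoryTheory.Functor.eval_section_surjective_of_surjective
      (F := G.componentComplFunctor.toEventualRanges) hsurj (Opposite.op K)
  have hCmem : C ∈ G.componentComplFunctor.eventualRange (Opposite.op K) :=
    (G.infinite_iff_in_eventualRange C).mp hC
  obtain ⟨s', hs'⟩ := heval ⟨C, hCmem⟩
  set sec := (G.componentComplFunctor.toEventualRangesSectionsEquiv) s' with hsec
  refine ⟨sec.val, sec.property, ?_⟩
  have h2 : sec.val (Opposite.op K) = (s'.val (Opposite.op K)).val := rfl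
  have h3 : s'.val (Opposite.op K) = ⟨C, hCmem⟩ := hs'
  rw [h2, h3]

private lemma two_ends_contra [Infinite V] {G : SimpleGraph V}
    (hconn : G.Connected) (hlf : ∀ v : V, (G.neighborSet v).Finite)
    (hsub : G.end.Subsingleton)
    (K : Finset V) (C D : G.ComponentCompl (K : Set V))
    (hC : C.supp.Infinite) (hD : D.supp.Infinite) (hne : C ≠ D) : False := by
  obtain ⟨s, hs, hsK⟩ := exists_end_through hconn hlf K C hC
  obtain ⟨t, ht, htK⟩ := exists_end_through hconn hlf K D hD
  apply hne
  rw [← hsK, ← htK, hsub hs ht]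

end A4
section A5
variable {V : Type*}

private lemma config_main {T : SimpleGraph V} {x y a₁ b₁ c d : V} {e f : Sym2 V}
    (he : e = s(a₁, b₁)) (hf : f = s(c, d)) (hef : e ≠ f)
    (q : T.Walk x a₁) (r : T.Walk b₁ y)
    (hnd : (q.edges ++ e :: r.edges).Nodup)
    (hfin : f ∈ q.edges ++ e :: r.edges) :
    ∃ a' b' c' d' : V, e = s(a', b') ∧ f = s(c', d') ∧
      (T.deleteEdges {e, f}).Reachable b' c' ∧
      (((T.deleteEdges {e, f}).Reachable x a' ∧ (T.deleteEdges {e, f}).Reachable y d') ∨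
       ((T.deleteEdges {e, f}).Reachable x d' ∧ (T.deleteEdges {e, f}).Reachable y a')) := by
  rw [List.nodup_append] at hnd
  obtain ⟨hqnd, hernd, hdisj⟩ := hnd
  rw [List.nodup_cons] at hernd
  obtain ⟨her, hrnd⟩ := hernd
  have heq : e ∉ q.edges := fun h => hdisj _ h _ List.mem_cons_self rfl
  have hfq_or : f ∈ q.edges ∨ f ∈ r.edges := by
    rcases List.mem_append.mp hfin with h | h
    · exact Or.inl h
    · rcases List.mem_cons.mp h with h | h
      · exact absurd h.symm hef
      · exact Or.inr h
  have hSm : ∀ t : Sym2 V, t ∈ ({e, f} : Set (Sym2 V)) ↔ t = e ∨ t = f := by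
    intro t; simp
  rcases hfq_or with hfq | hfr
  · -- f before e : split q at f
    have hfnr : f ∉ r.edges := fun h => hdisj _ hfq _ (List.mem_cons_of_mem _ h) rfl
    have hravoid : ∀ t ∈ r.edges, t ∉ ({e, f} : Set (Sym2 V)) := by
      intro t ht hmem
      rcases (hSm t).mp hmem with rfl | rfl
      · exact her ht
      · exact hfnr ht
    rcases walk_split q (hf ▸ hfq) with ⟨q₂, r₂, h₂⟩ | ⟨q₂, r₂, h₂⟩
    · -- q₂ : x → c, r₂ : d → a₁
      rw [h₂, List.nodup_append, List.nodup_cons] at hqnd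
      obtain ⟨hq₂nd, ⟨hfr₂, hr₂nd⟩, hdisj₂⟩ := hqnd
      have hfq₂ : f ∉ q₂.edges := fun h => hdisj₂ _ h f (by rw [hf]; exact List.mem_cons_self) rfl
      have heq₂ : e ∉ q₂.edges := fun h => heq (by rw [h₂]; exact List.mem_append_left _ h)
      have her₂ : e ∉ r₂.edges := fun h => heq
        (by rw [h₂]; exact List.mem_append_right _ (List.mem_cons_of_mem _ h))
      have hq₂avoid : ∀ t ∈ q₂.edges, t ∉ ({e, f} : Set (Sym2 V)) := by
        intro t ht hmem
        rcases (hSm t).mp hmem with rfl | rfl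
        · exact heq₂ ht
        · exact hfq₂ ht
      have hr₂avoid : ∀ t ∈ r₂.edges, t ∉ ({e, f} : Set (Sym2 V)) := by
        intro t ht hmem
        rcases (hSm t).mp hmem with rfl | rfl
        · exact her₂ ht
        · exact hfr₂ (hf ▸ ht)
      exact ⟨b₁, a₁, d, c, he.trans Sym2.eq_swap, hf.trans Sym2.eq_swap,
        (reach_del r₂ hr₂avoid).symm, Or.inr ⟨reach_del q₂ hq₂avoid, (reach_del r hravoid).symm⟩⟩
    · -- q₂ : x → d, r₂ : c → a₁
      rw [h₂, List.nodup_append, List.nodup_cons] at hqnd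
      obtain ⟨hq₂nd, ⟨hfr₂, hr₂nd⟩, hdisj₂⟩ := hqnd
      have hfq₂ : f ∉ q₂.edges := fun h => hdisj₂ _ h f (by rw [hf]; exact List.mem_cons_self) rfl
      have heq₂ : e ∉ q₂.edges := fun h => heq (by rw [h₂]; exact List.mem_append_left _ h)
      have her₂ : e ∉ r₂.edges := fun h => heq
        (by rw [h₂]; exact List.mem_append_right _ (List.mem_cons_of_mem _ h))
      have hq₂avoid : ∀ t ∈ q₂.edges, t ∉ ({e, f} : Set (Sym2 V)) := by
        intro t ht hmem
        rcases (hSm t).mp hmem with rfl | rfl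
        · exact heq₂ ht
        · exact hfq₂ ht
      have hr₂avoid : ∀ t ∈ r₂.edges, t ∉ ({e, f} : Set (Sym2 V)) := by
        intro t ht hmem
        rcases (hSm t).mp hmem with rfl | rfl
        · exact her₂ ht
        · exact hfr₂ (hf ▸ ht)
      exact ⟨b₁, a₁, c, d, he.trans Sym2.eq_swap, hf,
        (reach_del r₂ hr₂avoid).symm, Or.inr ⟨reach_del q₂ hq₂avoid, (reach_del r hravoid).symm⟩⟩
  · -- e before f : split r at f
    have hfnq : f ∉ q.edges := fun h => hdisj _ h _ (List.mem_cons_of_mem _ hfr) rfl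
    have hqavoid : ∀ t ∈ q.edges, t ∉ ({e, f} : Set (Sym2 V)) := by
      intro t ht hmem
      rcases (hSm t).mp hmem with rfl | rfl
      · exact heq ht
      · exact hfnq ht
    rcases walk_split r (hf ▸ hfr) with ⟨q₂, r₂, h₂⟩ | ⟨q₂, r₂, h₂⟩
    · -- q₂ : b₁ → c, r₂ : d → y
      rw [h₂, List.nodup_append, List.nodup_cons] at hrnd
      obtain ⟨hq₂nd, ⟨hfr₂, hr₂nd⟩, hdisj₂⟩ := hrnd
      have hfq₂ : f ∉ q₂.edges := fun h => hdisj₂ _ h f (by rw [hf]; exact List.mem_cons_self) rfl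
      have heq₂ : e ∉ q₂.edges := fun h => her (by rw [h₂]; exact List.mem_append_left _ h)
      have her₂ : e ∉ r₂.edges := fun h => her
        (by rw [h₂]; exact List.mem_append_right _ (List.mem_cons_of_mem _ h))
      have hq₂avoid : ∀ t ∈ q₂.edges, t ∉ ({e, f} : Set (Sym2 V)) := by
        intro t ht hmem
        rcases (hSm t).mp hmem with rfl | rfl
        · exact heq₂ ht
        · exact hfq₂ ht
      have hr₂avoid : ∀ t ∈ r₂.edges, t ∉ ({e, f} : Set (Sym2 V)) := by
        intro t ht hmem
        rcases (hSm t).mp hmem with rfl | rfl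
        · exact her₂ ht
        · exact hfr₂ (hf ▸ ht)
      exact ⟨a₁, b₁, c, d, he, hf, reach_del q₂ hq₂avoid,
        Or.inl ⟨reach_del q hqavoid, (reach_del r₂ hr₂avoid).symm⟩⟩
    · -- q₂ : b₁ → d, r₂ : c → y
      rw [h₂, List.nodup_append, List.nodup_cons] at hrnd
      obtain ⟨hq₂nd, ⟨hfr₂, hr₂nd⟩, hdisj₂⟩ := hrnd
      have hfq₂ : f ∉ q₂.edges := fun h => hdisj₂ _ h f (by rw [hf]; exact List.mem_cons_self) rfl
      have heq₂ : e ∉ q₂.edges := fun h => her (by rw [h₂]; exact List.mem_append_left _ h)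
      have her₂ : e ∉ r₂.edges := fun h => her
        (by rw [h₂]; exact List.mem_append_right _ (List.mem_cons_of_mem _ h))
      have hq₂avoid : ∀ t ∈ q₂.edges, t ∉ ({e, f} : Set (Sym2 V)) := by
        intro t ht hmem
        rcases (hSm t).mp hmem with rfl | rfl
        · exact heq₂ ht
        · exact hfq₂ ht
      have hr₂avoid : ∀ t ∈ r₂.edges, t ∉ ({e, f} : Set (Sym2 V)) := by
        intro t ht hmem
        rcases (hSm t).mp hmem with rfl | rfl
        · exact her₂ ht
        · exact hfr₂ (hf ▸ ht)
      exact ⟨a₁, b₁, d, c, he, hf.trans Sym2.eq_swap, reach_del q₂ hq₂avoid,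
        Or.inl ⟨reach_del q hqavoid, (reach_del r₂ hr₂avoid).symm⟩⟩

private lemma config {T : SimpleGraph V} {x y a b c d : V} {e f : Sym2 V}
    (he : e = s(a, b)) (hf : f = s(c, d)) (hef : e ≠ f)
    (p : T.Walk x y) (hp : p.IsPath) (hep : e ∈ p.edges) (hfp : f ∈ p.edges) :
    ∃ a' b' c' d' : V, e = s(a', b') ∧ f = s(c', d') ∧
      (T.deleteEdges {e, f}).Reachable b' c' ∧
      (((T.deleteEdges {e, f}).Reachable x a' ∧ (T.deleteEdges {e, f}).Reachable y d') ∨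
       ((T.deleteEdges {e, f}).Reachable x d' ∧ (T.deleteEdges {e, f}).Reachable y a')) := by
  have hnd : p.edges.Nodup := hp.isTrail.edges_nodup
  rcases walk_split p (he ▸ hep) with ⟨q, r, hqr⟩ | ⟨q, r, hqr⟩
  · rw [hqr, ← he] at hnd hfp
    exact config_main he hf hef q r hnd hfp
  · rw [hqr, ← he] at hnd hfp
    exact config_main (he.trans Sym2.eq_swap) hf hef q r hnd hfp

private lemma crosser_reach {G T : SimpleGraph V} (hTG : T ≤ G) {S : Set (Sym2 V)}
    {x y a b : V} {e : Sym2 V} (he : e = s(a, b))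
    (p : T.Walk x y) (hep : e ∈ p.edges) (hnd : p.edges.Nodup)
    (havoid : ∀ t ∈ p.edges, t ≠ e → t ∉ S)
    (hxyH : (G.deleteEdges S).Adj x y) :
    (G.deleteEdges S).Reachable a b := by
  have hT2H : T.deleteEdges S ≤ G.deleteEdges S := deleteEdges_mono hTG
  rcases walk_split p (he ▸ hep) with ⟨q, r, hqr⟩ | ⟨q, r, hqr⟩
  · rw [hqr, ← he] at hnd
    rw [List.nodup_append, List.nodup_cons] at hnd
    obtain ⟨hqnd, ⟨her, hrnd⟩, hdisj⟩ := hnd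
    have heq : e ∉ q.edges := fun h => hdisj _ h _ List.mem_cons_self rfl
    have hq : ∀ t ∈ q.edges, t ∉ S := fun t ht =>
      havoid t (by rw [hqr, ← he]; exact List.mem_append_left _ ht) (fun hc => heq (hc ▸ ht))
    have hr : ∀ t ∈ r.edges, t ∉ S := fun t ht =>
      havoid t (by rw [hqr, ← he]; exact List.mem_append_right _ (List.mem_cons_of_mem _ ht))
        (fun hc => her (hc ▸ ht))
    exact ((reach_del q hq).mono hT2H).symm.trans
      (hxyH.reachable.trans ((reach_del r hr).mono hT2H).symm)
  · rw [hqr, ← he] at hnd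
    rw [List.nodup_append, List.nodup_cons] at hnd
    obtain ⟨hqnd, ⟨her, hrnd⟩, hdisj⟩ := hnd
    have heq : e ∉ q.edges := fun h => hdisj _ h _ List.mem_cons_self rfl
    have hq : ∀ t ∈ q.edges, t ∉ S := fun t ht =>
      havoid t (by rw [hqr, ← he]; exact List.mem_append_left _ ht) (fun hc => heq (hc ▸ ht))
    have hr : ∀ t ∈ r.edges, t ∉ S := fun t ht =>
      havoid t (by rw [hqr, ← he]; exact List.mem_append_right _ (List.mem_cons_of_mem _ ht))
        (fun hc => her (hc ▸ ht))
    exact ((reach_del r hr).mono hT2H).trans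
      (hxyH.reachable.symm.trans ((reach_del q hq).mono hT2H))
end A5

section A6
variable {V : Type*}
private lemma maincore [Infinite V] {G T : SimpleGraph V}
    (hconn : G.Connected) (hlf : ∀ v : V, (G.neighborSet v).Finite)
    (hend : G.end.Nonempty ∧ G.end.Subsingleton)
    (hTG : T ≤ G) (hTconn : T.Connected) (hTacyc : T.IsAcyclic)
    (hdeg : ∀ v : V, 2 ≤ (T.neighborSet v).ncard)
    (hcore : ∀ e ∈ T.edgeSet,
      {f : Sym2 V | f ∈ G.edgeSet ∧ f ∉ T.edgeSet ∧
        ∃ x y : V, f = s(x, y) ∧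
          ∃ p : T.Walk x y, p.IsPath ∧ e ∈ p.edges}.Infinite)
    (hdeg2 : ∀ v : V, (T.neighborSet v).ncard = 2 →
      ∃ y : V, G.Adj v y ∧ ¬ T.Adj v y ∧
        ∃ p : T.Walk v y, p.IsPath ∧ ∃ w ∈ p.support, 3 ≤ (T.neighborSet w).ncard)
    {e f : Sym2 V} (heT : e ∈ T.edgeSet) (hfG : f ∈ G.edgeSet)
    {a b : V} (hab : e = s(a, b)) :
    (G.deleteEdges {e, f}).Reachable a b := by
  classical
  revert hfG
  induction f using Sym2.ind with
  | _ c d =>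
  intro hfG
  set S : Set (Sym2 V) := {e, s(c, d)} with hSdef
  have hSmem : ∀ t : Sym2 V, t ∈ S ↔ t = e ∨ t = s(c, d) := by intro t; simp [hSdef]
  have heS : e ∈ S := (hSmem e).mpr (Or.inl rfl)
  have hfS : s(c, d) ∈ S := (hSmem _).mpr (Or.inr rfl)
  have hT2H : T.deleteEdges S ≤ G.deleteEdges S := deleteEdges_mono hTG
  have hHadj : ∀ x y : V, G.Adj x y → s(x, y) ∉ T.edgeSet → s(x, y) ≠ s(c, d) →
      (G.deleteEdges S).Adj x y := by
    intro x y hxy hnT hnf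
    rw [deleteEdges_adj]
    refine ⟨hxy, fun hmem => ?_⟩
    rcases (hSmem _).mp hmem with hc | hc
    · exact hnT (by rw [hc]; exact heT)
    · exact hnf hc
  by_cases hef : e = s(c, d)
  · -- degenerate case: the two deleted edges coincide
    obtain ⟨g, hg⟩ := (hcore e heT).nonempty
    obtain ⟨hgG, hgT, x, y, hgxy, p, hp, hep⟩ := hg
    refine crosser_reach hTG hab p hep hp.isTrail.edges_nodup ?_ ?_
    · intro t _ htne hmem
      rcases (hSmem t).mp hmem with hc | hc
      · exact htne hc
      · exact htne (hc.trans hef.symm)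
    · exact hHadj x y (by rw [← mem_edgeSet, ← hgxy]; exact hgG) (hgxy ▸ hgT)
        (fun hc => hgT (by rw [hgxy, hc, ← hef]; exact heT))
  by_cases hA : ∃ x y : V, G.Adj x y ∧ s(x, y) ∉ T.edgeSet ∧ s(x, y) ≠ s(c, d) ∧
      ∃ p : T.Walk x y, p.IsPath ∧ e ∈ p.edges ∧ s(c, d) ∉ p.edges
  · obtain ⟨x, y, hxy, hnT, hnf, p, hp, hep, hfp⟩ := hA
    refine crosser_reach hTG hab p hep hp.isTrail.edges_nodup ?_ (hHadj x y hxy hnT hnf)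
    intro t ht htne hmem
    rcases (hSmem t).mp hmem with hc | hc
    · exact htne hc
    · exact hfp (hc ▸ ht)
  -- choose a crosser g of e distinct from f
  obtain ⟨g, hgmem, hgf⟩ : ∃ g, (g ∈ G.edgeSet ∧ g ∉ T.edgeSet ∧
      ∃ x y : V, g = s(x, y) ∧ ∃ p : T.Walk x y, p.IsPath ∧ e ∈ p.edges) ∧ g ≠ s(c, d) := by
    obtain ⟨g, hg⟩ := ((hcore e heT).diff (Set.finite_singleton s(c, d))).nonempty
    exact ⟨g, hg.1, by simpa using hg.2⟩
  obtain ⟨hgG, hgT, x, y, hgxy, p, hp, hep⟩ := hgmem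
  have hxyG : G.Adj x y := by rw [← mem_edgeSet, ← hgxy]; exact hgG
  have hxyT : s(x, y) ∉ T.edgeSet := hgxy ▸ hgT
  have hxyf : s(x, y) ≠ s(c, d) := hgxy ▸ hgf
  have hfp : s(c, d) ∈ p.edges := by
    by_contra hfp0
    exact hA ⟨x, y, hxyG, hxyT, hxyf, p, hp, hep, hfp0⟩
  have hfT : s(c, d) ∈ T.edgeSet := p.edges_subset_edgeSet hfp
  -- configuration from g
  obtain ⟨a', b', c', d', hea, hfc, hbc, houter⟩ :=
    config hab rfl hef p hp hep hfp
  have hgH : (G.deleteEdges S).Adj x y := hHadj x y hxyG hxyT hxyf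
  have had' : (G.deleteEdges S).Reachable a' d' := by
    rcases houter with ⟨h1, h2⟩ | ⟨h1, h2⟩
    · exact (h1.mono hT2H).symm.trans (hgH.reachable.trans (h2.mono hT2H))
    · exact (h2.mono hT2H).symm.trans (hgH.reachable.symm.trans (h1.mono hT2H))
  have hgoal_of : (G.deleteEdges S).Reachable a' b' → (G.deleteEdges S).Reachable a b := by
    intro h
    rcases Sym2.eq_iff.mp (hea.symm.trans hab) with ⟨rfl, rfl⟩ | ⟨rfl, rfl⟩
    · exact h
    · exact h.symm
  apply hgoal_of
  have hfinish_cd : (G.deleteEdges S).Reachable c d → (G.deleteEdges S).Reachable a' b' := by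
    intro h
    have hcd' : (G.deleteEdges S).Reachable c' d' := by
      rcases Sym2.eq_iff.mp (hfc.symm.trans rfl) with ⟨rfl, rfl⟩ | ⟨rfl, rfl⟩
      · exact h
      · exact h.symm
    exact ((hbc.mono hT2H).trans (hcd'.trans had'.symm)).symm
  by_cases hB : ∃ x' y' : V, G.Adj x' y' ∧ s(x', y') ∉ T.edgeSet ∧
      ∃ p' : T.Walk x' y', p'.IsPath ∧ s(c, d) ∈ p'.edges ∧ e ∉ p'.edges
  · obtain ⟨x', y', hxy', hnT', p', hp', hfp', hep'⟩ := hB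
    apply hfinish_cd
    refine crosser_reach hTG rfl p' hfp' hp'.isTrail.edges_nodup ?_
      (hHadj x' y' hxy' hnT' (fun hc => hnT' (by rw [hc]; exact hfT)))
    intro t ht htne hmem
    rcases (hSmem t).mp hmem with hc | hc
    · exact hep' (hc ▸ ht)
    · exact htne hc
  -- BAD case
  set Y : Set V := {v | (T.deleteEdges S).Reachable v b'} with hYdef
  have hb'Y : b' ∈ Y := Reachable.refl _
  have hc'Y : c' ∈ Y := hbc.symm
  have hTa'b' : T.Adj a' b' := by rw [← mem_edgeSet, ← hea]; exact heT
  have hTc'd' : T.Adj c' d' := by rw [← mem_edgeSet, ← hfc]; exact hfT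
  have ha'Y : a' ∉ Y := fun h => not_reach_del hTacyc hTa'b' (by rw [← hea]; exact heS) h
  have hd'Y : d' ∉ Y := fun h =>
    not_reach_del hTacyc hTc'd' (by rw [← hfc]; exact hfS) (h.trans hbc).symm
  have hclass : ∀ z : V, (T.deleteEdges S).Reachable z a' ∨ (T.deleteEdges S).Reachable z b' ∨
      (T.deleteEdges S).Reachable z c' ∨ (T.deleteEdges S).Reachable z d' := by
    intro z
    obtain ⟨pw⟩ := hTconn.preconnected z a'
    rcases reach_or S pw with h | ⟨x₀, y₀, hx₀, hr⟩
    · exact Or.inl h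
    · rcases (hSmem _).mp hx₀ with h1 | h1
      · rcases Sym2.eq_iff.mp (h1.trans hea) with ⟨rfl, rfl⟩ | ⟨rfl, rfl⟩
        · exact Or.inl hr
        · exact Or.inr (Or.inl hr)
      · rcases Sym2.eq_iff.mp (h1.trans hfc) with ⟨rfl, rfl⟩ | ⟨rfl, rfl⟩
        · exact Or.inr (Or.inr (Or.inl hr))
        · exact Or.inr (Or.inr (Or.inr hr))
  by_cases hbound : ∃ w z : V, G.Adj w z ∧ w ∈ Y ∧ z ∉ Y ∧ s(w, z) ≠ e ∧ s(w, z) ≠ s(c, d)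
  · obtain ⟨w, z, hwz, hwY, hzY, hne, hnf⟩ := hbound
    have hwH : (G.deleteEdges S).Adj w z := by
      rw [deleteEdges_adj]
      refine ⟨hwz, fun hmem => ?_⟩
      rcases (hSmem _).mp hmem with hc | hc
      · exact hne hc
      · exact hnf hc
    have hwb' : (G.deleteEdges S).Reachable w b' := (hwY : (T.deleteEdges S).Reachable w b').mono hT2H
    rcases hclass z with h | h | h | h
    · exact ((h.mono hT2H).symm.trans (hwH.reachable.symm.trans hwb'))
    · exact absurd h hzY
    · exact absurd (h.trans hbc.symm) hzY
    · exact had'.trans ((h.mono hT2H).symm.trans (hwH.reachable.symm.trans hwb'))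
  -- sealed : contradiction with one-endedness
  exfalso
  push_neg at hbound hA hB
  have hseal : ∀ w z : V, G.Adj w z → w ∈ Y → z ∉ Y → s(w, z) = e ∨ s(w, z) = s(c, d) := by
    intro w z h1 h2 h3
    by_contra hcon
    push_neg at hcon
    exact hcon.2 (hbound w z h1 h2 h3 hcon.1)
  have hYinf : Y.Infinite :=
    seal_infinite hTG hTacyc hdeg hdeg2 hea hfc heT hfT hYdef hc'Y ha'Y hd'Y hseal
  set K : Finset V := {a', b', c', d'} with hKdef
  have hsealK_Y : ∀ w z : V, G.Adj w z → w ∈ Y → z ∉ Y → w ∈ (K : Set V) := by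
    intro w z h1 h2 h3
    rcases hseal w z h1 h2 h3 with h | h
    · rcases Sym2.eq_iff.mp (h.trans hea) with ⟨h4, h5⟩ | ⟨h4, h5⟩
      · exact absurd (h4 ▸ h2) ha'Y
      · rw [h4]; simp [hKdef]
    · rcases Sym2.eq_iff.mp (h.trans hfc) with ⟨h4, h5⟩ | ⟨h4, h5⟩
      · rw [h4]; simp [hKdef]
      · exact absurd (h4 ▸ h2) hd'Y
  obtain ⟨C₁, hC₁inf, v₁, hv₁C, hv₁Y⟩ := exists_infinite_comp hconn hlf K hYinf
  have hC₁sub : C₁.supp ⊆ Y := supp_subset_of_sealed hsealK_Y C₁ hv₁C hv₁Y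
  have hXnotY : ∀ v : V, (T.deleteEdges S).Reachable v a' → v ∉ Y := by
    intro v hv hvY
    exact ha'Y (hv.symm.trans hvY)
  by_cases hXZ : (T.deleteEdges S).Reachable a' d'
  · -- two classes : X is sealed as well
    set X : Set V := {v | (T.deleteEdges S).Reachable v a'} with hXdef
    have hsealX : ∀ w z : V, G.Adj w z → w ∈ X → z ∉ X → s(w, z) = e ∨ s(w, z) = s(c, d) := by
      intro w z h1 h2 h3
      have hzY : z ∈ Y := by
        rcases hclass z with h | h | h | h
        · exact absurd h h3
        · exact h
        · exact h.trans hbc.symm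
        · exact absurd (h.trans hXZ.symm) h3
      have hwnY : w ∉ Y := hXnotY w h2
      rcases hseal z w h1.symm hzY hwnY with h | h
      · exact Or.inl (Sym2.eq_swap.trans h)
      · exact Or.inr (Sym2.eq_swap.trans h)
    have hXinf : X.Infinite :=
      seal_infinite hTG hTacyc hdeg hdeg2 (hea.trans Sym2.eq_swap) (hfc.trans Sym2.eq_swap)
        heT hfT hXdef hXZ.symm
        (fun h => ha'Y ((h : (T.deleteEdges S).Reachable b' a').symm.trans hb'Y))
        (fun h => ha'Y ((h : (T.deleteEdges S).Reachable c' a').symm.trans hc'Y))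
        hsealX
    have hsealK_X : ∀ w z : V, G.Adj w z → w ∈ X → z ∉ X → w ∈ (K : Set V) := by
      intro w z h1 h2 h3
      rcases hsealX w z h1 h2 h3 with h | h
      · rcases Sym2.eq_iff.mp (h.trans hea) with ⟨h4, h5⟩ | ⟨h4, h5⟩
        · rw [h4]; simp [hKdef]
        · exact absurd (h4 ▸ h2) (fun hc => ha'Y ((hc : (T.deleteEdges S).Reachable b' a').symm.trans hb'Y))
      · rcases Sym2.eq_iff.mp (h.trans hfc) with ⟨h4, h5⟩ | ⟨h4, h5⟩
        · exact absurd (h4 ▸ h2) (fun hc => ha'Y ((hc : (T.deleteEdges S).Reachable c' a').symm.trans hc'Y))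
        · rw [h4]; simp [hKdef]
    obtain ⟨C₂, hC₂inf, v₂, hv₂C, hv₂X⟩ := exists_infinite_comp hconn hlf K hXinf
    have hC₂sub : C₂.supp ⊆ X := supp_subset_of_sealed hsealK_X C₂ hv₂C hv₂X
    refine two_ends_contra hconn hlf hend.2 K C₁ C₂ hC₁inf hC₂inf (fun hCC => ?_)
    exact hXnotY v₂ (hC₂sub hv₂C) (hC₁sub (hCC ▸ hv₂C))
  · -- three classes : X is infinite since every crosser of e attaches to it
    set X : Set V := {v | (T.deleteEdges S).Reachable v a'} with hXdef
    have ha'c' : ¬ (T.deleteEdges S).Reachable a' c' := fun h => ha'Y (h.trans hbc.symm)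
    have hb'd' : ¬ (T.deleteEdges S).Reachable b' d' := fun h => hd'Y h.symm
    have hXinf : X.Infinite := by
      by_contra hXfin0
      have hXfin : X.Finite := Set.not_infinite.mp hXfin0
      refine hcore e heT (edges_meeting_finite hlf hXfin ?_)
      intro g' hg'
      obtain ⟨hg'G, hg'T, x₀, y₀, hg'xy, p₀, hp₀, hep₀⟩ := hg'
      have hx₀G : G.Adj x₀ y₀ := by rw [← mem_edgeSet, ← hg'xy]; exact hg'G
      have hx₀T : s(x₀, y₀) ∉ T.edgeSet := hg'xy ▸ hg'T
      have hx₀f : s(x₀, y₀) ≠ s(c, d) := fun hc => hx₀T (by rw [hc]; exact hfT)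
      have hfp₀ : s(c, d) ∈ p₀.edges := hA x₀ y₀ hx₀G hx₀T hx₀f p₀ hp₀ hep₀
      obtain ⟨a₀, b₀, c₀, d₀, hea₀, hfc₀, hbc₀, houter₀⟩ :=
        config hab rfl hef p₀ hp₀ hep₀ hfp₀
      -- identify the labels
      have hlab : a₀ = a' ∧ b₀ = b' ∧ c₀ = c' ∧ d₀ = d' := by
        rcases Sym2.eq_iff.mp (hea₀.symm.trans hea) with ⟨h1, h2⟩ | ⟨h1, h2⟩ <;>
          rcases Sym2.eq_iff.mp (hfc₀.symm.trans hfc) with ⟨h3, h4⟩ | ⟨h3, h4⟩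
        · exact ⟨h1, h2, h3, h4⟩
        · rw [h2, h3] at hbc₀; exact absurd hbc₀ hb'd'
        · rw [h2, h3] at hbc₀; exact absurd hbc₀ ha'c'
        · rw [h2, h3] at hbc₀; exact absurd hbc₀ hXZ
      refine ⟨hg'G, ?_⟩
      rcases houter₀ with ⟨h1, h2⟩ | ⟨h1, h2⟩
      · exact ⟨x₀, y₀, hg'xy, by rw [hlab.1] at h1; exact h1⟩
      · exact ⟨y₀, x₀, hg'xy.trans Sym2.eq_swap, by rw [hlab.1] at h2; exact h2⟩
    obtain ⟨C₂, hC₂inf, v₂, hv₂C, hv₂X⟩ := exists_infinite_comp hconn hlf K hXinf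
    refine two_ends_contra hconn hlf hend.2 K C₁ C₂ hC₁inf hC₂inf (fun hCC => ?_)
    exact hXnotY v₂ hv₂X (hC₁sub (hCC ▸ hv₂C))

private lemma anyedge [Infinite V] {G T : SimpleGraph V}
    (hconn : G.Connected) (hlf : ∀ v : V, (G.neighborSet v).Finite)
    (hend : G.end.Nonempty ∧ G.end.Subsingleton)
    (hTG : T ≤ G) (hTconn : T.Connected) (hTacyc : T.IsAcyclic)
    (hdeg : ∀ v : V, 2 ≤ (T.neighborSet v).ncard)
    (hcore : ∀ e ∈ T.edgeSet,
      {f : Sym2 V | f ∈ G.edgeSet ∧ f ∉ T.edgeSet ∧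
        ∃ x y : V, f = s(x, y) ∧
          ∃ p : T.Walk x y, p.IsPath ∧ e ∈ p.edges}.Infinite)
    (hdeg2 : ∀ v : V, (T.neighborSet v).ncard = 2 →
      ∃ y : V, G.Adj v y ∧ ¬ T.Adj v y ∧
        ∃ p : T.Walk v y, p.IsPath ∧ ∃ w ∈ p.support, 3 ≤ (T.neighborSet w).ncard)
    {e f : Sym2 V} (heG : e ∈ G.edgeSet) (hfG : f ∈ G.edgeSet)
    {x y : V} (hxy : e = s(x, y)) :
    (G.deleteEdges {e, f}).Reachable x y := by
  classical
  by_cases heT : e ∈ T.edgeSet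
  · exact maincore hconn hlf hend hTG hTconn hTacyc hdeg hcore hdeg2 heT hfG hxy
  · by_cases hfT : f ∈ T.edgeSet
    · revert hfG hfT
      induction f using Sym2.ind with
      | _ c d =>
      intro hfG hfT
      have hcd : (G.deleteEdges {e, s(c, d)}).Reachable c d := by
        have h := maincore hconn hlf hend hTG hTconn hTacyc hdeg hcore hdeg2 hfT heG
          (rfl : s(c, d) = s(c, d))
        rwa [Set.pair_comm] at h
      obtain ⟨w0⟩ := hTconn.preconnected x y
      have hppath : (w0.toPath : T.Walk x y).IsPath := w0.toPath.2
      set p : T.Walk x y := ↑w0.toPath with hpdef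
      have hSm : ∀ t : Sym2 V, t ∈ ({e, s(c, d)} : Set (Sym2 V)) ↔ t = e ∨ t = s(c, d) := by
        intro t; simp
      by_cases hfp : s(c, d) ∈ p.edges
      · rcases walk_split p hfp with ⟨q, r, hqr⟩ | ⟨q, r, hqr⟩
        · have hnd := hppath.isTrail.edges_nodup
          rw [hqr, List.nodup_append, List.nodup_cons] at hnd
          obtain ⟨hqnd, ⟨hfr, hrnd⟩, hdisj⟩ := hnd
          have hfq : s(c, d) ∉ q.edges := fun h => hdisj _ h _ List.mem_cons_self rfl
          have hq : ∀ t ∈ q.edges, t ∉ ({e, s(c, d)} : Set (Sym2 V)) := by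
            intro t ht hmem
            rcases (hSm t).mp hmem with rfl | rfl
            · exact heT (q.edges_subset_edgeSet ht)
            · exact hfq ht
          have hr : ∀ t ∈ r.edges, t ∉ ({e, s(c, d)} : Set (Sym2 V)) := by
            intro t ht hmem
            rcases (hSm t).mp hmem with rfl | rfl
            · exact heT (r.edges_subset_edgeSet ht)
            · exact hfr ht
          exact ((reach_del q hq).mono (deleteEdges_mono hTG)).trans
            (hcd.trans ((reach_del r hr).mono (deleteEdges_mono hTG)))
        · have hnd := hppath.isTrail.edges_nodup
          rw [hqr, List.nodup_append, List.nodup_cons] at hnd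
          obtain ⟨hqnd, ⟨hfr, hrnd⟩, hdisj⟩ := hnd
          have hfq : s(c, d) ∉ q.edges := fun h => hdisj _ h _ List.mem_cons_self rfl
          have hq : ∀ t ∈ q.edges, t ∉ ({e, s(c, d)} : Set (Sym2 V)) := by
            intro t ht hmem
            rcases (hSm t).mp hmem with rfl | rfl
            · exact heT (q.edges_subset_edgeSet ht)
            · exact hfq ht
          have hr : ∀ t ∈ r.edges, t ∉ ({e, s(c, d)} : Set (Sym2 V)) := by
            intro t ht hmem
            rcases (hSm t).mp hmem with rfl | rfl
            · exact heT (r.edges_subset_edgeSet ht)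
            · exact hfr ht
          exact ((reach_del q hq).mono (deleteEdges_mono hTG)).trans
            (hcd.symm.trans ((reach_del r hr).mono (deleteEdges_mono hTG)))
      · refine (reach_del p ?_).mono (deleteEdges_mono hTG)
        intro t ht hmem
        rcases (hSm t).mp hmem with rfl | rfl
        · exact heT (p.edges_subset_edgeSet ht)
        · exact hfp ht
    · obtain ⟨w0⟩ := hTconn.preconnected x y
      refine (reach_del w0 ?_).mono (deleteEdges_mono hTG)
      intro t ht hmem
      have htT := w0.edges_subset_edgeSet ht
      rcases (by simpa using hmem : t = e ∨ t = f) with rfl | rfl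
      · exact heT htT
      · exact hfT htT

end A6

/-- Let `T` be a spanning tree of an infinite, connected, locally finite,
one-ended graph `G` such that: (i) every vertex has `T`-degree at least 2; (ii) every
edge of `T` lies in infinitely many fundamental cycles; (iii) every vertex of `T`-degree
exactly 2 is incident to a non-tree edge of `G` whose fundamental cycle meets a vertex of
`T`-degree at least 3. Then `G` is 3-edge-connected. -/
theorem stmt5 {V : Type*} [Infinite V] (G : SimpleGraph V)
    (hconn : G.Connected) (hlf : ∀ v : V, (G.neighborSet v).Finite)
    (hend : G.end.Nonempty ∧ G.end.Subsingleton)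
    (T : SimpleGraph V) (hTG : T ≤ G) (hTconn : T.Connected) (hTacyc : T.IsAcyclic)
    (hdeg : ∀ v : V, 2 ≤ (T.neighborSet v).ncard)
    (hcore : ∀ e ∈ T.edgeSet,
      {f : Sym2 V | f ∈ G.edgeSet ∧ f ∉ T.edgeSet ∧
        ∃ x y : V, f = s(x, y) ∧
          ∃ p : T.Walk x y, p.IsPath ∧ e ∈ p.edges}.Infinite)
    (hdeg2 : ∀ v : V, (T.neighborSet v).ncard = 2 →
      ∃ y : V, G.Adj v y ∧ ¬ T.Adj v y ∧
        ∃ p : T.Walk v y, p.IsPath ∧ ∃ w ∈ p.support, 3 ≤ (T.neighborSet w).ncard) :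
    ∀ u v : V, ∀ e ∈ G.edgeSet, ∀ f ∈ G.edgeSet,
      (G.deleteEdges {e, f}).Reachable u v := by
  classical
  intro u v e he f hf
  have hedge : ∀ x y : V, G.Adj x y → (G.deleteEdges {e, f}).Reachable x y := by
    intro x y hxy
    by_cases h1 : s(x, y) = e
    · exact anyedge hconn hlf hend hTG hTconn hTacyc hdeg hcore hdeg2 he hf h1.symm
    · by_cases h2 : s(x, y) = f
      · have h := anyedge hconn hlf hend hTG hTconn hTacyc hdeg hcore hdeg2 hf he h2.symm
        rwa [Set.pair_comm] at h
      · refine Adj.reachable ?_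
        rw [deleteEdges_adj]
        exact ⟨hxy, by simp [h1, h2]⟩
  obtain ⟨w0⟩ := hconn.preconnected u v
  induction w0 with
  | nil => exact Reachable.refl _
  | cons hadj p ih => exact (hedge _ _ hadj).trans ih
end

section
/- Let G be an infinite, connected, locally finite simple graph with exactly one end, and let T be a spanning tree of G whose space of ends is infinite. Call an edge f of G not in T redundant if every vertex of the unique path in T between the endpoints of f (including both endpoints) has degree exactly 2 in T (equivalently, the endpoints of f lie on a common segment of T, a maximal path all of whose vertices have T-degree 2). Then the graph obtained from G by deleting all redundant edges is connected and has exactly one end. -/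
open SimpleGraph CategoryTheory Opposite

namespace Stmt7Aux
variable {V : Type*}


/-- Two vertices are connected by a walk avoiding `K`. -/
def Conn (A : SimpleGraph V) (K : Set V) (x y : V) : Prop :=
  ∃ w : A.Walk x y, ∀ z ∈ w.support, z ∉ K

lemma Conn.refl {A : SimpleGraph V} {K : Set V} {x : V} (hx : x ∉ K) : Conn A K x x :=
  ⟨Walk.nil, by simpa using hx⟩

lemma Conn.symm {A : SimpleGraph V} {K : Set V} {x y : V} (h : Conn A K x y) : Conn A K y x := by
  obtain ⟨w, hw⟩ := h
  exact ⟨w.reverse, fun z hz => hw z (by simpa [Walk.support_reverse] using hz)⟩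

lemma Conn.trans {A : SimpleGraph V} {K : Set V} {x y z : V} (h : Conn A K x y)
    (h' : Conn A K y z) : Conn A K x z := by
  obtain ⟨w, hw⟩ := h
  obtain ⟨w', hw'⟩ := h'
  refine ⟨w.append w', fun u hu => ?_⟩
  rcases (Walk.mem_support_append_iff _ _).1 hu with hu | hu
  · exact hw u hu
  · exact hw' u hu

lemma Conn.mono {A B : SimpleGraph V} (hAB : A ≤ B) {K : Set V} {x y : V} (h : Conn A K x y) :
    Conn B K x y := by
  obtain ⟨w, hw⟩ := h
  refine ⟨w.transfer B (fun e he => edgeSet_mono hAB (w.edges_subset_edgeSet he)), fun z hz => ?_⟩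
  rw [Walk.support_transfer] at hz
  exact hw z hz

lemma Conn.mem_start {A : SimpleGraph V} {K : Set V} {x y : V} (h : Conn A K x y) : x ∉ K := by
  obtain ⟨w, hw⟩ := h; exact hw x w.start_mem_support

lemma induce_walk_conn {A : SimpleGraph V} {K : Set V} :
    ∀ {a b : ↑Kᶜ} (_ : (A.induce Kᶜ).Walk a b), Conn A K a.1 b.1 := by
  intro a b w
  induction w with
  | @nil a => exact Conn.refl a.2
  | @cons a b c h p ih =>
    have hadj : A.Adj a.1 b.1 := h
    refine Conn.trans ⟨Walk.cons hadj Walk.nil, ?_⟩ ih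
    intro z hz
    simp only [Walk.support_cons, Walk.support_nil, List.mem_cons, List.mem_singleton,
      List.not_mem_nil, or_false] at hz
    rcases hz with rfl | rfl
    · exact a.2
    · exact b.2

/-- `Conn` is the same as equality of `componentComplMk`s. -/
lemma conn_iff_mk_eq {A : SimpleGraph V} {K : Set V} {x y : V} (hx : x ∉ K) (hy : y ∉ K) :
    Conn A K x y ↔ A.componentComplMk hx = A.componentComplMk hy := by
  constructor
  · rintro ⟨w, hw⟩
    induction w with
    | nil => rfl
    | @cons a b c h p ih =>
      have hb : b ∉ K := hw b (by simp)
      have h1 : A.componentComplMk hx = A.componentComplMk hb :=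
        componentComplMk_eq_of_adj A hx hb h
      exact h1.trans (ih hb hy (fun z hz => hw z (by simp [hz])))
  · intro h
    have h' : (A.induce Kᶜ).Reachable ⟨x, hx⟩ ⟨y, hy⟩ := by
      rwa [ConnectedComponent.eq] at h
    obtain ⟨w⟩ := h'
    exact induce_walk_conn w



/-- The "forced path" lemma: in a graph where every vertex of a path `r` has degree exactly 2,
any path `q` starting at the same vertex, entering from the same previous vertex `b`,
and either long enough or ending at a vertex of degree ≠ 2, must contain all of `r`. -/
lemma forced_ind {T : SimpleGraph V} {wv : V} :
    ∀ {a z : V} (r : T.Walk a z) (q : T.Walk a wv) (b : V), r.IsPath → q.IsPath →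
      (∀ x ∈ r.support, (T.neighborSet x).ncard = 2) →
      ((T.neighborSet wv).ncard ≠ 2 ∨ r.length ≤ q.length) →
      T.Adj b a → b ∉ r.support → b ∉ q.support →
      ∀ x ∈ r.support, x ∈ q.support := by
  intro a z r
  induction r with
  | @nil a =>
    intro q b _ _ _ _ _ _ _ x hx
    rw [Walk.mem_support_nil_iff] at hx
    subst hx
    exact q.start_mem_support
  | @cons a c z h r ih =>
    intro q b hrp hqp hdeg hterm hba hbr hbq
    have hdega : (T.neighborSet a).ncard = 2 := hdeg a (Walk.start_mem_support _)
    cases q with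
    | nil =>
      rcases hterm with hterm | hterm
      · exact absurd hdega hterm
      · simp [Walk.length_cons] at hterm
    | @cons a d wv h' q' =>
      -- show d = c
      have hbc : b ≠ c := by
        intro hbc; subst hbc
        exact hbr (by simp [Walk.support_cons, Walk.start_mem_support])
      have hbd : b ≠ d := by
        intro hbd; subst hbd
        exact hbq (by simp [Walk.support_cons, Walk.start_mem_support])
      obtain ⟨x₀, y₀, hxy, hset⟩ := Set.ncard_eq_two.1 hdega
      have hbmem : b ∈ T.neighborSet a := hba.symm
      have hcmem : c ∈ T.neighborSet a := h
      have hdmem : d ∈ T.neighborSet a := h'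
      rw [hset] at hbmem hcmem hdmem
      have hdc : d = c := by
        rcases hbmem with rfl | rfl <;> rcases hcmem with rfl | rfl <;>
          rcases hdmem with rfl | rfl <;> simp_all
      subst hdc
      have hrp' : r.IsPath := hrp.of_cons
      have hqp' : q'.IsPath := hqp.of_cons
      have har : a ∉ r.support := by
        have := hrp.support_nodup
        simp only [Walk.support_cons, List.nodup_cons] at this
        exact this.1
      have haq : a ∉ q'.support := by
        have := hqp.support_nodup
        simp only [Walk.support_cons, List.nodup_cons] at this
        exact this.1
      have hsub := ih q' a hrp' hqp'
        (fun x hx => hdeg x (by simp [Walk.support_cons, hx]))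
        (by rcases hterm with hterm | hterm
            · exact Or.inl hterm
            · right; simpa [Walk.length_cons] using hterm)
        h har haq
      intro x hx
      simp only [Walk.support_cons, List.mem_cons] at hx ⊢
      rcases hx with rfl | hx
      · left; rfl
      · right; exact hsub x hx




/-- In an acyclic graph, two neighbors of `v₀` connected outside `v₀` are equal. -/
lemma unique_dir {T : SimpleGraph V} (hT : T.IsAcyclic) {v₀ c d : V} (hc : T.Adj v₀ c)
    (hd : T.Adj v₀ d) (h : Conn T {v₀} c d) : c = d := by
  by_contra hne
  have hbridge := (isAcyclic_iff_forall_adj_isBridge.1 hT) hc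
  rw [isBridge_iff] at hbridge
  refine hbridge ?_
  rw [reachable_delete_edges_iff_exists_walk]
  obtain ⟨w, hw⟩ := h
  refine ⟨Walk.cons hd w.reverse, ?_⟩
  intro he
  simp only [Walk.edges_cons, List.mem_cons] at he
  rcases he with he | he
  · rw [Sym2.congr_right] at he
    exact hne he.symm.symm
  · have : v₀ ∈ w.reverse.support := Walk.fst_mem_support_of_mem_edges _ he
    rw [Walk.support_reverse, List.mem_reverse] at this
    exact hw v₀ this rfl

lemma takeUntil_cons [DecidableEq V] {T : SimpleGraph V} {v c z u : V} (p : T.Walk c z)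
    (h : T.Adj v c) (hu : u ∈ (Walk.cons h p).support) (hne : v ≠ u) (hu' : u ∈ p.support) :
    (Walk.cons h p).takeUntil u hu = Walk.cons h (p.takeUntil u hu') := by
  simp [Walk.takeUntil, dif_neg hne]

/-- If `m` does not occur before `x` on a path, then `x` occurs before `m`. -/
lemma mem_takeUntil_of_not_mem_takeUntil [DecidableEq V] {T : SimpleGraph V} :
    ∀ {v y : V} (p : T.Walk v y) {x m : V} (hx : x ∈ p.support) (hm : m ∈ p.support),
      m ∉ (p.takeUntil x hx).support → x ∈ (p.takeUntil m hm).support := by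
  intro v y p
  induction p with
  | @nil v =>
    intro x m hx hm h
    rw [Walk.mem_support_nil_iff] at hx
    subst hx
    exact Walk.start_mem_support _
  | @cons v c z h p ih =>
    intro x m hx hm hnot
    by_cases hvx : v = x
    · subst hvx
      exact Walk.start_mem_support _
    by_cases hvm : v = m
    · subst hvm
      exact absurd (Walk.start_mem_support _) hnot
    have hx' : x ∈ p.support := by
      simp only [Walk.support_cons, List.mem_cons] at hx
      rcases hx with rfl | hx'
      · exact absurd rfl hvx
      · exact hx'
    have hm' : m ∈ p.support := by
      simp only [Walk.support_cons, List.mem_cons] at hm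
      rcases hm with rfl | hm'
      · exact absurd rfl hvm
      · exact hm'
    rw [takeUntil_cons p h hx hvx hx'] at hnot
    rw [takeUntil_cons p h hm hvm hm']
    simp only [Walk.support_cons, List.mem_cons] at hnot ⊢
    right
    exact ih hx' hm' (fun hc => hnot (Or.inr hc))

/-- Supports of two paths with the same endpoints in an acyclic graph coincide. -/
lemma support_eq_of_acyclic {T : SimpleGraph V} (hT : T.IsAcyclic) {u v : V}
    {p q : T.Walk u v} (hp : p.IsPath) (hq : q.IsPath) : p.support = q.support := by
  have := hT.path_unique ⟨p, hp⟩ ⟨q, hq⟩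
  exact congrArg (fun r : T.Path u v => r.1.support) this




/-- The componentCompls chosen by an end are all infinite (universe-polymorphic version). -/
lemma end_supp_infinite {A : SimpleGraph V} (e : A.end) (K : (Finset V)ᵒᵖ) :
    (e.val K).supp.Infinite := by
  refine (e.val K).infinite_iff_in_all_ranges.mpr (fun L h => ?_)
  exact ⟨e.val (Opposite.op L), e.prop (CategoryTheory.opHomOfLE h)⟩

/-- König-type lemma: every infinite component outside a finite set is chosen by some end. -/
lemma exists_end_eval [Infinite V] (A : SimpleGraph V) [LocallyFinite A]
    [Fact A.Preconnected] (K : Finset V) (C : A.ComponentCompl ↑K)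
    (hC : C.supp.Infinite) : ∃ e : A.end, e.val (op K) = C := by
  classical
  set F := A.componentComplFunctor with hF
  haveI : ∀ j : (Finset V)ᵒᵖ, Finite (F.obj j) := fun j => A.componentCompl_finite j.unop
  have hML : F.IsMittagLeffler :=
    F.isMittagLeffler_of_exists_finite_range (fun j => ⟨j, 𝟙 j, Set.toFinite _⟩)
  haveI : ∀ j : (Finset V)ᵒᵖ, Nonempty (F.obj j) := fun j =>
    A.componentCompl_nonempty_of_infinite j.unop
  haveI hne : ∀ j : (Finset V)ᵒᵖ, Nonempty (F.toEventualRanges.obj j) := fun j =>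
    F.toEventualRanges_nonempty hML j
  have hsur := F.surjective_toEventualRanges hML
  have hCev : C ∈ F.eventualRange (op K) :=
    (A.infinite_iff_in_eventualRange C).1 hC
  obtain ⟨sec, hsec⟩ :=
    F.toEventualRanges.eval_section_surjective_of_surjective hsur (op K) ⟨C, hCev⟩
  refine ⟨F.toEventualRangesSectionsEquiv sec, ?_⟩
  have h1 : (F.toEventualRangesSectionsEquiv sec).val (op K) = (sec.val (op K)).val := rfl
  rw [h1]
  exact congrArg Subtype.val hsec

/-- If beyond some finite set all vertices are `Conn`-related, the end space is subsingleton. -/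
lemma subsingleton_of_conn (A : SimpleGraph V)
    (h : ∀ K : Finset V, ∃ K' : Finset V,
      ∀ x y : V, x ∉ (K' : Set V) → y ∉ (K' : Set V) → Conn A (K : Set V) x y) :
    A.end.Subsingleton := by
  classical
  rintro s hs t ht
  funext K
  obtain ⟨K', hK'⟩ := h K.unop
  set M : Finset V := K.unop ∪ K' with hM
  have hKM : K.unop ⊆ M := Finset.subset_union_left
  obtain ⟨x, hxM, hxmk⟩ := (s (op M)).exists_eq_mk
  obtain ⟨y, hyM, hymk⟩ := (t (op M)).exists_eq_mk
  have hxK' : x ∉ (K' : Set V) := fun hc => hxM (by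
    simp only [hM, Finset.coe_union, Set.mem_union]; exact Or.inr hc)
  have hyK' : y ∉ (K' : Set V) := fun hc => hyM (by
    simp only [hM, Finset.coe_union, Set.mem_union]; exact Or.inr hc)
  have hxK : x ∉ (K.unop : Set V) := fun hc => hxM (by
    simp only [hM, Finset.coe_union, Set.mem_union]; exact Or.inl hc)
  have hyK : y ∉ (K.unop : Set V) := fun hc => hyM (by
    simp only [hM, Finset.coe_union, Set.mem_union]; exact Or.inl hc)
  have hconn := hK' x y hxK' hyK'
  have hmk : A.componentComplMk hxK = A.componentComplMk hyK :=
    (conn_iff_mk_eq hxK hyK).1 hconn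
  have hsK : s K = A.componentComplMk hxK := by
    rw [← hs (CategoryTheory.opHomOfLE hKM : op M ⟶ K), ← hxmk]
    rfl
  have htK : t K = A.componentComplMk hyK := by
    rw [← ht (CategoryTheory.opHomOfLE hKM : op M ⟶ K), ← hymk]
    rfl
  rw [hsK, htK, hmk]

/-- In a one-ended graph, outside a suitable finite enlargement of `L`,
all vertices are connected avoiding `L`. -/
lemma one_end_conn [Infinite V] (A : SimpleGraph V) [LocallyFinite A] [Fact A.Preconnected]
    (hne : A.end.Nonempty) (hsub : A.end.Subsingleton) (L : Finset V) :
    ∃ L' : Finset V, L ⊆ L' ∧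
      ∀ x y : V, x ∉ (L' : Set V) → y ∉ (L' : Set V) → Conn A (L : Set V) x y := by
  classical
  obtain ⟨e, he⟩ := hne
  set C := e (op L) with hC
  haveI : Finite (A.ComponentCompl ↑L) := A.componentCompl_finite L
  have hDfin : ∀ D : A.ComponentCompl ↑L, D ≠ C → D.supp.Finite := by
    intro D hD
    by_contra hinf
    obtain ⟨e', he'⟩ := exists_end_eval A L D hinf
    have : e'.val = e := hsub e'.prop he
    exact hD (by rw [← he', this])
  have hPfin : {v : V | ∃ h : v ∉ (L : Set V), A.componentComplMk h ≠ C}.Finite := by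
    have hsub2 : {v : V | ∃ h : v ∉ (L : Set V), A.componentComplMk h ≠ C} ⊆
        ⋃ D ∈ {D : A.ComponentCompl ↑L | D ≠ C}, D.supp := by
      rintro v ⟨hv, hne'⟩
      exact Set.mem_biUnion hne' (A.componentComplMk_mem hv)
    exact Set.Finite.subset (Set.Finite.biUnion (Set.toFinite _) (fun D hD => hDfin D hD)) hsub2
  refine ⟨L ∪ hPfin.toFinset, Finset.subset_union_left, ?_⟩
  intro x y hx hy
  simp only [Finset.coe_union, Set.mem_union, Set.Finite.coe_toFinset, not_or,
    Set.mem_setOf_eq, not_exists] at hx hy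
  obtain ⟨hxL, hxP⟩ := hx
  obtain ⟨hyL, hyP⟩ := hy
  have hxC : A.componentComplMk hxL = C := by
    by_contra hcon; exact (hxP hxL) hcon
  have hyC : A.componentComplMk hyL = C := by
    by_contra hcon; exact (hyP hyL) hcon
  exact (conn_iff_mk_eq hxL hyL).2 (hxC.trans hyC.symm)


/-- A connected acyclic graph all of whose vertices have degree 2 has finitely many ends. -/
lemma deg2_end_finite [Infinite V] {T : SimpleGraph V} (hconn : T.Connected)
    (hacyc : T.IsAcyclic) (hdeg : ∀ v : V, (T.neighborSet v).ncard = 2) :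
    T.end.Finite := by
  classical
  have hnf : ∀ v, (T.neighborSet v).Finite := by
    intro v
    by_contra h
    have := Set.Infinite.ncard h
    rw [hdeg v] at this
    exact two_ne_zero this
  haveI : LocallyFinite T := fun v => (hnf v).fintype
  haveI : Fact T.Preconnected := ⟨hconn.preconnected⟩
  have v₀ : V := Classical.arbitrary V
  set pth : ∀ x : V, T.Path v₀ x := fun x => ((hconn.preconnected v₀ x).some.toPath) with hpth
  -- the key comparability claim
  have claim : ∀ x y : V, x ≠ v₀ → y ≠ v₀ → Conn T {v₀} x y →
      y ∉ (pth x).val.support → x ∈ (pth y).val.support := by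
    intro x y hx hy hcxy hynot
    obtain ⟨c, h1, r, hrp, hconsx⟩ : ∃ (c : V) (h : T.Adj v₀ c) (r : T.Walk c x),
        (Walk.cons h r).IsPath ∧ (pth x).val = Walk.cons h r := by
      rcases hw : (pth x).val with _ | ⟨h1, r⟩
      · exact absurd rfl hx
      · exact ⟨_, h1, r, hw ▸ (pth x).prop, rfl⟩
    obtain ⟨d, h2, q, hqp, hconsy⟩ : ∃ (d : V) (h : T.Adj v₀ d) (q : T.Walk d y),
        (Walk.cons h q).IsPath ∧ (pth y).val = Walk.cons h q := by
      rcases hw : (pth y).val with _ | ⟨h2, q⟩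
      · exact absurd rfl hy
      · exact ⟨_, h2, q, hw ▸ (pth y).prop, rfl⟩
    have hv0r : v₀ ∉ r.support := by
      have := hrp.support_nodup
      simp only [Walk.support_cons, List.nodup_cons] at this
      exact this.1
    have hv0q : v₀ ∉ q.support := by
      have := hqp.support_nodup
      simp only [Walk.support_cons, List.nodup_cons] at this
      exact this.1
    have hcx : Conn T {v₀} c x := ⟨r, fun z hz hzv => hv0r (by rwa [hzv] at hz)⟩
    have hdy : Conn T {v₀} d y := ⟨q, fun z hz hzv => hv0q (by rwa [hzv] at hz)⟩
    have hcd : c = d := unique_dir hacyc h1 h2 ((hcx.trans hcxy).trans hdy.symm)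
    subst hcd
    rcases le_total r.length q.length with hlen | hlen
    · have hsub := forced_ind r q v₀ hrp.of_cons hqp.of_cons
        (fun z _ => hdeg z) (Or.inr hlen) h1 hv0r hv0q
      rw [hconsy]
      simp only [Walk.support_cons, List.mem_cons]
      exact Or.inr (hsub x r.end_mem_support)
    · have hsub := forced_ind q r v₀ hqp.of_cons hrp.of_cons
        (fun z _ => hdeg z) (Or.inr hlen) h1 hv0q hv0r
      exfalso
      apply hynot
      rw [hconsx]
      simp only [Walk.support_cons, List.mem_cons]
      exact Or.inr (hsub y q.end_mem_support)
  -- injectivity of evaluation at {v₀}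
  have hinj : ∀ s ∈ T.end, ∀ t ∈ T.end,
      s (op ({v₀} : Finset V)) = t (op ({v₀} : Finset V)) → s = t := by
    intro s hs t ht hv0
    funext K
    set M : Finset V := insert v₀ K.unop with hM
    have hKM : K.unop ⊆ M := Finset.subset_insert _ _
    have h0M : ({v₀} : Finset V) ⊆ M := by
      intro z hz
      rw [Finset.mem_singleton] at hz
      subst hz
      exact Finset.mem_insert_self _ _
    suffices hDD : s (op M) = t (op M) by
      rw [← hs (CategoryTheory.opHomOfLE hKM : op M ⟶ K),
          ← ht (CategoryTheory.opHomOfLE hKM : op M ⟶ K)]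
      exact congrArg _ hDD
    have hD1inf : (s (op M)).supp.Infinite :=
      end_supp_infinite (⟨s, hs⟩ : T.end) (op M)
    have hD2inf : (t (op M)).supp.Infinite :=
      end_supp_infinite (⟨t, ht⟩ : T.end) (op M)
    have hhom1 := hs (CategoryTheory.opHomOfLE h0M : op M ⟶ op ({v₀} : Finset V))
    have hhom2 := ht (CategoryTheory.opHomOfLE h0M : op M ⟶ op ({v₀} : Finset V))
    have hsupp1 : (s (op M)).supp ⊆ (s (op ({v₀} : Finset V))).supp := by
      rw [← hhom1]
      exact ComponentCompl.subset_hom _ (Finset.coe_subset.mpr h0M)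
    have hsupp2 : (t (op M)).supp ⊆ (s (op ({v₀} : Finset V))).supp := by
      rw [hv0, ← hhom2]
      exact ComponentCompl.subset_hom _ (Finset.coe_subset.mpr h0M)
    set W : Finset V := M.biUnion (fun m => (pth m).val.support.toFinset) with hW
    obtain ⟨x', hx'D, hx'W⟩ := (hD1inf.diff (W.finite_toSet)).nonempty
    obtain ⟨y', hy'D, hy'W⟩ :=
      (hD2inf.diff ((W ∪ (pth x').val.support.toFinset).finite_toSet)).nonempty
    simp only [Finset.coe_union, Set.mem_union, not_or, List.coe_toFinset] at hy'W
    obtain ⟨hy'W, hy'px⟩ := hy'W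
    obtain ⟨hx'M, hx'mk⟩ := hx'D
    obtain ⟨hy'M, hy'mk⟩ := hy'D
    have hx'v0 : x' ≠ v₀ := fun h => hx'M (by rw [h]; exact Finset.mem_insert_self _ _)
    have hy'v0 : y' ≠ v₀ := fun h => hy'M (by rw [h]; exact Finset.mem_insert_self _ _)
    -- x' and y' lie in the same component of T minus v₀
    have hx'nv : x' ∉ (({v₀} : Finset V) : Set V) := by simp [hx'v0]
    have hy'nv : y' ∉ (({v₀} : Finset V) : Set V) := by simp [hy'v0]
    have hx'C : T.componentComplMk hx'nv = s (op ({v₀} : Finset V)) := by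
      rw [← hhom1, ← hx'mk]
      rfl
    have hy'C : T.componentComplMk hy'nv = s (op ({v₀} : Finset V)) := by
      rw [hv0, ← hhom2, ← hy'mk]
      rfl
    have hconn0 : Conn T (({v₀} : Finset V) : Set V) x' y' :=
      (conn_iff_mk_eq hx'nv hy'nv).2 (hx'C.trans hy'C.symm)
    rw [Finset.coe_singleton] at hconn0
    have hx'iny : x' ∈ (pth y').val.support := claim x' y' hx'v0 hy'v0 hconn0 (by
      intro hc
      exact hy'px hc)
    have hr2p : (pth y').val.IsPath := (pth y').prop
    have havoid : ∀ z ∈ ((pth y').val.dropUntil x' hx'iny).support, z ∉ (M : Set V) := by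
      intro m hm2 hmM
      have hmne : m ≠ x' := by rintro rfl; exact hx'M hmM
      have hmr2 : m ∈ (pth y').val.support := (pth y').val.support_dropUntil_subset hx'iny hm2
      have hspec := (pth y').val.take_spec hx'iny
      have hnodup : (((pth y').val.takeUntil x' hx'iny).support ++
          ((pth y').val.dropUntil x' hx'iny).support.tail).Nodup := by
        rw [← Walk.support_append, hspec]
        exact hr2p.support_nodup
      have hmtail : m ∈ ((pth y').val.dropUntil x' hx'iny).support.tail := by
        have hcons := Walk.support_eq_cons ((pth y').val.dropUntil x' hx'iny)
        rw [hcons, List.mem_cons] at hm2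
        rcases hm2 with rfl | h
        · exact absurd rfl hmne
        · exact h
      have hmtake : m ∉ ((pth y').val.takeUntil x' hx'iny).support :=
        fun hc => (List.disjoint_of_nodup_append hnodup) hc hmtail
      have hx'take := mem_takeUntil_of_not_mem_takeUntil (pth y').val hx'iny hmr2 hmtake
      have hsupp : ((pth y').val.takeUntil m hmr2).support = (pth m).val.support :=
        support_eq_of_acyclic hacyc (hr2p.takeUntil hmr2) (pth m).prop
      apply hx'W
      have hx'm : x' ∈ (pth m).val.support := hsupp ▸ hx'take
      exact Finset.mem_coe.2 (Finset.mem_biUnion.2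
        ⟨m, Finset.mem_coe.1 hmM, List.mem_toFinset.2 hx'm⟩)
    have hconnM : Conn T (M : Set V) x' y' := ⟨(pth y').val.dropUntil x' hx'iny, havoid⟩
    have hmkeq := (conn_iff_mk_eq hx'M hy'M).1 hconnM
    rw [hx'mk, hy'mk] at hmkeq
    exact hmkeq
  haveI : ∀ J : (Finset V)ᵒᵖ, Finite (T.componentComplFunctor.obj J) :=
    fun J => T.componentCompl_finite J.unop
  have hinj' : Function.Injective (fun e : T.end => e.val (op ({v₀} : Finset V))) := by
    intro e1 e2 h
    exact Subtype.ext (hinj e1.val e1.prop e2.val e2.prop h)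
  rw [← Set.finite_coe_iff]
  exact Finite.of_injective _ hinj'

end Stmt7Aux

open Stmt7Aux

/-- Let `T` be a spanning tree, with infinitely many ends, of an infinite,
connected, locally finite, one-ended graph `G`. A non-tree edge `s(u, v)` of `G` is
redundant if every vertex of the unique `T`-path between `u` and `v` has `T`-degree
exactly 2. Then deleting all redundant edges from `G` yields a connected graph with
exactly one end. -/
theorem stmt7 {V : Type*} [Infinite V] (G : SimpleGraph V)
    (hconn : G.Connected) (hlf : ∀ v : V, (G.neighborSet v).Finite)
    (hend : G.end.Nonempty ∧ G.end.Subsingleton)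
    (T : SimpleGraph V) (hTG : T ≤ G) (hTconn : T.Connected) (hTacyc : T.IsAcyclic)
    (hTends : T.end.Infinite) :
    ((G.deleteEdges
        {f : Sym2 V | f ∈ G.edgeSet ∧ f ∉ T.edgeSet ∧
          ∃ u v : V, f = s(u, v) ∧
            ∃ p : T.Walk u v, p.IsPath ∧
              ∀ w ∈ p.support, (T.neighborSet w).ncard = 2}).Connected ∧
      (G.deleteEdges
        {f : Sym2 V | f ∈ G.edgeSet ∧ f ∉ T.edgeSet ∧
          ∃ u v : V, f = s(u, v) ∧
            ∃ p : T.Walk u v, p.IsPath ∧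
              ∀ w ∈ p.support, (T.neighborSet w).ncard = 2}).end.Nonempty ∧
      (G.deleteEdges
        {f : Sym2 V | f ∈ G.edgeSet ∧ f ∉ T.edgeSet ∧
          ∃ u v : V, f = s(u, v) ∧
            ∃ p : T.Walk u v, p.IsPath ∧
              ∀ w ∈ p.support, (T.neighborSet w).ncard = 2}).end.Subsingleton) := by
  classical
  set Red : Set (Sym2 V) := {f : Sym2 V | f ∈ G.edgeSet ∧ f ∉ T.edgeSet ∧
          ∃ u v : V, f = s(u, v) ∧
            ∃ p : T.Walk u v, p.IsPath ∧
              ∀ w ∈ p.support, (T.neighborSet w).ncard = 2} with hRedDef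
  set H : SimpleGraph V := G.deleteEdges Red with hHdef
  haveI : LocallyFinite G := fun v => (hlf v).fintype
  haveI : Fact G.Preconnected := ⟨hconn.preconnected⟩
  have hTH : T ≤ H := by
    intro a b hab
    rw [hHdef, deleteEdges_adj]
    refine ⟨hTG hab, fun hmem => ?_⟩
    exact hmem.2.1 hab
  have hHG : H ≤ G := by rw [hHdef]; exact deleteEdges_le _
  have hHconn : H.Connected := hTconn.mono hTH
  have hlfH : ∀ v, (H.neighborSet v).Finite := fun v => (hlf v).subset (fun x hx => hHG hx)
  haveI : LocallyFinite H := fun v => (hlfH v).fintype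
  haveI : Fact H.Preconnected := ⟨hHconn.preconnected⟩
  refine ⟨hHconn, ?_, ?_⟩
  · -- nonempty ends
    haveI : ∀ J : (Finset V)ᵒᵖ, Finite (H.componentComplFunctor.obj J) :=
      fun J => H.componentCompl_finite J.unop
    haveI : ∀ J : (Finset V)ᵒᵖ, Nonempty (H.componentComplFunctor.obj J) :=
      fun J => H.componentCompl_nonempty_of_infinite J.unop
    exact nonempty_sections_of_finite_inverse_system H.componentComplFunctor
  · -- subsingleton ends
    apply subsingleton_of_conn H
    intro K
    -- a vertex of degree ≠ 2 in T
    obtain ⟨w₀, hw₀⟩ : ∃ w : V, (T.neighborSet w).ncard ≠ 2 := by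
      by_contra hcon
      push_neg at hcon
      exact hTends (deg2_end_finite hTconn hTacyc hcon)
    set pthTo : ∀ k : V, T.Path k w₀ := fun k => ((hTconn.preconnected k w₀).some.toPath)
      with hpthTo
    set Z : Finset V := K ∪ K.biUnion (fun k => (pthTo k).val.support.toFinset) with hZ
    have hKZ : (K : Set V) ⊆ (Z : Set V) :=
      Finset.coe_subset.mpr Finset.subset_union_left
    -- the key lemma: a redundant path with endpoints outside Z avoids K
    have main : ∀ (u v : V) (p₀ : T.Walk u v), p₀.IsPath →
        (∀ z ∈ p₀.support, (T.neighborSet z).ncard = 2) →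
        u ∉ (Z : Set V) → v ∉ (Z : Set V) → Conn H (K : Set V) u v := by
      intro u v p₀ hp₀ hdeg2 hu hv
      have havoid : ∀ z ∈ p₀.support, z ∉ (K : Set V) := by
        intro k hk hkK
        have hknu : k ≠ u := fun h => hu (h ▸ hKZ hkK)
        have hknv : k ≠ v := fun h => hv (h ▸ hKZ hkK)
        have hkdeg : (T.neighborSet k).ncard = 2 := hdeg2 k hk
        have hkw : k ≠ w₀ := fun h => hw₀ (h ▸ hkdeg)
        -- the path from k to w₀
        obtain ⟨d, hd, q', hqp, hq⟩ : ∃ (d : V) (hd : T.Adj k d) (q' : T.Walk d w₀),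
            (Walk.cons hd q').IsPath ∧ (pthTo k).val = Walk.cons hd q' := by
          rcases hw : (pthTo k).val with _ | ⟨hd, q'⟩
          · exact absurd rfl hkw
          · exact ⟨_, hd, q', hw ▸ (pthTo k).prop, rfl⟩
        -- split p₀ at k
        have hnd : ((p₀.takeUntil k hk).support ++ (p₀.dropUntil k hk).support.tail).Nodup := by
          rw [← Walk.support_append, p₀.take_spec hk]
          exact hp₀.support_nodup
        have hr₁p : (p₀.takeUntil k hk).reverse.IsPath := (hp₀.takeUntil hk).reverse
        have hr₂p : (p₀.dropUntil k hk).IsPath := hp₀.dropUntil hk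
        obtain ⟨c₁, h₁, r₁, hr₁cons, hw1⟩ : ∃ (c₁ : V) (h₁ : T.Adj k c₁) (r₁ : T.Walk c₁ u),
            (Walk.cons h₁ r₁).IsPath ∧ (p₀.takeUntil k hk).reverse = Walk.cons h₁ r₁ := by
          rcases hw : (p₀.takeUntil k hk).reverse with _ | ⟨h₁, r₁⟩
          · exact absurd rfl hknu
          · exact ⟨_, h₁, r₁, hw ▸ hr₁p, rfl⟩
        obtain ⟨c₂, h₂, r₂, hr₂cons, hw2⟩ : ∃ (c₂ : V) (h₂ : T.Adj k c₂) (r₂ : T.Walk c₂ v),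
            (Walk.cons h₂ r₂).IsPath ∧ p₀.dropUntil k hk = Walk.cons h₂ r₂ := by
          rcases hw : p₀.dropUntil k hk with _ | ⟨h₂, r₂⟩
          · exact absurd rfl hknv
          · exact ⟨_, h₂, r₂, hw ▸ hr₂p, rfl⟩
        -- c₁ ≠ c₂
        have hc₁mem : c₁ ∈ (p₀.takeUntil k hk).support := by
          have : c₁ ∈ (p₀.takeUntil k hk).reverse.support := by
            rw [hw1]
            simp [Walk.support_cons, Walk.start_mem_support]
          rwa [Walk.support_reverse, List.mem_reverse] at this
        have hc₂mem : c₂ ∈ (p₀.dropUntil k hk).support.tail := by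
          rw [hw2]
          simp [Walk.support_cons, Walk.start_mem_support]
        have hc₁₂ : c₁ ≠ c₂ := by
          intro hcc
          exact (List.disjoint_of_nodup_append hnd) hc₁mem (hcc ▸ hc₂mem)
        -- d = c₁ or d = c₂
        obtain ⟨e₁, e₂, he₁₂, hset⟩ := Set.ncard_eq_two.1 hkdeg
        have hdm : d ∈ T.neighborSet k := hd
        have hc₁m : c₁ ∈ T.neighborSet k := h₁
        have hc₂m : c₂ ∈ T.neighborSet k := h₂
        rw [hset] at hdm hc₁m hc₂m
        have hdc : d = c₁ ∨ d = c₂ := by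
          rcases hdm with rfl | rfl <;> rcases hc₁m with h | h <;> rcases hc₂m with h' | h' <;>
            simp_all
        -- k not in the tails
        have hknr₁ : k ∉ r₁.support := by
          have := hr₁cons.support_nodup
          simp only [Walk.support_cons, List.nodup_cons] at this
          exact this.1
        have hknr₂ : k ∉ r₂.support := by
          have := hr₂cons.support_nodup
          simp only [Walk.support_cons, List.nodup_cons] at this
          exact this.1
        have hknq' : k ∉ q'.support := by
          have := hqp.support_nodup
          simp only [Walk.support_cons, List.nodup_cons] at this
          exact this.1
        have hsupZ : ∀ x, x ∈ (pthTo k).val.support → x ∈ (Z : Set V) := by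
          intro x hx
          refine Finset.mem_coe.2 (Finset.mem_union_right _ ?_)
          exact Finset.mem_biUnion.2 ⟨k, Finset.mem_coe.1 hkK, List.mem_toFinset.2 hx⟩
        have hdegr₁ : ∀ x ∈ r₁.support, (T.neighborSet x).ncard = 2 := by
          intro x hx
          apply hdeg2
          have : x ∈ (p₀.takeUntil k hk).reverse.support := by
            rw [hw1, Walk.support_cons]
            exact List.mem_cons_of_mem _ hx
          rw [Walk.support_reverse, List.mem_reverse] at this
          exact p₀.support_takeUntil_subset hk this
        have hdegr₂ : ∀ x ∈ r₂.support, (T.neighborSet x).ncard = 2 := by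
          intro x hx
          apply hdeg2
          apply p₀.support_dropUntil_subset hk
          rw [hw2, Walk.support_cons]
          exact List.mem_cons_of_mem _ hx
        rcases hdc with rfl | rfl
        · -- d = c₁ : forces u into the chosen path, contradiction with u ∉ Z
          have hsub := forced_ind r₁ q' k hr₁cons.of_cons hqp.of_cons hdegr₁
            (Or.inl hw₀) h₁ hknr₁ hknq'
          apply hu
          apply hsupZ
          rw [hq, Walk.support_cons]
          exact List.mem_cons_of_mem _ (hsub u r₁.end_mem_support)
        · -- d = c₂ : forces v into the chosen path, contradiction with v ∉ Z
          have hsub := forced_ind r₂ q' k hr₂cons.of_cons hqp.of_cons hdegr₂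
            (Or.inl hw₀) h₂ hknr₂ hknq'
          apply hv
          apply hsupZ
          rw [hq, Walk.support_cons]
          exact List.mem_cons_of_mem _ (hsub v r₂.end_mem_support)
      exact Conn.mono hTH ⟨p₀, havoid⟩
    -- an edge of G outside Z yields a K-avoiding connection in H
    have hedge : ∀ a b : V, G.Adj a b → a ∉ (Z : Set V) → b ∉ (Z : Set V) →
        Conn H (K : Set V) a b := by
      intro a b hab ha hb
      by_cases hR : s(a, b) ∈ Red
      · rw [hRedDef, Set.mem_setOf_eq] at hR
        obtain ⟨hGe, hTe, u, v, huv, p₀, hp₀, hdeg2⟩ := hR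
        rw [Sym2.eq_iff] at huv
        rcases huv with ⟨rfl, rfl⟩ | ⟨rfl, rfl⟩
        · exact main a b p₀ hp₀ hdeg2 ha hb
        · exact (main b a p₀ hp₀ hdeg2 hb ha).symm
      · refine ⟨Walk.cons (by rw [hHdef, deleteEdges_adj]; exact ⟨hab, hR⟩) Walk.nil, ?_⟩
        intro z hz
        simp only [Walk.support_cons, Walk.support_nil, List.mem_cons, List.mem_singleton,
          List.not_mem_nil, or_false] at hz
        rcases hz with rfl | rfl
        · exact fun hc => ha (hKZ hc)
        · exact fun hc => hb (hKZ hc)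
    -- convert a Z-avoiding G-walk into a K-avoiding H-connection
    have walkconv : ∀ (x y : V) (p : G.Walk x y), (∀ z ∈ p.support, z ∉ (Z : Set V)) →
        Conn H (K : Set V) x y := by
      intro x y p
      induction p with
      | @nil x =>
        intro h
        exact Conn.refl (fun hc => h x (Walk.start_mem_support _) (hKZ hc))
      | @cons a b c hadj p ih =>
        intro h
        have ha : a ∉ (Z : Set V) := h a (Walk.start_mem_support _)
        have hb : b ∉ (Z : Set V) := h b (by simp [Walk.support_cons, Walk.start_mem_support])
        exact (hedge a b hadj ha hb).trans
          (ih (fun z hz => h z (by simp [Walk.support_cons, hz])))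
    obtain ⟨Z', hZZ', hZconn⟩ := one_end_conn G hend.1 hend.2 Z
    refine ⟨Z', fun x y hx hy => ?_⟩
    obtain ⟨p, hp⟩ := hZconn x y hx hy
    exact walkconv x y p hp
end

section
/- Let G be an infinite, connected, locally finite simple graph with exactly one end. Then for every finite set K of vertices and every finite set S of edges, the graph obtained from G by deleting the vertices in K and the edges in S has exactly one infinite connected component, and the set of vertices of G lying outside this infinite component is finite. -/
open SimpleGraph CategoryTheory Opposite

section Aux

variable {V : Type*}

/-- universe-polymorphic version of `SimpleGraph.end_componentCompl_infinite`. -/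
private lemma end_cc_infinite' (G : SimpleGraph V) {e} (he : e ∈ G.end) (K : (Finset V)ᵒᵖ) :
    (e K).supp.Infinite := by
  refine (e K).infinite_iff_in_all_ranges.mpr (fun L h => ?_)
  change Opposite.unop K ⊆ Opposite.unop (Opposite.op L) at h
  exact ⟨e (Opposite.op L), (he (CategoryTheory.opHomOfLE h))⟩

/-- Any infinite `ComponentCompl` of a locally finite preconnected graph is hit by an end. -/
private lemma exists_end_eval (G : SimpleGraph V) [LocallyFinite G] [Fact G.Preconnected]
    (Kf : Finset V) (C : G.ComponentCompl ↑Kf) (hC : C.supp.Infinite) :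
    ∃ e, e ∈ G.end ∧ e (op Kf) = C := by
  classical
  haveI := hC.to_subtype
  haveI : Infinite V := Infinite.of_injective (Subtype.val : C.supp → V) Subtype.val_injective
  let F := G.componentComplFunctor
  let s : Set (F.obj (op Kf)) := {C}
  haveI : ∀ j : (Finset V)ᵒᵖ, Nonempty (F.obj j) := fun j =>
    G.componentCompl_nonempty_of_infinite j.unop
  haveI : ∀ j : (Finset V)ᵒᵖ, Finite (F.obj j) := fun j => G.componentCompl_finite j.unop
  haveI hnon : ∀ j, Nonempty ((F.toPreimages s).obj j) := by
    intro j
    rw [Functor.toPreimages_obj, Set.nonempty_coe_sort, Set.nonempty_iInter]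
    by_cases h : (Kf : Set V) ⊆ (j.unop : Set V)
    · obtain ⟨D, hD⟩ := C.infinite_iff_in_all_ranges.mp hC j.unop h
      refine ⟨D, fun f => ?_⟩
      simp only [Set.mem_preimage, componentComplFunctor_map, F, s, Set.mem_singleton_iff]
      exact hD
    · refine ⟨Classical.arbitrary _, fun f => absurd ?_ h⟩
      exact_mod_cast (le_of_op_hom f : Kf ≤ j.unop)
  haveI : ∀ j, Finite ((F.toPreimages s).obj j) := fun _ => Subtype.finite
  obtain ⟨sec, hsec⟩ := nonempty_sections_of_finite_inverse_system (F.toPreimages s)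
  refine ⟨fun j => (sec j).val, fun {j j'} f => ?_, ?_⟩
  · exact congrArg Subtype.val (hsec f)
  · have h := (sec (op Kf)).prop
    simp only [Set.mem_iInter, Set.mem_preimage, Set.mem_singleton_iff, s, F] at h
    have h' := h (𝟙 _)
    rwa [CategoryTheory.FunctorToTypes.map_id_apply] at h'

private lemma sym2_mem_finite (e : Sym2 V) : {x : V | x ∈ e}.Finite := by
  induction e with
  | _ a b =>
    refine ((Set.finite_singleton b).insert a).subset fun x hx => ?_
    rcases Sym2.mem_iff.mp hx with h | h <;> simp [h]

end Aux

/-- If `G` is an infinite, connected, locally finite graph with exactly one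
end, then after deleting any finite set `K` of vertices and any finite set `S` of edges,
the resulting graph has exactly one infinite connected component, and the set of vertices
of `G` lying outside this infinite component is finite. -/
theorem stmt8 {V : Type*} [Infinite V] (G : SimpleGraph V)
    (hconn : G.Connected) (hlf : ∀ v : V, (G.neighborSet v).Finite)
    (hend : G.end.Nonempty ∧ G.end.Subsingleton) :
    ∀ K : Set V, K.Finite → ∀ S : Set (Sym2 V), S.Finite →
      ∃ c : ((G.deleteEdges S).induce Kᶜ).ConnectedComponent,
        c.supp.Infinite ∧
        (∀ c' : ((G.deleteEdges S).induce Kᶜ).ConnectedComponent,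
          c'.supp.Infinite → c' = c) ∧
        (K ∪ (Subtype.val '' c.suppᶜ)).Finite := by
  classical
  intro K hK S hS
  haveI : LocallyFinite G := fun v => (hlf v).fintype
  haveI : Fact G.Preconnected := ⟨hconn.preconnected⟩
  -- the enlarged finite set `K₀ = K ∪ endpoints of S`
  have hSfin : {x : V | ∃ e ∈ S, x ∈ e}.Finite := by
    have heq : {x : V | ∃ e ∈ S, x ∈ e} = ⋃ e ∈ S, {x | x ∈ e} := by
      ext x; simp
    rw [heq]
    exact hS.biUnion (fun e _ => sym2_mem_finite e)
  have hK₀ : (K ∪ {x : V | ∃ e ∈ S, x ∈ e}).Finite := hK.union hSfin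
  set Kf : Finset V := hK₀.toFinset with hKfdef
  have hKfc : (Kf : Set V) = K ∪ {x : V | ∃ e ∈ S, x ∈ e} := hK₀.coe_toFinset
  have hKsub : K ⊆ (Kf : Set V) := by rw [hKfc]; exact Set.subset_union_left
  have hedge : ∀ e ∈ S, ∀ x ∈ e, x ∈ (Kf : Set V) := by
    intro e he x hx
    rw [hKfc]; exact Or.inr ⟨e, he, hx⟩
  -- the unique infinite componentCompl `C` of `Kf`
  obtain ⟨e₀, he₀⟩ := hend.1
  set C : G.ComponentCompl ↑Kf := e₀ (op Kf) with hCdef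
  have hCinf : C.supp.Infinite := end_cc_infinite' G he₀ (op Kf)
  have huniq : ∀ D : G.ComponentCompl ↑Kf, D.supp.Infinite → D = C := by
    intro D hD
    obtain ⟨e₁, he₁, he₁D⟩ := exists_end_eval G Kf D hD
    rw [← he₁D, hCdef, hend.2 he₁ he₀]
  have hfin : ∀ D : G.ComponentCompl ↑Kf, D ≠ C → D.supp.Finite := fun D hD =>
    Set.not_infinite.mp fun h => hD (huniq D h)
  -- the finite "bad" set
  set Fbad : Set V := ↑Kf ∪ ⋃ D ∈ {D : G.ComponentCompl ↑Kf | D ≠ C}, D.supp with hFbaddef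
  have hFbadfin : Fbad.Finite :=
    (Kf.finite_toSet).union (Set.Finite.biUnion (Set.toFinite _) (fun D hD => hfin D hD))
  have hcover : ∀ v : V, v ∉ Fbad → v ∈ C.supp := by
    intro v hv
    have hvK : v ∉ (Kf : Set V) := fun h => hv (Or.inl h)
    by_cases hvc : G.componentComplMk hvK = C
    · exact ⟨hvK, hvc⟩
    · refine absurd (Or.inr ?_) hv
      exact Set.mem_biUnion (s := {D : G.ComponentCompl ↑Kf | D ≠ C})
        (t := ComponentCompl.supp) hvc (G.componentComplMk_mem hvK)
  -- the graph hom from `G.induce (↑Kf)ᶜ` to the deleted graph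
  let φ : G.induce ((Kf : Set V)ᶜ) →g (G.deleteEdges S).induce Kᶜ :=
    { toFun := fun x => ⟨x.val, fun h => x.prop (hKsub h)⟩,
      map_rel' := by
        rintro ⟨v, hv⟩ ⟨w, hw⟩ hvw
        simp only [comap_adj, Function.Embedding.coe_subtype] at hvw ⊢
        rw [deleteEdges_adj]
        exact ⟨hvw, fun hmem => hv (hedge _ hmem v (Sym2.mem_mk_left v w))⟩ }
  have hmap : ∀ (v w : V) (hv : v ∉ (Kf : Set V)) (hw : w ∉ (Kf : Set V))
      (hv' : v ∈ Kᶜ) (hw' : w ∈ Kᶜ),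
      G.componentComplMk hv = G.componentComplMk hw →
      ((G.deleteEdges S).induce Kᶜ).connectedComponentMk ⟨v, hv'⟩ =
        ((G.deleteEdges S).induce Kᶜ).connectedComponentMk ⟨w, hw'⟩ := by
    intro v w hv hw hv' hw' h
    rw [ConnectedComponent.eq] at h ⊢
    exact (h.map φ)
  -- choose a basepoint in C
  obtain ⟨v₀, hv₀K, hv₀C⟩ := hCinf.nonempty
  have hv₀K' : v₀ ∈ Kᶜ := fun h => hv₀K (hKsub h)
  set c := ((G.deleteEdges S).induce Kᶜ).connectedComponentMk ⟨v₀, hv₀K'⟩ with hcdef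
  have hsub : ∀ w (hwC : w ∈ C.supp) (hw' : w ∈ Kᶜ), (⟨w, hw'⟩ : ↥Kᶜ) ∈ c.supp := by
    rintro w ⟨hwK, hwC⟩ hw'
    rw [ConnectedComponent.mem_supp_iff, hcdef]
    exact hmap w v₀ hwK hv₀K hw' hv₀K' (hwC.trans hv₀C.symm)
  have hCc : C.supp ⊆ Subtype.val '' c.supp := by
    intro w hw
    have hwK : w ∉ (Kf : Set V) := hw.1
    have hw' : w ∈ Kᶜ := fun h => hwK (hKsub h)
    exact ⟨⟨w, hw'⟩, hsub w hw hw', rfl⟩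
  refine ⟨c, ?_, ?_, ?_⟩
  · exact Set.Infinite.of_image Subtype.val (hCinf.mono hCc)
  · intro c' hc'
    have himg : (Subtype.val '' c'.supp).Infinite :=
      hc'.image (Set.injOn_of_injective Subtype.val_injective)
    obtain ⟨w, hwmem, hwbad⟩ := (himg.diff hFbadfin).nonempty
    obtain ⟨x, hx, rfl⟩ := hwmem
    have hwC : (x : V) ∈ C.supp := hcover _ hwbad
    have h1 : (⟨(x : V), x.prop⟩ : ↥Kᶜ) ∈ c.supp := hsub _ hwC x.prop
    rw [ConnectedComponent.mem_supp_iff] at hx h1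
    rw [← hx, ← h1]
  · refine hFbadfin.subset ?_
    rintro w (hwK | ⟨x, hx, rfl⟩)
    · exact Or.inl (hKsub hwK)
    · by_contra hbad
      have hwC : (x : V) ∈ C.supp := hcover _ hbad
      exact hx (hsub _ hwC x.prop)
end

section
/- Let T be an infinite, locally finite tree (a connected acyclic simple graph). Then T has at least two ends (its space of ends has at least two elements) if and only if there exists an edge e of T such that both connected components of the graph T − e (T with the edge e deleted) are infinite. -/
open SimpleGraph

open CategoryTheory in
private lemma my_end_supp_infinite {V : Type*} {G : SimpleGraph V}
    {e : (j : (Finset V)ᵒᵖ) → G.componentComplFunctor.obj j} (he : e ∈ G.end)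
    (K : (Finset V)ᵒᵖ) : (e K).supp.Infinite := by
  refine (e K).infinite_iff_in_all_ranges.mpr fun L h => ⟨e (Opposite.op L), he (opHomOfLE h)⟩

private lemma my_reachable_delete {V : Type*} {G : SimpleGraph V} {K : Set V}
    {C : G.ComponentCompl K} {w₁ w₂ x y : V} (h1 : w₁ ∈ C) (h2 : w₂ ∈ C) (hy : y ∈ K) :
    (G.deleteEdges {s(x, y)}).Reachable w₁ w₂ := by
  obtain ⟨hw1, rfl⟩ := h1
  obtain ⟨hw2, h⟩ := h2
  obtain ⟨q⟩ := (SimpleGraph.ConnectedComponent.eq.mp h :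
    (G.induce Kᶜ).Reachable ⟨w₂, hw2⟩ ⟨w₁, hw1⟩)
  let p : G.Walk w₂ w₁ := q.map (SimpleGraph.Embedding.induce Kᶜ).toHom
  have hysupp : y ∉ p.support := by
    intro hmem
    rw [show p.support = _ from SimpleGraph.Walk.support_map _ _, List.mem_map] at hmem
    obtain ⟨z, -, rfl⟩ := hmem
    exact z.prop hy
  have hedges : ∀ e ∈ p.edges, e ∈ (G.deleteEdges {s(x, y)}).edgeSet := by
    intro e hep
    rw [SimpleGraph.edgeSet_deleteEdges]
    refine ⟨p.edges_subset_edgeSet hep, ?_⟩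
    intro hmem
    rw [Set.mem_singleton_iff] at hmem
    subst hmem
    exact hysupp (p.snd_mem_support_of_mem_edges hep)
  exact ⟨(p.transfer _ hedges).reverse⟩

private lemma my_exists_boundary_edge {V : Type*} {G : SimpleGraph V} {K : Set V}
    {C : G.ComponentCompl K} {a b : V} (p : G.Walk a b) (hp : p.IsPath)
    (ha : a ∈ C) (hb : b ∉ C) :
    ∃ x y : V, x ∈ C ∧ y ∈ K ∧ G.Adj x y ∧ (G.deleteEdges {s(x, y)}).Reachable y b := by
  induction p with
  | nil => exact absurd ha hb
  | @cons u v w h q ih =>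
    rw [SimpleGraph.Walk.cons_isPath_iff] at hp
    by_cases hv : v ∈ C
    · exact ih hp.1 hv hb
    · have hvK : v ∈ K := by
        by_contra hvK
        exact hv (SimpleGraph.ComponentCompl.mem_of_adj u v ha hvK h)
      refine ⟨u, v, ha, hvK, h, ?_⟩
      have hedges : ∀ e ∈ q.edges, e ∈ (G.deleteEdges {s(u, v)}).edgeSet := by
        intro e heq
        rw [SimpleGraph.edgeSet_deleteEdges]
        refine ⟨q.edges_subset_edgeSet heq, ?_⟩
        intro hmem
        rw [Set.mem_singleton_iff] at hmem
        subst hmem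
        exact hp.2 (q.fst_mem_support_of_mem_edges heq)
      exact ⟨q.transfer _ hedges⟩

open CategoryTheory in
private lemma my_exists_end_inter {V : Type*} [Infinite V] (G : SimpleGraph V)
    [LocallyFinite G] [Fact G.Preconnected] {U : Set V} (hU : U.Infinite) :
    ∃ s ∈ G.end, ∀ K : (Finset V)ᵒᵖ, ((s K).supp ∩ U).Infinite := by
  classical
  let F : (Finset V)ᵒᵖ ⥤ Type _ :=
    { obj := fun K => {C : G.ComponentCompl K.unop // (C.supp ∩ U).Infinite}
      map := fun f => TypeCat.ofHom fun C => ⟨C.val.hom (leOfHom f.unop),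
        C.prop.mono (Set.inter_subset_inter_left U (C.val.subset_hom _))⟩
      map_id := by intro K; exact ConcreteCategory.hom_ext _ _ fun C => Subtype.ext C.val.hom_refl
      map_comp := by intro _ _ _ h h'; exact ConcreteCategory.hom_ext _ _ fun C =>
                          Subtype.ext (C.val.hom_trans (leOfHom h.unop) (leOfHom h'.unop)) }
  haveI : ∀ K : (Finset V)ᵒᵖ, Finite (F.obj K) := fun K => Subtype.finite
  haveI : ∀ K : (Finset V)ᵒᵖ, Nonempty (F.obj K) := by
    intro K
    have hS : (U \ ↑K.unop).Infinite := hU.diff K.unop.finite_toSet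
    haveI : Infinite ↥(U \ ↑K.unop) := hS.to_subtype
    obtain ⟨C, hC⟩ := Finite.exists_infinite_fiber
      (fun w : ↥(U \ ↑K.unop) => G.componentComplMk (K := ↑K.unop) w.prop.2)
    refine ⟨⟨C, ?_⟩⟩
    haveI := hC
    refine Set.infinite_of_injective_forall_mem
      (f := fun a : ↥((fun w : ↥(U \ ↑K.unop) =>
        G.componentComplMk (K := ↑K.unop) w.prop.2) ⁻¹' {C}) => (a.val.val : V)) ?_ ?_
    · intro a b hab
      exact Subtype.ext (Subtype.ext hab)
    · rintro ⟨⟨w, hw⟩, hfw⟩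
      exact ⟨⟨hw.2, hfw⟩, hw.1⟩
  obtain ⟨s, hs⟩ := nonempty_sections_of_finite_inverse_system F
  refine ⟨fun K => (s K).val, ?_, fun K => (s K).prop⟩
  intro j j' f
  exact congrArg Subtype.val (hs f)

/-- An infinite, locally finite tree `T` has at least two ends iff there is
an edge `e = s(u, v)` of `T` such that both connected components of `T − e` (the one of
`u` and the one of `v`) are infinite. -/
theorem stmt9 {V : Type*} [Infinite V] (T : SimpleGraph V)
    (hconn : T.Connected) (hacyc : T.IsAcyclic)
    (hlf : ∀ v : V, (T.neighborSet v).Finite) :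
    (∃ e₁ ∈ T.end, ∃ e₂ ∈ T.end, e₁ ≠ e₂) ↔
      (∃ u v : V, T.Adj u v ∧
        ((T.deleteEdges {s(u, v)}).connectedComponentMk u).supp.Infinite ∧
        ((T.deleteEdges {s(u, v)}).connectedComponentMk v).supp.Infinite) := by
  classical
  haveI : LocallyFinite T := fun w => (hlf w).fintype
  haveI : Fact T.Preconnected := ⟨hconn.preconnected⟩
  constructor
  · rintro ⟨e₁, he₁, e₂, he₂, hne⟩
    obtain ⟨K, hK⟩ := Function.ne_iff.mp hne
    have hC₁inf := my_end_supp_infinite he₁ K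
    have hC₂inf := my_end_supp_infinite he₂ K
    obtain ⟨c₁, hc₁⟩ := (e₁ K).nonempty
    obtain ⟨c₂, hc₂⟩ := (e₂ K).nonempty
    have hc₂n : c₂ ∉ (e₁ K).supp := fun h => hK (h.choose_spec.symm.trans hc₂.choose_spec)
    obtain ⟨w⟩ := hconn c₁ c₂
    obtain ⟨p, hp⟩ : ∃ p : T.Walk c₁ c₂, p.IsPath := ⟨w.toPath.val, w.toPath.prop⟩
    obtain ⟨x, y, hxC, hyK, hxy, hyreach⟩ := my_exists_boundary_edge p hp hc₁ hc₂n
    refine ⟨x, y, hxy, ?_, ?_⟩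
    · refine hC₁inf.mono ?_
      intro w hw
      rw [SimpleGraph.ConnectedComponent.mem_supp_iff, SimpleGraph.ConnectedComponent.eq]
      exact my_reachable_delete hw hxC hyK
    · refine hC₂inf.mono ?_
      intro w hw
      rw [SimpleGraph.ConnectedComponent.mem_supp_iff, SimpleGraph.ConnectedComponent.eq]
      exact (my_reachable_delete hw hc₂ hyK).trans hyreach.symm
  · rintro ⟨u, v, huv, hUinf, hWinf⟩
    obtain ⟨s₁, hs₁, hs₁inf⟩ := my_exists_end_inter T hUinf
    obtain ⟨s₂, hs₂, hs₂inf⟩ := my_exists_end_inter T hWinf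
    refine ⟨s₁, hs₁, s₂, hs₂, ?_⟩
    intro h
    subst h
    set K₀ : (Finset V)ᵒᵖ := Opposite.op ({u, v} : Finset V)
    obtain ⟨a, haC, haU⟩ := (hs₁inf K₀).nonempty
    obtain ⟨b, hbC, hbW⟩ := (hs₂inf K₀).nonempty
    have hvK : v ∈ (↑K₀.unop : Set V) := by simp [K₀]
    have hab : (T.deleteEdges {s(u, v)}).Reachable a b :=
      my_reachable_delete (x := u) haC hbC hvK
    have hua : (T.deleteEdges {s(u, v)}).Reachable u a :=
      (SimpleGraph.ConnectedComponent.eq.mp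
        ((SimpleGraph.ConnectedComponent.mem_supp_iff _ _).mp haU)).symm
    have hvb : (T.deleteEdges {s(u, v)}).Reachable v b :=
      (SimpleGraph.ConnectedComponent.eq.mp
        ((SimpleGraph.ConnectedComponent.mem_supp_iff _ _).mp hbW)).symm
    have : (T.deleteEdges {s(u, v)}).Reachable u v := (hua.trans hab).trans hvb.symm
    exact (SimpleGraph.isBridge_iff.mp
      (SimpleGraph.isAcyclic_iff_forall_adj_isBridge.mp hacyc huv)) this
end

section
/- Let G be a finite, connected simple graph that is 3-edge-connected (for every pair of edges e, f of G, the graph obtained from G by deleting e and f is still connected), and let w be a function assigning a nonnegative real weight to each edge of G. Then there exists a spanning tree T of G with ∑_{e ∈ E(T)} w(e) ≤ (2/3) ∑_{e ∈ E(G)} w(e). -/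
open SimpleGraph

section StmtAux

variable {V : Type*}

private lemma preconn_of_adj_reachable {H K : SimpleGraph V}
    (h : ∀ a b, H.Adj a b → K.Reachable a b) (hH : H.Preconnected) : K.Preconnected := by
  intro x y
  obtain ⟨p⟩ := hH x y
  induction p with
  | nil => exact Reachable.refl _
  | cons ha _ ih => exact (h _ _ ha).trans ih

private lemma connected_deleteEdges_of_reachable {H : SimpleGraph V} {u v : V}
    (hH : H.Connected)
    (hr : (H.deleteEdges {s(u, v)}).Reachable u v) : (H.deleteEdges {s(u, v)}).Connected := by
  have hne := hH.nonempty
  rw [connected_iff]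
  refine ⟨preconn_of_adj_reachable (fun a b hab => ?_) hH.preconnected, hne⟩
  by_cases hab' : s(a, b) = s(u, v)
  · rw [Sym2.eq, Sym2.rel_iff'] at hab'
    rcases hab' with ⟨rfl, rfl⟩ | ⟨rfl, rfl⟩
    · exact hr
    · exact hr.symm
  · exact Adj.reachable (by rw [deleteEdges_adj]; exact ⟨hab, by simpa using hab'⟩)

private lemma card_cc_lt [Finite V] {K K' : SimpleGraph V} (hle : K' ≤ K) {u v : V}
    (hK : K.Reachable u v) (hK' : ¬ K'.Reachable u v) :
    Nat.card K.ConnectedComponent + 1 ≤ Nat.card K'.ConnectedComponent := by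
  haveI : Fintype K.ConnectedComponent := Fintype.ofFinite _
  haveI : Fintype K'.ConnectedComponent := Fintype.ofFinite _
  let f : K'.ConnectedComponent → K.ConnectedComponent :=
    ConnectedComponent.map (Hom.ofLE hle)
  have hsurj : Function.Surjective f := by
    intro C
    refine C.ind fun x => ⟨K'.connectedComponentMk x, rfl⟩
  have hninj : ¬ Function.Injective f := by
    intro hinj
    apply hK'
    have h1 : f (K'.connectedComponentMk u) = f (K'.connectedComponentMk v) := by
      show K.connectedComponentMk u = K.connectedComponentMk v
      exact ConnectedComponent.sound hK
    exact ConnectedComponent.eq.mp (hinj h1)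
  have := Fintype.card_lt_of_surjective_not_injective f hsurj hninj
  simp only [Nat.card_eq_fintype_card]
  omega

private lemma card_le_cc [Finite V] [Nonempty V] (H : SimpleGraph V) (F : Finset (Sym2 V))
    (hbr : ∀ e ∈ F, e ∈ H.edgeSet ∧ H.IsBridge e) :
    F.card + 1 ≤ Nat.card (H.deleteEdges ↑F).ConnectedComponent := by
  classical
  induction F using Finset.induction_on with
  | empty =>
    simp only [Finset.card_empty, Finset.coe_empty, deleteEdges_empty, zero_add]
    haveI : Nonempty H.ConnectedComponent := ⟨H.connectedComponentMk Classical.ofNonempty⟩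
    exact Nat.one_le_iff_ne_zero.mpr (Nat.card_ne_zero.mpr ⟨inferInstance, inferInstance⟩)
  | insert e F' hnm ih =>
    have heb := hbr e (Finset.mem_insert_self e F')
    obtain ⟨u, v, rfl⟩ : ∃ x y, e = s(x, y) := Sym2.ind (fun x y => ⟨x, y, rfl⟩) e
    rw [isBridge_iff, mem_edgeSet] at heb
    obtain ⟨hadj, hunreach⟩ := heb
    have ih' := ih (fun f hf => hbr f (Finset.mem_insert_of_mem hf))
    have hle : H.deleteEdges (↑(insert s(u,v) F') : Set (Sym2 V)) ≤ H.deleteEdges ↑F' :=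
      deleteEdges_anti (by simp [Finset.coe_insert, Set.subset_insert])
    have hKr : (H.deleteEdges ↑F').Reachable u v := by
      refine Adj.reachable ?_
      rw [deleteEdges_adj]
      exact ⟨hadj, by simpa using hnm⟩
    have hK'r : ¬ (H.deleteEdges (↑(insert s(u,v) F') : Set (Sym2 V))).Reachable u v := by
      intro hr
      exact hunreach (hr.mono (deleteEdges_anti (by simp)))
    have := card_cc_lt hle hKr hK'r
    rw [Finset.card_insert_of_notMem hnm]
    omega

private lemma comp_count [Finite V] {G : SimpleGraph V} (hconn : G.Connected)
    (h3ec : ∀ e ∈ G.edgeSet, ∀ f ∈ G.edgeSet, (G.deleteEdges {e, f}).Connected)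
    (S : Finset (Sym2 V)) (hS : ↑S ⊆ G.edgeSet)
    (hc : 2 ≤ Nat.card (G.deleteEdges ↑S).ConnectedComponent) :
    3 * Nat.card (G.deleteEdges ↑S).ConnectedComponent ≤ 2 * S.card := by
  classical
  haveI : Fintype V := Fintype.ofFinite V
  set K := G.deleteEdges ↑S with hKdef
  haveI : Fintype K.ConnectedComponent := Fintype.ofFinite _
  set b : K.ConnectedComponent → Finset (Sym2 V) :=
    fun C => S.filter (fun e => (∃ x ∈ e, x ∈ C.supp) ∧ (∃ x ∈ e, x ∉ C.supp)) with hbdef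
  have hcross : ∀ (C : K.ConnectedComponent) (x y : V), G.Adj x y → x ∈ C.supp → y ∉ C.supp →
      s(x, y) ∈ b C := by
    intro C x y hadj hx hy
    have hmemS : s(x, y) ∈ S := by
      by_contra hnS
      have hKadj : K.Adj x y := by rw [hKdef, deleteEdges_adj]; exact ⟨hadj, hnS⟩
      apply hy
      rw [ConnectedComponent.mem_supp_iff] at hx ⊢
      rw [← hx]
      exact (ConnectedComponent.connectedComponentMk_eq_of_adj hKadj).symm
    rw [hbdef]
    refine Finset.mem_filter.mpr ⟨hmemS, ⟨x, ?_, hx⟩, ⟨y, ?_, hy⟩⟩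
    · exact Sym2.mem_mk_left x y
    · exact Sym2.mem_mk_right x y
  have hfind : ∀ (C : K.ConnectedComponent) (del : Set (Sym2 V)),
      (G.deleteEdges del).Connected → ∃ g ∈ b C, g ∉ del := by
    intro C del hdel
    obtain ⟨v0, hv0⟩ : ∃ v0, v0 ∈ C.supp := by
      obtain ⟨v0, hv0⟩ := C.exists_rep
      exact ⟨v0, hv0⟩
    obtain ⟨u0, hu0⟩ : ∃ u0, u0 ∉ C.supp := by
      haveI : Nontrivial K.ConnectedComponent := Finite.one_lt_card_iff_nontrivial.mp hc
      obtain ⟨C', hC'⟩ := exists_ne C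
      obtain ⟨u0, hu0⟩ := C'.exists_rep
      exact ⟨u0, fun h => hC' (by rw [← hu0]; exact h)⟩
    obtain ⟨p⟩ := hdel.preconnected v0 u0
    obtain ⟨d, _, hd1, hd2⟩ := p.exists_boundary_dart C.supp hv0 hu0
    have hdadj := d.adj
    rw [deleteEdges_adj] at hdadj
    exact ⟨s(d.fst, d.snd), hcross C d.fst d.snd hdadj.1 hd1 hd2, hdadj.2⟩
  have h3 : ∀ C : K.ConnectedComponent, 3 ≤ (b C).card := by
    intro C
    by_contra h3'
    push_neg at h3'
    obtain ⟨e0, he0⟩ : ∃ e0, e0 ∈ b C := by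
      obtain ⟨g, hg, -⟩ := hfind C ∅ (by simpa using hconn)
      exact ⟨g, hg⟩
    have hbS : b C ⊆ S := Finset.filter_subset _ _
    have h1 : 1 ≤ (b C).card := Finset.card_pos.mpr ⟨e0, he0⟩
    obtain ⟨e, f, heS, hfS, hsub⟩ : ∃ e f, e ∈ G.edgeSet ∧ f ∈ G.edgeSet ∧
        (b C : Set (Sym2 V)) ⊆ {e, f} := by
      interval_cases h : (b C).card
      · obtain ⟨a, ha⟩ := Finset.card_eq_one.mp h
        exact ⟨a, a, hS (hbS (by simp [ha])), hS (hbS (by simp [ha])), by simp [ha]⟩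
      · obtain ⟨a, a', hne, ha⟩ := Finset.card_eq_two.mp h
        exact ⟨a, a', hS (hbS (by simp [ha])), hS (hbS (by simp [ha])),
          by simp [ha]⟩
    obtain ⟨g, hg, hgdel⟩ := hfind C {e, f} (h3ec e heS f hfS)
    exact hgdel (hsub hg)
  have hdouble : ∑ C : K.ConnectedComponent, (b C).card ≤ 2 * S.card := by
    have hswap : ∑ C : K.ConnectedComponent, (b C).card =
        ∑ e ∈ S, (Finset.univ.filter (fun C : K.ConnectedComponent =>
          (∃ x ∈ e, x ∈ C.supp) ∧ (∃ x ∈ e, x ∉ C.supp))).card := by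
      simp only [hbdef, Finset.card_filter]
      rw [Finset.sum_comm]
      congr!
    rw [hswap]
    have hbound : ∀ e ∈ S, (Finset.univ.filter (fun C : K.ConnectedComponent =>
        (∃ x ∈ e, x ∈ C.supp) ∧ (∃ x ∈ e, x ∉ C.supp))).card ≤ 2 := by
      intro e _
      obtain ⟨u, v, rfl⟩ : ∃ x y, e = s(x, y) := Sym2.ind (fun x y => ⟨x, y, rfl⟩) e
      have hsub : (Finset.univ.filter (fun C : K.ConnectedComponent =>
          (∃ x ∈ s(u,v), x ∈ C.supp) ∧ (∃ x ∈ s(u,v), x ∉ C.supp))) ⊆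
          {K.connectedComponentMk u, K.connectedComponentMk v} := by
        intro C hC
        rw [Finset.mem_filter] at hC
        obtain ⟨-, ⟨x, hxe, hxC⟩, -⟩ := hC
        rw [ConnectedComponent.mem_supp_iff] at hxC
        rw [Sym2.mem_iff] at hxe
        rcases hxe with rfl | rfl
        · simp [← hxC]
        · simp [← hxC]
      calc _ ≤ ({K.connectedComponentMk u, K.connectedComponentMk v} : Finset _).card :=
            Finset.card_le_card hsub
        _ ≤ 2 := Finset.card_insert_le _ _ |>.trans (by simp)
    calc ∑ e ∈ S, _ ≤ ∑ _e ∈ S, 2 := Finset.sum_le_sum hbound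
      _ = 2 * S.card := by rw [Finset.sum_const, smul_eq_mul, mul_comm]
  calc 3 * Nat.card K.ConnectedComponent
      = ∑ _C : K.ConnectedComponent, 3 := by
        rw [Finset.sum_const, smul_eq_mul, mul_comm, Nat.card_eq_fintype_card, Finset.card_univ]
    _ ≤ ∑ C : K.ConnectedComponent, (b C).card := Finset.sum_le_sum (fun C _ => h3 C)
    _ ≤ 2 * S.card := hdouble

variable [DecidableEq (Sym2 V)]

open scoped Classical in
private noncomputable def greedy (G : SimpleGraph V) :
    Finset (Sym2 V) → List (Sym2 V) → Finset (Sym2 V)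
  | B, [] => B
  | B, e :: l =>
    greedy G (if (G.deleteEdges ↑(insert e B)).Connected then insert e B else B) l

open scoped Classical

private lemma greedy_cons (G : SimpleGraph V) (B e l) :
    greedy G B (e :: l) =
      greedy G (if (G.deleteEdges ↑(insert e B)).Connected then insert e B else B) l := rfl

private lemma subset_greedy (G : SimpleGraph V) (l : List (Sym2 V)) :
    ∀ B, B ⊆ greedy G B l := by
  induction l with
  | nil => intro B; exact Finset.Subset.refl B
  | cons e l ih =>
    intro B
    rw [greedy_cons]
    refine Finset.Subset.trans ?_ (ih _)
    split
    · exact Finset.subset_insert e B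
    · exact Finset.Subset.refl B

private lemma greedy_subset (G : SimpleGraph V) (l : List (Sym2 V)) :
    ∀ B, greedy G B l ⊆ B ∪ l.toFinset := by
  induction l with
  | nil => intro B; simp [greedy]
  | cons e l ih =>
    intro B
    rw [greedy_cons]
    refine Finset.Subset.trans (ih _) ?_
    intro x hx
    rcases Finset.mem_union.mp hx with hx | hx
    · split at hx
      · rcases Finset.mem_insert.mp hx with rfl | hx
        · simp
        · exact Finset.mem_union_left _ hx
      · exact Finset.mem_union_left _ hx
    · simp only [List.toFinset_cons]
      exact Finset.mem_union_right _ (Finset.mem_insert_of_mem hx)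

private lemma greedy_append (G : SimpleGraph V) (p q : List (Sym2 V)) :
    ∀ B, greedy G B (p ++ q) = greedy G (greedy G B p) q := by
  induction p with
  | nil => intro B; rfl
  | cons e p ih => intro B; rw [List.cons_append, greedy_cons, greedy_cons, ih]

private lemma greedy_connected (G : SimpleGraph V) (l : List (Sym2 V)) :
    ∀ B : Finset (Sym2 V), (G.deleteEdges ↑B).Connected →
      (G.deleteEdges ↑(greedy G B l)).Connected := by
  induction l with
  | nil => intro B hB; exact hB
  | cons e l ih =>
    intro B hB
    rw [greedy_cons]
    refine ih _ ?_
    split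
    · assumption
    · exact hB

private lemma greedy_rejected (G : SimpleGraph V) (l : List (Sym2 V)) :
    ∀ B e, e ∈ l → e ∉ greedy G B l →
      ¬ (G.deleteEdges ↑(insert e (greedy G B l))).Connected := by
  induction l with
  | nil => intro B e he; exact absurd he List.not_mem_nil
  | cons a l ih =>
    intro B e he hout
    rw [greedy_cons] at hout ⊢
    rcases List.mem_cons.mp he with rfl | he'
    · by_cases hacc : (G.deleteEdges ↑(insert e B)).Connected
      · exfalso
        apply hout
        rw [if_pos hacc]
        exact subset_greedy G l _ (Finset.mem_insert_self e B)
      · rw [if_neg hacc] at hout ⊢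
        intro hcon
        apply hacc
        refine hcon.mono (deleteEdges_anti ?_)
        intro x hx
        rcases Finset.mem_insert.mp hx with rfl | hx
        · exact Finset.mem_insert_self _ _
        · exact Finset.mem_insert_of_mem (subset_greedy G l _ hx)
    · exact ih _ e he' hout

private lemma prefix_bound [Finite V] {G : SimpleGraph V} (hconn : G.Connected)
    (h3ec : ∀ e ∈ G.edgeSet, ∀ f ∈ G.edgeSet, (G.deleteEdges {e, f}).Connected)
    (p : List (Sym2 V)) (hp : ∀ e ∈ p, e ∈ G.edgeSet) :
    p.toFinset.card ≤ 3 * (greedy G ∅ p).card := by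
  haveI : Nonempty V := hconn.nonempty
  set Bt := greedy G ∅ p with hBt
  have hconnBt : (G.deleteEdges ↑Bt).Connected :=
    greedy_connected G p ∅ (by simpa using hconn)
  set H := G.deleteEdges ↑Bt with hH
  set F := p.toFinset \ Bt with hF
  have hBtp : Bt ⊆ p.toFinset := by
    have := greedy_subset G p ∅
    simpa using this
  have hunion : (↑F ∪ ↑Bt : Set (Sym2 V)) = ↑p.toFinset := by
    rw [← Finset.coe_union]
    congr 1
    rw [hF, Finset.sdiff_union_of_subset hBtp]
  have hbr : ∀ e ∈ F, e ∈ H.edgeSet ∧ H.IsBridge e := by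
    intro e he
    rw [hF, Finset.mem_sdiff] at he
    obtain ⟨hep, heB⟩ := he
    have hrej := greedy_rejected G p ∅ e (List.mem_toFinset.mp hep) heB
    obtain ⟨u, v, rfl⟩ : ∃ x y, e = s(x, y) := Sym2.ind (fun x y => ⟨x, y, rfl⟩) e
    rw [mem_edgeSet, isBridge_iff]
    constructor
    · rw [hH, deleteEdges_adj]
      exact ⟨(mem_edgeSet G).mp (hp _ (List.mem_toFinset.mp hep)), by simpa using heB⟩
    · intro hr
      apply hrej
      have := connected_deleteEdges_of_reachable hconnBt hr
      have heq : (H.deleteEdges {s(u,v)}) = G.deleteEdges ↑(insert s(u,v) Bt) := by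
        rw [hH, deleteEdges_deleteEdges]
        congr 1
        rw [Finset.coe_insert]
        exact (Set.union_comm _ _).trans (Set.insert_eq _ _).symm
      rwa [heq] at this
  have h4 := card_le_cc H F hbr
  have hHF : H.deleteEdges ↑F = G.deleteEdges ↑p.toFinset := by
    rw [hH, deleteEdges_deleteEdges, Set.union_comm, hunion]
  rw [hHF] at h4
  rcases Finset.eq_empty_or_nonempty F with hFe | hFne
  · have : Bt = p.toFinset := by
      apply Finset.Subset.antisymm hBtp
      intro x hx
      by_contra hxB
      have : x ∈ F := by rw [hF, Finset.mem_sdiff]; exact ⟨hx, hxB⟩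
      simp [hFe] at this
    rw [this]
    omega
  · have hc2 : 2 ≤ Nat.card (G.deleteEdges ↑p.toFinset).ConnectedComponent := by
      have : 1 ≤ F.card := Finset.card_pos.mpr hFne
      omega
    have h6 := comp_count hconn h3ec p.toFinset (by
      intro x hx
      exact hp x (List.mem_toFinset.mp (by exact_mod_cast hx))) hc2
    have hcards : F.card + Bt.card = p.toFinset.card := by
      rw [hF]
      exact Finset.card_sdiff_add_card_eq_card hBtp
    omega

private lemma inter_prefix (G : SimpleGraph V) (l : List (Sym2 V)) (hnd : l.Nodup) (t : ℕ) :
    (l.take t).toFinset ∩ greedy G ∅ l = greedy G ∅ (l.take t) := by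
  have hsplit : l = l.take t ++ l.drop t := (List.take_append_drop t l).symm
  have hg : greedy G ∅ l = greedy G (greedy G ∅ (l.take t)) (l.drop t) := by
    conv_lhs => rw [hsplit]
    rw [greedy_append]
  have hdisj : ∀ x ∈ l.take t, x ∈ l.drop t → False := by
    have := hnd
    rw [hsplit] at this
    have := List.disjoint_of_nodup_append this
    intro x hx hx'
    exact this hx hx'
  apply Finset.Subset.antisymm
  · intro e he
    rw [Finset.mem_inter] at he
    obtain ⟨hep, heB⟩ := he
    rw [hg] at heB
    have := greedy_subset G (l.drop t) (greedy G ∅ (l.take t)) heB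
    rcases Finset.mem_union.mp this with h | h
    · exact h
    · exact absurd (List.mem_toFinset.mp h)
        (fun hc => hdisj e (List.mem_toFinset.mp hep) hc)
  · intro e he
    rw [Finset.mem_inter]
    constructor
    · have := greedy_subset G (l.take t) ∅ he
      simpa using this
    · rw [hg]
      exact subset_greedy G (l.drop t) _ he

private lemma abel_list (w : Sym2 V → ℝ) :
    ∀ (l : List (Sym2 V)), l.Nodup → l.Pairwise (fun a b => w b ≤ w a) →
    ∀ (B : Finset (Sym2 V)),
      (∀ t : ℕ, min t l.length ≤ 3 * ((l.take t).toFinset ∩ B).card) →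
    ∀ c : ℝ, 0 ≤ c → (∀ e ∈ l, c ≤ w e) →
      (l.map w).sum + (3 * ((l.toFinset ∩ B).card : ℝ) - l.length) * c
        ≤ 3 * ∑ e ∈ l.toFinset ∩ B, w e := by
  intro l
  induction l using List.reverseRecOn with
  | nil => intro _ _ B _ c hc _; simp
  | append_singleton l' a ih =>
    intro hnd hsorted B hpre c hc hcl
    have hnd' : l'.Nodup := (List.nodup_append.mp hnd).1
    have hna : a ∉ l' := by
      have := List.nodup_append.mp hnd
      intro hmem
      exact this.2.2 a hmem a (List.mem_singleton_self a) rfl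
    have hpw := List.pairwise_append.mp hsorted
    have hsorted' : l'.Pairwise (fun a b => w b ≤ w a) := hpw.1
    have hwa : ∀ e ∈ l', w a ≤ w e := fun e he => hpw.2.2 e he a (by simp)
    have hca : c ≤ w a := hcl a (by simp)
    have hwa0 : 0 ≤ w a := le_trans hc hca
    have hpre' : ∀ t : ℕ, min t l'.length ≤ 3 * ((l'.take t).toFinset ∩ B).card := by
      intro t
      rcases le_or_gt t l'.length with h | h
      · have h2 := hpre t
        rw [List.take_append_of_le_length h] at h2
        simp only [List.length_append, List.length_singleton] at h2
        omega
      · have h2 := hpre l'.length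
        rw [List.take_append_of_le_length le_rfl, List.take_of_length_le le_rfl] at h2
        simp only [List.length_append, List.length_singleton] at h2
        rw [List.take_of_length_le (le_of_lt h)]
        omega
    have ihl := ih hnd' hsorted' B hpre' (w a) hwa0 hwa
    have hSfull : (l' ++ [a]).toFinset = insert a l'.toFinset := by
      simp [List.toFinset_append]
    have hlen : (l' ++ [a]).length = l'.length + 1 := by simp
    have hsum : ((l' ++ [a]).map w).sum = (l'.map w).sum + w a := by simp
    have hn3 : (l'.length : ℝ) ≤ 3 * ((l'.toFinset ∩ B).card : ℝ) := by
      have h2 := hpre' l'.length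
      rw [List.take_of_length_le le_rfl] at h2
      have h3 : l'.length ≤ 3 * (l'.toFinset ∩ B).card := by omega
      exact_mod_cast h3
    by_cases haB : a ∈ B
    · have hins : (l' ++ [a]).toFinset ∩ B = insert a (l'.toFinset ∩ B) := by
        rw [hSfull, Finset.insert_inter_of_mem haB]
      have hnaint : a ∉ l'.toFinset ∩ B := by
        simp only [Finset.mem_inter, List.mem_toFinset]
        tauto
      rw [hins, Finset.sum_insert hnaint, Finset.card_insert_of_notMem hnaint, hsum, hlen]
      push_cast
      set k := ((l'.toFinset ∩ B).card : ℝ)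
      set n := (l'.length : ℝ)
      have hmul : (3 * k - n + 2) * c ≤ (3 * k - n + 2) * w a := by
        apply mul_le_mul_of_nonneg_left hca
        linarith
      linarith
    · have hins : (l' ++ [a]).toFinset ∩ B = l'.toFinset ∩ B := by
        rw [hSfull, Finset.insert_inter_of_notMem haB]
      have hfull := hpre (l'.length + 1)
      rw [List.take_of_length_le (by simp), hins] at hfull
      simp only [List.length_append, List.length_singleton] at hfull
      have hfn : l'.length + 1 ≤ 3 * (l'.toFinset ∩ B).card := by omega
      have hn3' : (l'.length : ℝ) + 1 ≤ 3 * ((l'.toFinset ∩ B).card : ℝ) := by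
        exact_mod_cast hfn
      rw [hins, hsum, hlen]
      push_cast
      set k := ((l'.toFinset ∩ B).card : ℝ)
      set n := (l'.length : ℝ)
      have hmul : (3 * k - n - 1) * c ≤ (3 * k - n - 1) * w a := by
        apply mul_le_mul_of_nonneg_left hca
        linarith
      linarith

private lemma exists_tree [Finite V] :
    ∀ (n : ℕ) (H : SimpleGraph V), H.edgeSet.ncard ≤ n → H.Connected →
      ∃ T, T ≤ H ∧ T.Connected ∧ T.IsAcyclic := by
  intro n
  induction n with
  | zero =>
    intro H hcard hconn
    refine ⟨H, le_refl H, hconn, ?_⟩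
    intro v c hc
    cases c with
    | nil => exact hc.ne_nil rfl
    | cons hadj q =>
      have hmem : s(v, _) ∈ H.edgeSet := hadj
      have : H.edgeSet = ∅ := by
        rw [← Set.ncard_eq_zero (Set.toFinite _)]
        omega
      rw [this] at hmem
      exact hmem
  | succ n ih =>
    intro H hcard hconn
    by_cases hac : H.IsAcyclic
    · exact ⟨H, le_refl H, hconn, hac⟩
    · rw [isAcyclic_iff_forall_adj_isBridge] at hac
      push_neg at hac
      obtain ⟨v, u, hadj, hnb⟩ := hac
      rw [isBridge_iff] at hnb
      push_neg at hnb
      have hr : (H.deleteEdges {s(v, u)}).Reachable v u := hnb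
      have hconn' := connected_deleteEdges_of_reachable hconn hr
      have hcard' : (H.deleteEdges {s(v, u)}).edgeSet.ncard ≤ n := by
        rw [edgeSet_deleteEdges]
        have hlt : (H.edgeSet \ {s(v, u)}).ncard < H.edgeSet.ncard :=
          Set.ncard_diff_singleton_lt_of_mem hadj (Set.toFinite _)
        omega
      obtain ⟨T, hT1, hT2, hT3⟩ := ih _ hcard' hconn'
      exact ⟨T, hT1.trans (deleteEdges_le _), hT2, hT3⟩

end StmtAux

/-- A finite, connected, 3-edge-connected simple graph with nonnegative
edge weights admits a spanning tree whose total weight is at most 2/3 of the total weight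
of the graph. -/
theorem stmt12 {V : Type*} [Finite V] (G : SimpleGraph V) (hconn : G.Connected)
    (h3ec : ∀ e ∈ G.edgeSet, ∀ f ∈ G.edgeSet, (G.deleteEdges {e, f}).Connected)
    (w : Sym2 V → ℝ) (hw : ∀ e : Sym2 V, 0 ≤ w e) :
    ∃ T : SimpleGraph V, T ≤ G ∧ T.Connected ∧ T.IsAcyclic ∧
      ∑ᶠ e ∈ T.edgeSet, w e ≤ (2 / 3) * ∑ᶠ e ∈ G.edgeSet, w e := by
  classical
  haveI : Nonempty V := hconn.nonempty
  haveI : Fintype V := Fintype.ofFinite V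
  haveI : Fintype G.edgeSet := Fintype.ofFinite _
  set le : Sym2 V → Sym2 V → Bool := fun a b => decide (w b ≤ w a) with hle
  set l : List (Sym2 V) := G.edgeFinset.toList.mergeSort le with hl
  have hperm : List.Perm l G.edgeFinset.toList := List.mergeSort_perm _ _
  have hnodup : l.Nodup := hperm.nodup_iff.mpr (Finset.nodup_toList _)
  have hsortedb : l.Pairwise (fun a b => le a b = true) := by
    rw [hl]
    exact List.pairwise_mergeSort
      (fun a b c h1 h2 => by
        simp only [hle, decide_eq_true_eq] at h1 h2 ⊢
        exact h2.trans h1)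
      (fun a b => by
        simp only [hle]
        rcases le_total (w b) (w a) with h | h
        · simp [h]
        · simp [h])
      G.edgeFinset.toList
  have hsorted : l.Pairwise (fun a b => w b ≤ w a) := by
    refine hsortedb.imp ?_
    intro a b h
    simpa [hle] using h
  have hltf : l.toFinset = G.edgeFinset := by
    ext e
    rw [List.mem_toFinset, hperm.mem_iff, Finset.mem_toList]
  have hmem : ∀ e ∈ l, e ∈ G.edgeSet := by
    intro e he
    rw [← mem_edgeFinset, ← hltf, List.mem_toFinset]
    exact he
  set B := greedy G ∅ l with hB
  have hBconn : (G.deleteEdges ↑B).Connected :=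
    greedy_connected G l ∅ (by simpa using hconn)
  have hBsub : B ⊆ G.edgeFinset := by
    rw [← hltf]
    have := greedy_subset G l ∅
    simpa using this
  have hkey : ∀ t : ℕ, min t l.length ≤ 3 * ((l.take t).toFinset ∩ B).card := by
    intro t
    rw [hB, inter_prefix G l hnodup t]
    have hbound := prefix_bound hconn h3ec (l.take t)
      (fun e he => hmem e (List.take_subset t l he))
    have hcardtake : (l.take t).toFinset.card = min t l.length := by
      rw [List.toFinset_card_of_nodup (hnodup.sublist (List.take_sublist t l))]
      exact List.length_take
    omega
  have habel := abel_list w l hnodup hsorted B hkey 0 le_rfl (fun e _ => hw e)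
  rw [mul_zero, add_zero] at habel
  have hlB : l.toFinset ∩ B = B := by
    rw [Finset.inter_eq_right]
    rw [← hltf] at hBsub
    exact hBsub
  rw [hlB] at habel
  have hsumG : (l.map w).sum = ∑ e ∈ G.edgeFinset, w e := by
    rw [(hperm.map w).sum_eq]
    exact Finset.sum_map_toList G.edgeFinset w
  rw [hsumG] at habel
  -- spanning tree of G minus B
  obtain ⟨T, hT1, hT2, hT3⟩ := exists_tree (G.deleteEdges ↑B).edgeSet.ncard
    (G.deleteEdges ↑B) le_rfl hBconn
  refine ⟨T, hT1.trans (deleteEdges_le _), hT2, hT3, ?_⟩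
  haveI : Fintype T.edgeSet := Fintype.ofFinite _
  have hTfin : T.edgeSet = ↑T.edgeFinset := (coe_edgeFinset T).symm
  have hGfin : G.edgeSet = ↑G.edgeFinset := (coe_edgeFinset G).symm
  rw [hTfin, hGfin, finsum_mem_coe_finset, finsum_mem_coe_finset]
  have hTsub : T.edgeFinset ⊆ G.edgeFinset \ B := by
    intro e he
    rw [mem_edgeFinset] at he
    have : e ∈ (G.deleteEdges ↑B).edgeSet := edgeSet_mono hT1 he
    rw [edgeSet_deleteEdges] at this
    rw [Finset.mem_sdiff, mem_edgeFinset]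
    exact ⟨this.1, by simpa using this.2⟩
  have h1 : ∑ e ∈ T.edgeFinset, w e ≤ ∑ e ∈ G.edgeFinset \ B, w e :=
    Finset.sum_le_sum_of_subset_of_nonneg hTsub (fun e _ _ => hw e)
  have h2 : ∑ e ∈ G.edgeFinset \ B, w e + ∑ e ∈ B, w e = ∑ e ∈ G.edgeFinset, w e :=
    Finset.sum_sdiff hBsub
  linarith
end
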